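/- arXiv:2308.06852 — 7 statements merged into one kernel-verified Lean document; each statement's English description precedes it below -/
import Mathlib

section
/- Let (R,V) be a generalized root system with base S and suppose β', β'' ∈ R satisfy β' ≺_S β''. Then there exists a sequence of roots β' = β₀, β₁, …, β_k = β'' in R such that β_i − β_{i−1} ∈ S for every 1 ≤ i ≤ k. -/
open scoped RealInnerProductSpace

variable {V : Type*} [NormedAddCommGroup V] [InnerProductSpace ℝ V] [FiniteDimensional ℝ V]

/-- A generalized root system: `R` is a nonempty finite spanning set such that for
`α, β ∈ R`: `⟪α,β⟫ < 0` implies `α+β ∈ R`; `⟪α,β⟫ > 0` implies `α-β ∈ R`; and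
`⟪α,β⟫ = 0` implies `α+β ∈ R ↔ α-β ∈ R`. -/
def IsGRS (R : Set V) : Prop :=
  R.Nonempty ∧ R.Finite ∧ Submodule.span ℝ R = ⊤ ∧
    ∀ α ∈ R, ∀ β ∈ R,
      (⟪α, β⟫ < 0 → α + β ∈ R) ∧
      (0 < ⟪α, β⟫ → α - β ∈ R) ∧
      (⟪α, β⟫ = 0 → (α + β ∈ R ↔ α - β ∈ R))

/-- `v` is a linear combination of elements of `S` with nonnegative integer coefficients. -/
def IsNonnegIntComb (S : Set V) (v : V) : Prop :=
  ∃ c : V →₀ ℤ, ↑c.support ⊆ S ∧ (∀ α, 0 ≤ c α) ∧ v = c.sum fun α n => (n : ℝ) • α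

/-- A base of a GRS `R`: a subset of `R` which is a vector-space basis of `V` such that
every root is a linear combination of `S` with coefficients all nonnegative integers or
all nonpositive integers. -/
def IsBase (R S : Set V) : Prop :=
  S ⊆ R ∧ LinearIndependent ℝ ((↑) : S → V) ∧ Submodule.span ℝ S = ⊤ ∧
    ∀ β ∈ R, IsNonnegIntComb S β ∨ IsNonnegIntComb S (-β)

/-- `R⁺(S)`: the roots whose coefficients in `S` are all nonnegative integers. -/
def posRoots (R S : Set V) : Set V := {β ∈ R | IsNonnegIntComb S β}

/-- The partial order `≺_S`: `x ≺_S y` iff `y - x` is a nonnegative integer combination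
of `S`. -/
def prec (S : Set V) (x y : V) : Prop := IsNonnegIntComb S (y - x)

/-- `β` is indecomposable in `P`: `β ∈ P` and `β` is not the sum of two nonzero
elements of `P`. -/
def IsIndecomposableIn (P : Set V) (β : V) : Prop :=
  β ∈ P ∧ ¬∃ γ ∈ P, ∃ δ ∈ P, γ ≠ 0 ∧ δ ≠ 0 ∧ β = γ + δ

/-- A positive system of `R`. -/
def IsPositiveSystem (R P : Set V) : Prop :=
  P ⊆ R ∧ (∀ α ∈ P, ∀ β ∈ P, α + β ∈ R → α + β ∈ P) ∧ R = P ∪ -P ∧ P ∩ -P = {0}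

/-- Irreducibility of a GRS. -/
def IsIrreducibleGRS (R : Set V) : Prop :=
  ∀ R₁ R₂ : Set V, R = R₁ ∪ R₂ → (∀ α ∈ R₁, ∀ β ∈ R₂, ⟪α, β⟫ = 0) →
    R₁ ⊆ {0} ∨ R₂ ⊆ {0}

/-- A primitive root of `R`. -/
def IsPrimitive (R : Set V) (α : V) : Prop :=
  α ∈ R ∧ α ≠ 0 ∧ ∀ (k : ℤ) (α' : V), 0 < k → α' ∈ R → α = (k : ℝ) • α' → k = 1

/-- The orthogonal projection `π_I` of `V` onto the orthogonal complement of the span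
of `I`. -/
noncomputable def projAway (I : Set V) : V → ↥((Submodule.span ℝ I)ᗮ) :=
  fun v => Submodule.orthogonalProjection ((Submodule.span ℝ I)ᗮ) v

/-- A root system. -/
def IsRootSystem (Δ : Set V) : Prop :=
  Δ.Finite ∧ (0 : V) ∉ Δ ∧ Submodule.span ℝ Δ = ⊤ ∧
    ∀ α ∈ Δ, ∀ β ∈ Δ,
      (β - (2 * ⟪β, α⟫ / ⟪α, α⟫) • α ∈ Δ) ∧
      (∃ n : ℤ, 2 * ⟪β, α⟫ / ⟪α, α⟫ = (n : ℝ)) ∧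
      ∀ t : ℝ, t • α ∈ Δ → t = 1 ∨ t = -1

open scoped Classical in
lemma chain_aux (R S : Set V) (hR : IsGRS R) (hS : IsBase R S) :
    ∀ n : ℕ, ∀ β' β'' : V, β' ∈ R → β'' ∈ R →
      ∀ c : V →₀ ℤ, ↑c.support ⊆ S → (∀ α, 0 ≤ c α) →
      β'' - β' = (c.sum fun α m => (m : ℝ) • α) → c.sum (fun _ m => m) ≤ (n : ℤ) →
      ∃ (k : ℕ) (f : ℕ → V), f 0 = β' ∧ f k = β'' ∧ (∀ i ≤ k, f i ∈ R) ∧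
        ∀ i, 1 ≤ i → i ≤ k → f i - f (i - 1) ∈ S := by
  intro n
  induction n with
  | zero =>
    intro β' β'' hβ' hβ'' c hsupp hpos hv hsum
    have h0 : c.sum (fun _ m => m) = 0 :=
      le_antisymm (by exact_mod_cast hsum) (Finset.sum_nonneg fun a _ => hpos a)
    have hc0 : c = 0 := by
      ext a
      by_cases ha : a ∈ c.support
      · exact (Finset.sum_eq_zero_iff_of_nonneg (fun a _ => hpos a)).1 h0 a ha
      · exact Finsupp.notMem_support_iff.1 ha
    rw [hc0] at hv
    simp only [Finsupp.sum_zero_index] at hv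
    have heq : β'' = β' := by
      have := sub_eq_zero.mp hv; exact this
    exact ⟨0, fun _ => β', rfl, heq ▸ rfl, fun i _ => hβ', fun i h1 h2 => by omega⟩
  | succ n ih =>
    intro β' β'' hβ' hβ'' c hsupp hpos hv hsum
    by_cases heq : β'' = β'
    · exact ⟨0, fun _ => β', rfl, heq ▸ rfl, fun i _ => hβ', fun i h1 h2 => by omega⟩
    set v := β'' - β' with hvdef
    have hvne : v ≠ 0 := sub_ne_zero.2 heq
    have hvv : 0 < ⟪v, v⟫ := lt_of_le_of_ne real_inner_self_nonneg fun h => hvne (inner_self_eq_zero.mp h.symm)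
    have key : ∀ w : V, ⟪w, c.sum fun a m => (m : ℝ) • a⟫
        = ∑ a ∈ c.support, (c a : ℝ) * ⟪w, a⟫ := by
      intro w; rw [Finsupp.sum, inner_sum]; simp [real_inner_smul_right]
    have hvsum : ⟪v, v⟫ = ∑ a ∈ c.support, (c a : ℝ) * ⟪v, a⟫ := by
      rw [hv, key]
    have hexists : ∃ α ∈ c.support, 0 < ⟪v, α⟫ := by
      by_contra hcon
      push_neg at hcon
      have : ∑ a ∈ c.support, (c a : ℝ) * ⟪v, a⟫ ≤ 0 :=
        Finset.sum_nonpos fun a ha =>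
          mul_nonpos_of_nonneg_of_nonpos (by exact_mod_cast hpos a) (hcon a ha)
      linarith [hvsum ▸ hvv]
    obtain ⟨α, hαsupp, hvα⟩ := hexists
    have hαS : α ∈ S := hsupp hαsupp
    have hαR : α ∈ R := hS.1 hαS
    have hcα : 1 ≤ c α := by
      have h1 := Finsupp.mem_support_iff.1 hαsupp
      have h2 := hpos α
      omega
    set c' := c - Finsupp.single α 1 with hc'
    have hc'supp : ↑c'.support ⊆ S := by
      intro x hx
      have hx' := Finsupp.support_sub (f := c) (g := Finsupp.single α 1) hx
      simp only [Finset.mem_union] at hx'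
      rcases hx' with h | h
      · exact hsupp h
      · have : x = α := by simpa using Finsupp.support_single_subset h
        exact this ▸ hαS
    have hc'pos : ∀ a, 0 ≤ c' a := by
      intro a
      simp only [hc', Finsupp.sub_apply, Finsupp.single_apply]
      split_ifs with h
      · subst h; omega
      · have := hpos a; omega
    have hc'sumv : (c'.sum fun a m => (m : ℝ) • a)
        = (c.sum fun a m => (m : ℝ) • a) - α := by
      rw [hc', Finsupp.sum_sub_index (fun a b₁ b₂ => by push_cast; rw [sub_smul]),
        Finsupp.sum_single_index (by simp)]
      norm_num
    have hc'sum : c'.sum (fun _ m => m) ≤ (n : ℤ) := by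
      rw [hc', Finsupp.sum_sub_index (fun a b₁ b₂ => rfl),
        Finsupp.sum_single_index rfl]
      push_cast at hsum ⊢
      omega
    have hinner : ⟪β', α⟫ < 0 ∨ 0 < ⟪β'', α⟫ := by
      have hd : 0 < ⟪β'', α⟫ - ⟪β', α⟫ := by rw [← inner_sub_left]; exact hvα
      by_contra hcon
      push_neg at hcon
      linarith [hcon.1, hcon.2]
    rcases hinner with hneg | hposi
    · have hnew : β' + α ∈ R := (hR.2.2.2 β' hβ' α hαR).1 hneg
      have hveq : β'' - (β' + α) = c'.sum fun a m => (m : ℝ) • a := by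
        rw [hc'sumv, ← hv, hvdef]; abel
      obtain ⟨k, f, hf0, hfk, hfR, hfS⟩ :=
        ih (β' + α) β'' hnew hβ'' c' hc'supp hc'pos hveq hc'sum
      refine ⟨k + 1, fun i => if i = 0 then β' else f (i - 1), by simp, ?_, ?_, ?_⟩
      · simp [hfk]
      · intro i hi
        by_cases h : i = 0
        · simpa [h] using hβ'
        · simp only [if_neg h]
          exact hfR (i - 1) (by omega)
      · intro i h1 h2
        by_cases h : i = 1
        · subst h
          simp only [if_neg one_ne_zero, if_pos rfl]
          rw [show (1 : ℕ) - 1 = 0 from rfl, hf0]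
          simpa using hαS
        · have hi2 : 2 ≤ i := by omega
          simp only [if_neg (by omega : i ≠ 0), if_neg (by omega : i - 1 ≠ 0)]
          have := hfS (i - 1) (by omega) (by omega)
          simpa [show i - 1 - 1 = i - 2 by omega, show i - 1 = i - 1 from rfl] using this
    · have hnew : β'' - α ∈ R := (hR.2.2.2 β'' hβ'' α hαR).2.1 hposi
      have hveq : (β'' - α) - β' = c'.sum fun a m => (m : ℝ) • a := by
        rw [hc'sumv, ← hv, hvdef]; abel
      obtain ⟨k, f, hf0, hfk, hfR, hfS⟩ :=
        ih β' (β'' - α) hβ' hnew c' hc'supp hc'pos hveq hc'sum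
      refine ⟨k + 1, fun i => if i ≤ k then f i else β'', by simp [hf0], ?_, ?_, ?_⟩
      · simp [Nat.not_succ_le_self]
      · intro i hi
        by_cases h : i ≤ k
        · simpa [h] using hfR i h
        · simpa [h] using hβ''
      · intro i h1 h2
        by_cases h : i ≤ k
        · have h' : i - 1 ≤ k := by omega
          simp only [if_pos h, if_pos h']
          exact hfS i h1 h
        · have hik : i = k + 1 := by omega
          subst hik
          simp only [if_neg h, Nat.add_sub_cancel, if_pos le_rfl, hfk]
          simpa using hαS

/-- If `β' ≺_S β''`, there is a chain of roots from `β'` to `β''` whose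
consecutive differences are simple roots. -/
theorem stmt3 (R S : Set V) (hR : IsGRS R) (hS : IsBase R S)
    (β' β'' : V) (hβ' : β' ∈ R) (hβ'' : β'' ∈ R) (h : prec S β' β'') :
    ∃ (k : ℕ) (f : ℕ → V), f 0 = β' ∧ f k = β'' ∧ (∀ i ≤ k, f i ∈ R) ∧
      ∀ i, 1 ≤ i → i ≤ k → f i - f (i - 1) ∈ S := by
  obtain ⟨c, hsupp, hpos, hv⟩ := h
  exact chain_aux R S hR hS (c.sum fun _ m => m).toNat β' β'' hβ' hβ'' c hsupp hpos hv
    (Int.self_le_toNat _)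
end

section
/- Let (R,V) be a generalized root system with base S, and assume S = S' ⊔ S'' is a partition of S with ⟨α',α''⟩ = 0 for all α' ∈ S' and α'' ∈ S''. Then every root of R belongs to the linear span of S' or to the linear span of S''. -/
open scoped RealInnerProductSpace

variable {V : Type*} [NormedAddCommGroup V] [InnerProductSpace ℝ V] [FiniteDimensional ℝ V]

/-! ### Auxiliary machinery for STATEMENT 6 -/

/-- Abbreviation for the real combination of an integer finsupp. -/
private def Fs (c : V →₀ ℤ) : V := c.sum fun α n => (n : ℝ) • α

private lemma Fs_add (c d : V →₀ ℤ) : Fs (c + d) = Fs c + Fs d :=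
  Finsupp.sum_add_index' (by simp) (by intro a b₁ b₂; push_cast; rw [add_smul])

private lemma Fs_sub (c d : V →₀ ℤ) : Fs (c - d) = Fs c - Fs d :=
  Finsupp.sum_sub_index (by intro a b₁ b₂; push_cast; rw [sub_smul])

private lemma Fs_single (α : V) (n : ℤ) : Fs (Finsupp.single α n) = (n : ℝ) • α :=
  Finsupp.sum_single_index (by simp)

private lemma Fs_mem_span {c : V →₀ ℤ} {T : Set V} (h : ↑c.support ⊆ T) :
    Fs c ∈ Submodule.span ℝ T := by
  apply Submodule.sum_mem
  intro a ha
  exact Submodule.smul_mem _ _ (Submodule.subset_span (h ha))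

private lemma Fs_eq_zero {S : Set V} (hli : LinearIndependent ℝ ((↑) : S → V))
    {c : V →₀ ℤ} (hsupp : ↑c.support ⊆ S) (h : Fs c = 0) : c = 0 := by
  have key : (c.mapRange (Int.cast : ℤ → ℝ) Int.cast_zero) = 0 := by
    apply (linearIndepOn_iff (v := id)).mp (linearIndependent_subtype_iff.mp hli)
    · rw [Finsupp.mem_supported]
      exact Set.Subset.trans (by exact_mod_cast Finsupp.support_mapRange) hsupp
    · rw [Finsupp.linearCombination_apply, Finsupp.sum_mapRange_index (by simp)]
      simpa [Fs] using h
  ext a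
  have := DFunLike.congr_fun key a
  simp only [Finsupp.mapRange_apply, Finsupp.coe_zero, Pi.zero_apply] at this ⊢
  exact_mod_cast this

private lemma inner_Fs (γ : V) (c : V →₀ ℤ) :
    ⟪γ, Fs c⟫ = c.sum fun α n => (n : ℝ) * ⟪γ, α⟫ := by
  unfold Fs
  rw [Finsupp.sum, Finsupp.sum, inner_sum]
  exact Finset.sum_congr rfl fun a _ => real_inner_smul_right γ a _

private lemma no_mixed {S : Set V} (hli : LinearIndependent ℝ ((↑) : S → V))
    {x y : V} (hx : x ∈ S) (hy : y ∈ S) (hxy : x ≠ y)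
    {d : V →₀ ℤ} (hsupp : ↑d.support ⊆ S) (hnn : ∀ α, 0 ≤ d α)
    (h : Fs d = x - y) : False := by
  set e := d - Finsupp.single x 1 + Finsupp.single y 1 with he
  classical
  have hFe : Fs e = 0 := by
    rw [he, Fs_add, Fs_sub, Fs_single, Fs_single, h]
    push_cast
    simp only [one_smul]
    abel
  have hesupp : ↑e.support ⊆ S := by
    intro a ha
    have h1 : a ∈ (d - Finsupp.single x (1 : ℤ)).support ∪ (Finsupp.single y (1 : ℤ)).support :=
      Finsupp.support_add ha
    rcases Finset.mem_union.mp h1 with h2 | h2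
    · have h3 : a ∈ d.support ∪ (Finsupp.single x (1 : ℤ)).support := Finsupp.support_sub h2
      rcases Finset.mem_union.mp h3 with h4 | h4
      · exact hsupp h4
      · have := Finsupp.support_single_subset h4
        simp only [Finset.mem_singleton] at this
        exact this ▸ hx
    · have := Finsupp.support_single_subset h2
      simp only [Finset.mem_singleton] at this
      exact this ▸ hy
  have hez : e = 0 := Fs_eq_zero hli hesupp hFe
  have hey : e y = d y + 1 := by
    rw [he, Finsupp.add_apply, Finsupp.sub_apply, Finsupp.single_eq_of_ne' hxy,
      Finsupp.single_eq_same]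
    ring
  have h0 : d y + 1 = 0 := by rw [← hey, hez]; rfl
  have := hnn y
  omega

private lemma main_ind (R S S' S'' : Set V) (hR : IsGRS R) (hS : IsBase R S)
    (hunion : S = S' ∪ S'') (hdisj : Disjoint S' S'')
    (horth : ∀ α' ∈ S', ∀ α'' ∈ S'', ⟪α', α''⟫ = 0) :
    ∀ n : ℕ, ∀ β ∈ R, ∀ c : V →₀ ℤ, ↑c.support ⊆ S → (∀ α, 0 ≤ c α) →
      (c.sum fun _ m => m) = (n : ℤ) →
      (∃ ε : ℝ, (ε = 1 ∨ ε = -1) ∧ β = ε • Fs c) →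
      β ∈ Submodule.span ℝ S' ∨ β ∈ Submodule.span ℝ S'' := by
  classical
  obtain ⟨hSR, hli, -, hbase⟩ := hS
  intro n
  induction n using Nat.strong_induction_on with
  | _ n IH =>
  rintro β hβR c hsupp hnn hsum ⟨ε, hε, hβ⟩
  -- The key "descent" step, applied symmetrically to the two parts.
  have step : ∀ T₁ T₂ : Set V, ∀ d₁ d₂ : V →₀ ℤ, T₁ ⊆ S →
      Submodule.span ℝ T₁ ⟂ Submodule.span ℝ T₂ →
      d₁ + d₂ = c → ↑d₁.support ⊆ T₁ → ↑d₂.support ⊆ T₂ →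
      (∀ α, 0 ≤ d₁ α) → (∀ α, 0 ≤ d₂ α) → d₁ ≠ 0 →
      (∀ v : V, (v ∈ Submodule.span ℝ S' ∨ v ∈ Submodule.span ℝ S'') →
        (v ∈ Submodule.span ℝ T₁ ∨ v ∈ Submodule.span ℝ T₂)) →
      β ∈ Submodule.span ℝ T₁ ∨ ∃ α, α ∈ T₁ ∧ Fs d₁ = α ∧ ε • (Fs c - α) ∈ R := by
    intro T₁ T₂ d₁ d₂ hT₁S hOr hd hs₁ hs₂ hn₁ hn₂ hne hswap
    have hγ : Fs c = Fs d₁ + Fs d₂ := by rw [← hd, Fs_add]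
    have h1span : Fs d₁ ∈ Submodule.span ℝ T₁ := Fs_mem_span hs₁
    have h2span : Fs d₂ ∈ Submodule.span ℝ T₂ := Fs_mem_span hs₂
    have h1ne : Fs d₁ ≠ 0 := fun h => hne (Fs_eq_zero hli (hs₁.trans hT₁S) h)
    have hpos : 0 < ⟪Fs c, Fs d₁⟫ := by
      rw [hγ, inner_add_left, hOr.symm.inner_eq h2span h1span, add_zero]
      have hne0 : ⟪Fs d₁, Fs d₁⟫ ≠ 0 := fun h => h1ne (inner_self_eq_zero.mp h)
      exact lt_of_le_of_ne real_inner_self_nonneg (Ne.symm hne0)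
    -- find α in the support of d₁ with positive inner product with Fs c
    have hexp : ⟪Fs c, Fs d₁⟫ = d₁.sum fun α n => (n : ℝ) * ⟪Fs c, α⟫ := inner_Fs _ _
    have hexists : ∃ α ∈ d₁.support, 0 < (d₁ α : ℝ) * ⟪Fs c, α⟫ := by
      by_contra hcon
      push_neg at hcon
      have : (d₁.sum fun α n => (n : ℝ) * ⟪Fs c, α⟫) ≤ 0 :=
        Finset.sum_nonpos fun a ha => hcon a ha
      rw [← hexp] at this
      linarith
    obtain ⟨α, hαsupp, hprod⟩ := hexists
    have hcast : (0 : ℝ) ≤ (d₁ α : ℝ) := by exact_mod_cast hn₁ α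
    have hip : 0 < ⟪Fs c, α⟫ := by nlinarith
    have hd₁α : 0 < d₁ α := by
      have : (0 : ℝ) < (d₁ α : ℝ) := by nlinarith
      exact_mod_cast this
    have hαT₁ : α ∈ T₁ := hs₁ hαsupp
    have hαS : α ∈ S := hT₁S hαT₁
    have hαR : α ∈ R := hSR hαS
    have hβα : ⟪β, α⟫ = ε * ⟪Fs c, α⟫ := by rw [hβ, real_inner_smul_left]
    -- produce the new root ε • (Fs c - α)
    have hnew : ε • (Fs c - α) ∈ R := by
      rcases hε with h1 | h1
      · have hin : β - α ∈ R :=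
          (hR.2.2.2 β hβR α hαR).2.1 (by rw [hβα, h1, one_mul]; exact hip)
        have : ε • (Fs c - α) = β - α := by rw [h1, one_smul, hβ, h1, one_smul]
        rw [this]; exact hin
      · have hin : β + α ∈ R :=
          (hR.2.2.2 β hβR α hαR).1 (by rw [hβα, h1]; nlinarith)
        have : ε • (Fs c - α) = β + α := by
          rw [h1, hβ, h1]; module
        rw [this]; exact hin
    -- the new coefficient vector
    set d : V →₀ ℤ := c - Finsupp.single α 1 with hdd
    have hcα : 1 ≤ c α := by
      have h1 := DFunLike.congr_fun hd α
      simp only [Finsupp.add_apply] at h1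
      have := hn₂ α
      omega
    have hd_supp : ↑d.support ⊆ S := by
      intro a ha
      have h1 : a ∈ c.support ∪ (Finsupp.single α (1 : ℤ)).support := Finsupp.support_sub ha
      rcases Finset.mem_union.mp h1 with h2 | h2
      · exact hsupp h2
      · have := Finsupp.support_single_subset h2
        simp only [Finset.mem_singleton] at this
        exact this ▸ hαS
    have hd_nn : ∀ b, 0 ≤ d b := by
      intro b
      rcases eq_or_ne b α with rfl | hba
      · have hb : d b = c b - 1 := by rw [hdd, Finsupp.sub_apply, Finsupp.single_eq_same]
        omega
      · have hb : d b = c b := by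
          rw [hdd, Finsupp.sub_apply, Finsupp.single_eq_of_ne' (Ne.symm hba), sub_zero]
        rw [hb]; exact hnn b
    have hd_sum : (d.sum fun _ m => m) = (c.sum fun _ m => m) - 1 := by
      rw [hdd, Finsupp.sum_sub_index (fun _ _ _ => rfl), Finsupp.sum_single_index rfl]
    have hFsd : Fs d = Fs c - α := by
      rw [hdd, Fs_sub, Fs_single]
      push_cast
      rw [one_smul]
    have hd_sum_nonneg : 0 ≤ (d.sum fun _ m => m) :=
      Finset.sum_nonneg fun a _ => hd_nn a
    have hn1 : 1 ≤ n := by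
      rw [hd_sum, hsum] at hd_sum_nonneg
      omega
    have hres := IH (n - 1) (by omega) (ε • (Fs c - α)) hnew d hd_supp hd_nn
      (by rw [hd_sum, hsum]; push_cast; omega)
      ⟨ε, hε, by rw [hFsd]⟩
    rcases hswap _ hres with hin | hin
    · left
      have hbe : β = ε • (Fs c - α) + ε • α := by
        rw [hβ, ← smul_add, sub_add_cancel]
      rw [hbe]
      exact Submodule.add_mem _ hin (Submodule.smul_mem _ _ (Submodule.subset_span hαT₁))
    · right
      have h2 : Fs c - α ∈ Submodule.span ℝ T₂ := by
        have heq : Fs c - α = ε • (ε • (Fs c - α)) := by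
          rcases hε with h1 | h1 <;> simp [h1]
        rw [heq]
        exact Submodule.smul_mem _ _ hin
      have h3 : Fs d₁ - α ∈ Submodule.span ℝ T₂ := by
        have heq : Fs d₁ - α = (Fs c - α) - Fs d₂ := by rw [hγ]; abel
        rw [heq]
        exact Submodule.sub_mem _ h2 h2span
      have h4 : Fs d₁ - α ∈ Submodule.span ℝ T₁ :=
        Submodule.sub_mem _ h1span (Submodule.subset_span hαT₁)
      have h5 : Fs d₁ - α = 0 := by
        have := hOr.inner_eq h4 h3
        exact inner_self_eq_zero.mp this
      exact ⟨α, hαT₁, sub_eq_zero.mp h5, hnew⟩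
  -- Now split c along S' and S''
  set c₁ : V →₀ ℤ := c.filter (· ∈ S') with hc₁
  set c₂ : V →₀ ℤ := c.filter (fun a => ¬ a ∈ S') with hc₂
  have hsplit : c₁ + c₂ = c := Finsupp.filter_pos_add_filter_neg c _
  have hs₁ : ↑c₁.support ⊆ S' := by
    intro a ha
    rw [hc₁] at ha
    simp only [Finsupp.support_filter, Finset.coe_filter, Set.mem_setOf_eq] at ha
    exact ha.2
  have hs₂ : ↑c₂.support ⊆ S'' := by
    intro a ha
    rw [hc₂] at ha
    simp only [Finsupp.support_filter, Finset.coe_filter, Set.mem_setOf_eq] at ha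
    have haS : a ∈ S := hsupp ha.1
    rw [hunion] at haS
    exact haS.resolve_left ha.2
  have hn₁ : ∀ a, 0 ≤ c₁ a := by
    intro a
    rw [hc₁, Finsupp.filter_apply]
    split <;> [exact hnn a; exact le_refl 0]
  have hn₂ : ∀ a, 0 ≤ c₂ a := by
    intro a
    rw [hc₂, Finsupp.filter_apply]
    split <;> [exact hnn a; exact le_refl 0]
  have hOrtho : Submodule.span ℝ S' ⟂ Submodule.span ℝ S'' :=
    Submodule.isOrtho_span.mpr fun u hu v hv => horth u hu v hv
  by_cases h1z : c₁ = 0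
  · right
    have : c = c₂ := by rw [← hsplit, h1z, zero_add]
    rw [hβ, this]
    exact Submodule.smul_mem _ _ (Fs_mem_span hs₂)
  by_cases h2z : c₂ = 0
  · left
    have : c = c₁ := by rw [← hsplit, h2z, add_zero]
    rw [hβ, this]
    exact Submodule.smul_mem _ _ (Fs_mem_span hs₁)
  have hS'S : S' ⊆ S := by rw [hunion]; exact Set.subset_union_left
  have hS''S : S'' ⊆ S := by rw [hunion]; exact Set.subset_union_right
  rcases step S' S'' c₁ c₂ hS'S hOrtho hsplit hs₁ hs₂ hn₁ hn₂ h1z (fun v hv => hv) with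
    hdone | ⟨α, hα, hFs1, hnew1⟩
  · exact Or.inl hdone
  rcases step S'' S' c₂ c₁ hS''S hOrtho.symm (by rw [add_comm]; exact hsplit) hs₂ hs₁ hn₂ hn₁
      h2z (fun v hv => hv.symm) with hdone | ⟨α₂, hα₂, hFs2, hnew2⟩
  · exact Or.inr hdone
  -- both parts are single roots: derive a contradiction
  exfalso
  have hγeq : Fs c = α + α₂ := by rw [← hsplit, Fs_add, hFs1, hFs2]
  have hαα₂ : α ≠ α₂ := hdisj.ne_of_mem hα hα₂
  have hA : ε • α₂ ∈ R := by
    have he : Fs c - α = α₂ := by rw [hγeq]; abel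
    rw [← he]; exact hnew1
  have hB : ε • α ∈ R := by
    have he : Fs c - α₂ = α := by rw [hγeq]; abel
    rw [← he]; exact hnew2
  have hipz : ⟪ε • α, ε • α₂⟫ = 0 := by
    rw [real_inner_smul_left, real_inner_smul_right, horth α hα α₂ hα₂]
    ring
  have hsumR : ε • α + ε • α₂ ∈ R := by
    have : ε • α + ε • α₂ = β := by rw [hβ, hγeq, smul_add]
    rw [this]; exact hβR
  have hdiff : ε • α - ε • α₂ ∈ R :=
    ((hR.2.2.2 (ε • α) hB (ε • α₂) hA).2.2 hipz).mp hsumR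
  have hαS : α ∈ S := hS'S hα
  have hα₂S : α₂ ∈ S := hS''S hα₂
  rcases hbase _ hdiff with ⟨d, hds, hdn, hdeq⟩ | ⟨d, hds, hdn, hdeq⟩
  · rcases hε with h1 | h1
    · exact no_mixed hli hαS hα₂S hαα₂ hds hdn
        (by rw [show Fs d = _ from hdeq.symm, h1]; module)
    · exact no_mixed hli hα₂S hαS hαα₂.symm hds hdn
        (by rw [show Fs d = _ from hdeq.symm, h1]; module)
  · rcases hε with h1 | h1
    · exact no_mixed hli hα₂S hαS hαα₂.symm hds hdn
        (by rw [show Fs d = _ from hdeq.symm, h1]; module)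
    · exact no_mixed hli hαS hα₂S hαα₂ hds hdn
        (by rw [show Fs d = _ from hdeq.symm, h1]; module)

/-- If a base splits into two mutually orthogonal parts, every root lies in
the span of one of the parts. -/
theorem stmt6 (R S S' S'' : Set V) (hR : IsGRS R) (hS : IsBase R S)
    (hunion : S = S' ∪ S'') (hdisj : Disjoint S' S'')
    (horth : ∀ α' ∈ S', ∀ α'' ∈ S'', ⟪α', α''⟫ = 0) :
    ∀ β ∈ R, β ∈ Submodule.span ℝ S' ∨ β ∈ Submodule.span ℝ S'' := by
  intro β hβ
  rcases hS.2.2.2 β hβ with ⟨c, hsupp, hnn, heq⟩ | ⟨c, hsupp, hnn, heq⟩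
  · have hpos : 0 ≤ (c.sum fun _ m => m) := Finset.sum_nonneg fun a _ => hnn a
    exact main_ind R S S' S'' hR hS hunion hdisj horth (c.sum fun _ m => m).toNat β hβ c
      hsupp hnn (Int.toNat_of_nonneg hpos).symm ⟨1, Or.inl rfl, by rw [one_smul]; exact heq⟩
  · have hpos : 0 ≤ (c.sum fun _ m => m) := Finset.sum_nonneg fun a _ => hnn a
    exact main_ind R S S' S'' hR hS hunion hdisj horth (c.sum fun _ m => m).toNat β hβ c
      hsupp hnn (Int.toNat_of_nonneg hpos).symm
      ⟨-1, Or.inr rfl, by rw [neg_one_smul]; exact neg_eq_iff_eq_neg.mp heq⟩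
end

section
/- Let (R,V) be a generalized root system with base S and let β ∈ R. Then the support of β is connected: there is no partition supp β = I' ⊔ I'' into two nonempty subsets with ⟨α',α''⟩ = 0 for all α' ∈ I' and α'' ∈ I''. -/
open scoped RealInnerProductSpace

variable {V : Type*} [NormedAddCommGroup V] [InnerProductSpace ℝ V] [FiniteDimensional ℝ V]

noncomputable def tosum (c : V →₀ ℤ) : V := c.sum fun α n => (n : ℝ) • α

lemma tosum_add (c d : V →₀ ℤ) : tosum (c + d) = tosum c + tosum d := by
  unfold tosum
  exact Finsupp.sum_add_index' (by simp) (by intro a b₁ b₂; push_cast; rw [add_smul])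

lemma tosum_neg (c : V →₀ ℤ) : tosum (-c) = - tosum c := by
  unfold tosum
  rw [Finsupp.sum_neg_index (by simp)]
  rw [← Finsupp.sum_neg]
  congr 1; ext a n; push_cast; rw [neg_smul]

lemma tosum_sub (c d : V →₀ ℤ) : tosum (c - d) = tosum c - tosum d := by
  rw [sub_eq_add_neg, tosum_add, tosum_neg, sub_eq_add_neg]

lemma tosum_single (a : V) (n : ℤ) : tosum (Finsupp.single a n) = (n : ℝ) • a := by
  unfold tosum
  rw [Finsupp.sum_single_index (by simp)]

lemma tosum_eq_zero {S : Set V} (hLI : LinearIndependent ℝ ((↑) : S → V))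
    (c : V →₀ ℤ) (hc : ↑c.support ⊆ S) (h : tosum c = 0) : c = 0 := by
  set g : V →₀ ℝ := c.mapRange ((↑) : ℤ → ℝ) (by norm_num) with hg
  have hsupg : g.support = c.support :=
    Finsupp.support_mapRange_of_injective (by norm_num) c Int.cast_injective
  have hgsupported : g ∈ Finsupp.supported ℝ ℝ S := by
    rw [Finsupp.mem_supported, hsupg]; exact hc
  have hlc : Finsupp.linearCombination ℝ id g = tosum c := by
    rw [Finsupp.linearCombination_apply]
    unfold tosum
    rw [hg]
    exact Finsupp.sum_mapRange_index (by simp)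
  have hg0 : g = 0 := linearIndepOn_iff.mp (linearIndependent_subtype_iff.mp hLI) g hgsupported (by rw [hlc, h])
  ext a
  have : g a = 0 := by rw [hg0]; rfl
  rw [hg] at this
  simpa using this

lemma tosum_inj {S : Set V} (hLI : LinearIndependent ℝ ((↑) : S → V))
    {f g : V →₀ ℤ} (hf : ↑f.support ⊆ S) (hg : ↑g.support ⊆ S)
    (h : tosum f = tosum g) : f = g := by
  have hsub : ↑(f - g).support ⊆ S := by
    refine subset_trans ?_ (Set.union_subset hf hg)
    intro a ha
    simp only [Finset.coe_subset, Set.mem_union, Finset.mem_coe, Finsupp.mem_support_iff] at *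
    by_contra hcon
    push_neg at hcon
    simp [Finsupp.sub_apply, hcon.1, hcon.2] at ha
  have := tosum_eq_zero hLI (f - g) hsub (by rw [tosum_sub, h, sub_self])
  exact sub_eq_zero.mp this

lemma inner_tosum (v : V) (c : V →₀ ℤ) :
    ⟪v, tosum c⟫ = c.sum fun a n => (n : ℝ) * ⟪v, a⟫ := by
  unfold tosum
  rw [Finsupp.sum, Finsupp.sum, inner_sum]
  exact Finset.sum_congr rfl fun a _ => real_inner_smul_right v a _

lemma inner_tosum_zero (v : V) (c : V →₀ ℤ) (h : ∀ a ∈ c.support, ⟪v, a⟫ = 0) :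
    ⟪v, tosum c⟫ = 0 := by
  rw [inner_tosum]
  exact Finset.sum_eq_zero fun a ha => by simp only []; rw [h a ha, mul_zero]

lemma stmt7_aux (R S : Set V) (hR : IsGRS R) (hS : IsBase R S) :
    ∀ n (β : V) (c : V →₀ ℤ), β ∈ R → ↑c.support ⊆ S → β = tosum c →
      (c.support.sum fun a => (c a).natAbs) = n →
      ¬∃ I' I'' : Set V, (↑c.support : Set V) = I' ∪ I'' ∧ Disjoint I' I'' ∧
        I'.Nonempty ∧ I''.Nonempty ∧ ∀ α' ∈ I', ∀ α'' ∈ I'', ⟪α', α''⟫ = 0 := by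
  intro n
  induction n using Nat.strong_induction_on with
  | _ n IH =>
  rintro β c hβ hsupp hsum hht ⟨I', I'', hpart, hdisj, ⟨a₀, ha₀⟩, ⟨b₀, hb₀⟩, horth⟩
  classical
  have hLI := hS.2.1
  have hI' : I' ⊆ ↑c.support := by rw [hpart]; exact Set.subset_union_left
  have hI'' : I'' ⊆ ↑c.support := by rw [hpart]; exact Set.subset_union_right
  -- all coefficients have the same sign s
  obtain ⟨s, hs1, hsign⟩ : ∃ s : ℤ, (s = 1 ∨ s = -1) ∧ ∀ a, 0 ≤ s * c a := by
    rcases hS.2.2.2 β hβ with ⟨c₀, hc₀S, hc₀pos, hc₀sum⟩ | ⟨c₀, hc₀S, hc₀pos, hc₀sum⟩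
    · refine ⟨1, Or.inl rfl, fun a => ?_⟩
      have hcc₀ : c = c₀ := tosum_inj hLI hsupp hc₀S (by rw [← hsum]; exact hc₀sum)
      have := hc₀pos a
      rw [← hcc₀] at this
      omega
    · refine ⟨-1, Or.inr rfl, fun a => ?_⟩
      have hcc₀ : -c = c₀ := tosum_inj hLI (by simpa using hsupp) hc₀S
        (by rw [tosum_neg, ← hsum]; exact hc₀sum)
      have := hc₀pos a
      rw [← hcc₀, Finsupp.neg_apply] at this
      omega
  -- split c along I'
  set c' := c.filter (· ∈ I') with hc'
  set c'' := c.filter (fun a => ¬ a ∈ I') with hc''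
  have hcc : c' + c'' = c := Finsupp.filter_pos_add_filter_neg c _
  have hc'supp : ↑c'.support ⊆ I' := by
    rw [hc', Finsupp.support_filter]
    intro a ha
    simp only [Finset.coe_filter, Set.mem_setOf_eq] at ha
    exact ha.2
  have hc''supp : ↑c''.support ⊆ I'' := by
    rw [hc'', Finsupp.support_filter]
    intro a ha
    simp only [Finset.coe_filter, Set.mem_setOf_eq] at ha
    have h1 : a ∈ I' ∪ I'' := by rw [← hpart]; exact ha.1
    rcases h1 with h | h
    · exact absurd h ha.2
    · exact h
  have hb'' : ∀ a ∈ I', ⟪a, tosum c''⟫ = 0 := fun a haI =>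
    inner_tosum_zero a c'' (fun b hb => horth a haI b (hc''supp hb))
  have hc'ne : c' ≠ 0 := by
    intro h0
    have h1 : c' a₀ = c a₀ := by rw [hc']; exact Finsupp.filter_apply_pos _ _ ha₀
    have hca₀ : c a₀ ≠ 0 := Finsupp.mem_support_iff.mp (hI' ha₀)
    rw [h0] at h1; simp at h1; exact hca₀ h1.symm
  have hβ'ne : tosum c' ≠ 0 := fun h0 =>
    hc'ne (tosum_eq_zero hLI c'
      (subset_trans hc'supp (subset_trans hI' hsupp)) h0)
  have hpos : 0 < ⟪tosum c', tosum c'⟫ := by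
    rw [real_inner_self_eq_norm_sq]
    exact pow_pos (norm_pos_iff.mpr hβ'ne) 2
  have hββ' : ⟪β, tosum c'⟫ = ⟪tosum c', tosum c'⟫ := by
    have hβdec : β = tosum c' + tosum c'' := by rw [← tosum_add, hcc]; exact hsum
    rw [hβdec, inner_add_left,
      inner_tosum_zero (tosum c'') c'
        (fun a ha => by rw [real_inner_comm]; exact hb'' a (hc'supp ha)),
      add_zero]
  have hexp : ⟪β, tosum c'⟫ = c'.support.sum fun a => (c' a : ℝ) * ⟪β, a⟫ := by
    rw [inner_tosum]; rfl
  obtain ⟨a, haS', hpa⟩ : ∃ a ∈ c'.support, 0 < (c' a : ℝ) * ⟪β, a⟫ := by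
    by_contra hcon
    push_neg at hcon
    have := Finset.sum_nonpos hcon
    rw [← hexp, hββ'] at this
    linarith
  have haI' : a ∈ I' := hc'supp haS'
  have hc'a : c' a = c a := by rw [hc']; exact Finsupp.filter_apply_pos _ _ haI'
  have hca : c a ≠ 0 := Finsupp.mem_support_iff.mp (hI' haI')
  have haS : a ∈ S := hsupp (hI' haI')
  have haR : a ∈ R := hS.1 haS
  rw [hc'a] at hpa
  have hscapos : 0 < s * c a := by rcases hs1 with rfl | rfl <;> (have := hsign a; omega)
  have hγR : β - (s : ℝ) • a ∈ R := by
    rcases hs1 with rfl | rfl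
    · have hca' : 0 < c a := by have := hsign a; omega
      have hcar : (0:ℝ) < (c a : ℝ) := by exact_mod_cast hca'
      have hip : 0 < ⟪β, a⟫ := by nlinarith
      simpa using (hR.2.2.2 β hβ a haR).2.1 hip
    · have hca' : c a < 0 := by have := hsign a; omega
      have hcar : (c a : ℝ) < 0 := by exact_mod_cast hca'
      have hip : ⟪β, a⟫ < 0 := by nlinarith
      have := (hR.2.2.2 β hβ a haR).1 hip
      push_cast
      simpa [neg_smul, sub_neg_eq_add] using this
  set d := c - Finsupp.single a s with hd
  have hγsum : β - (s:ℝ) • a = tosum d := by rw [hd, tosum_sub, tosum_single, ← hsum]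
  have hdc : ∀ b, b ≠ a → d b = c b := by
    intro b hb
    rw [hd, Finsupp.sub_apply, Finsupp.single_eq_of_ne' (Ne.symm hb), sub_zero]
  have hda : d a = c a - s := by rw [hd]; simp
  have hdsupp : d.support ⊆ c.support := by
    intro b hb
    rcases eq_or_ne b a with rfl | hne
    · exact hI' haI'
    · rw [Finsupp.mem_support_iff] at *
      rwa [hdc b hne] at hb
  have hht' : (d.support.sum fun b => (d b).natAbs) < n := by
    have h1 : (d.support.sum fun b => (d b).natAbs) = c.support.sum fun b => (d b).natAbs :=
      Finset.sum_subset hdsupp (fun b _ hb => by rw [Finsupp.notMem_support_iff.mp hb]; rfl)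
    rw [h1, ← hht]
    apply Finset.sum_lt_sum
    · intro b _
      rcases eq_or_ne b a with rfl | hne
      · rw [hda]; rcases hs1 with rfl | rfl <;> omega
      · rw [hdc b hne]
    · exact ⟨a, hI' haI', by rw [hda]; rcases hs1 with rfl | rfl <;> omega⟩
  have hI''d : I'' ⊆ (↑d.support : Set V) := by
    intro b hb
    have hbne : b ≠ a := fun he => (Set.disjoint_left.mp hdisj haI') (he ▸ hb)
    have hbc : c b ≠ 0 := Finsupp.mem_support_iff.mp (hI'' hb)
    rw [Finset.mem_coe, Finsupp.mem_support_iff, hdc b hbne]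
    exact hbc
  by_cases hJ : ∃ b ∈ I', b ∈ d.support
  · obtain ⟨b₁, hb₁I, hb₁d⟩ := hJ
    refine IH _ hht' (β - (s:ℝ)•a) d hγR
      (subset_trans (Finset.coe_subset.mpr hdsupp) hsupp) hγsum rfl
      ⟨I' ∩ ↑d.support, I'', ?_, hdisj.mono_left Set.inter_subset_left,
        ⟨b₁, hb₁I, hb₁d⟩, ⟨b₀, hb₀⟩, fun α' hα' α'' hα'' => horth α' hα'.1 α'' hα''⟩
    apply Set.Subset.antisymm
    · intro b hb
      have hbc : b ∈ (↑c.support : Set V) := hdsupp hb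
      rw [hpart] at hbc
      rcases hbc with h | h
      · exact Or.inl ⟨h, hb⟩
      · exact Or.inr h
    · rintro b (⟨_, h⟩ | h)
      · exact h
      · exact hI''d h
  · push_neg at hJ
    have hdI'' : (↑d.support : Set V) ⊆ I'' := by
      intro b hb
      have hbc : b ∈ (↑c.support : Set V) := hdsupp hb
      rw [hpart] at hbc
      rcases hbc with h | h
      · exact absurd hb (hJ b h)
      · exact h
    have hda0 : d a = 0 := by
      by_contra h
      exact hJ a haI' (Finsupp.mem_support_iff.mpr h)
    have haγ : ⟪a, tosum d⟫ = 0 :=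
      inner_tosum_zero a d (fun b hb => horth a haI' b (hdI'' hb))
    have hγR' : tosum d ∈ R := by rwa [← hγsum]
    have hβd : β = tosum d + (s:ℝ) • a := by rw [← hγsum, sub_add_cancel]
    have hδR : a - (s:ℝ) • tosum d ∈ R := by
      rcases hs1 with rfl | rfl
      · have h1 : a + tosum d ∈ R := by
          rw [hβd] at hβ
          rw [add_comm]
          simpa using hβ
        have h2 := ((hR.2.2.2 a haR (tosum d) hγR').2.2 haγ).mp h1
        simpa using h2
      · have h1 : tosum d - a ∈ R := by
          rw [hβd] at hβ
          simpa [neg_smul, sub_eq_add_neg] using hβ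
        have haγ' : ⟪tosum d, a⟫ = 0 := by rw [real_inner_comm]; exact haγ
        have h2 := ((hR.2.2.2 (tosum d) hγR' a haR).2.2 haγ').mpr h1
        have h3 : a - ((-1:ℤ):ℝ) • tosum d = tosum d + a := by
          push_cast
          rw [neg_smul, one_smul, sub_neg_eq_add, add_comm]
        rw [h3]
        exact h2
    set e := Finsupp.single a 1 - s • d with he
    have hesum : tosum e = a - (s:ℝ) • tosum d := by
      rw [he, tosum_sub, tosum_single, Int.cast_one, one_smul]
      congr 1
      rcases hs1 with rfl | rfl
      · simp
      · have h4 : (-1 : ℤ) • d = -d := by rw [neg_smul, one_smul]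
        rw [h4, tosum_neg]
        push_cast
        rw [neg_smul, one_smul]
    have hea : e a = 1 := by
      rw [he, Finsupp.sub_apply, Finsupp.smul_apply, Finsupp.single_eq_same, hda0]
      simp
    have hebneg : ∀ b ∈ I'', e b < 0 := by
      intro b hb
      have hbne : a ≠ b := fun he' => (Set.disjoint_left.mp hdisj haI') (he' ▸ hb)
      have hbc : c b ≠ 0 := Finsupp.mem_support_iff.mp (hI'' hb)
      have h0 : 0 < s * c b := by rcases hs1 with rfl | rfl <;> (have := hsign b; omega)
      have hebe : e b = - (s * c b) := by
        rw [he, Finsupp.sub_apply, Finsupp.smul_apply, Finsupp.single_eq_of_ne' hbne,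
          hdc b (Ne.symm hbne), smul_eq_mul, zero_sub]
      rw [hebe]
      omega
    have hesupp : ↑e.support ⊆ S := by
      intro b hb
      rw [Finset.mem_coe, Finsupp.mem_support_iff] at hb
      rcases eq_or_ne b a with rfl | hne
      · exact haS
      · have hbc : b ∈ c.support := by
          rw [Finsupp.mem_support_iff]
          intro h0
          apply hb
          rw [he, Finsupp.sub_apply, Finsupp.smul_apply, Finsupp.single_eq_of_ne' (Ne.symm hne),
            hdc b hne, h0]
          simp
        exact hsupp hbc
    rcases hS.2.2.2 _ hδR with ⟨c₀, hc₀S, hc₀pos, hc₀sum⟩ | ⟨c₀, hc₀S, hc₀pos, hc₀sum⟩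
    · have hec₀ : e = c₀ := tosum_inj hLI hesupp hc₀S (by rw [hesum]; exact hc₀sum)
      have h1 := hebneg b₀ hb₀
      have h2 := hc₀pos b₀
      rw [← hec₀] at h2
      omega
    · have hec₀ : -e = c₀ := tosum_inj hLI (by simpa using hesupp) hc₀S
        (by rw [tosum_neg, hesum]; exact hc₀sum)
      have h2 := hc₀pos a
      rw [← hec₀, Finsupp.neg_apply, hea] at h2
      omega

/-- The support of a root is connected. -/
theorem stmt7 (R S : Set V) (hR : IsGRS R) (hS : IsBase R S) (β : V) (hβ : β ∈ R)
    (c : V →₀ ℤ) (hsupp : ↑c.support ⊆ S)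
    (hsum : β = c.sum fun α n => (n : ℝ) • α) :
    ¬∃ I' I'' : Set V, (↑c.support : Set V) = I' ∪ I'' ∧ Disjoint I' I'' ∧
      I'.Nonempty ∧ I''.Nonempty ∧ ∀ α' ∈ I', ∀ α'' ∈ I'', ⟪α', α''⟫ = 0 := by
  exact stmt7_aux R S hR hS _ β c hβ hsupp hsum rfl
end

section
/- Let (R,V) be a generalized root system and let R⁺ ⊆ R be a positive system. Then there exists a base S of R such that R⁺ = R⁺(S). -/
open scoped RealInnerProductSpace

variable {V : Type*} [NormedAddCommGroup V] [InnerProductSpace ℝ V] [FiniteDimensional ℝ V]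

set_option linter.unusedSectionVars false

-- inner product with a multiset sum
lemma multiset_inner_sum (m : Multiset V) (w : V) :
    ⟪m.sum, w⟫ = (m.map fun p => ⟪p, w⟫).sum := by
  induction m using Multiset.induction with
  | empty => simp
  | cons a s ih => simp [inner_add_left, ih]

lemma GRS.pos_zero_mem {R P : Set V} (hP : IsPositiveSystem R P) : (0 : V) ∈ P := by
  have h := hP.2.2.2
  have : (0:V) ∈ P ∩ -P := by rw [h]; rfl
  exact this.1

lemma GRS.eq_zero_of_mem_neg {R P : Set V} (hP : IsPositiveSystem R P) {a : V}
    (ha : a ∈ P) (ha' : -a ∈ P) : a = 0 := by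
  have : a ∈ P ∩ -P := ⟨ha, by simpa using ha'⟩
  rw [hP.2.2.2] at this
  simpa using this

lemma GRS.add_mem_of_inner_neg {R P : Set V} (hR : IsGRS R) (hP : IsPositiveSystem R P)
    {a b : V} (ha : a ∈ P) (hb : b ∈ P) (hab : ⟪a, b⟫ < 0) : a + b ∈ P ∧ a + b ≠ 0 := by
  have hRadd : a + b ∈ R := ((hR.2.2.2 a (hP.1 ha) b (hP.1 hb)).1) hab
  refine ⟨hP.2.1 a ha b hb hRadd, ?_⟩
  intro h
  have hb' : -a ∈ P := by
    have : b = -a := by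
      have : a + b - a = 0 - a := by rw [h]
      simpa using this
    rwa [← this]
  have ha0 : a = 0 := GRS.eq_zero_of_mem_neg hP ha hb'
  rw [ha0, inner_zero_left] at hab
  exact lt_irrefl _ hab

-- Lemma A: a nonempty multiset of nonzero elements of P has nonzero sum
lemma GRS.multiset_sum_ne_zero {R P : Set V} (hR : IsGRS R) (hP : IsPositiveSystem R P) :
    ∀ (n : ℕ) (m : Multiset V), Multiset.card m = n →
      (∀ x ∈ m, x ∈ P ∧ x ≠ 0) → m ≠ 0 → m.sum ≠ 0 := by
  intro n
  induction n using Nat.strong_induction_on with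
  | _ n ih =>
    intro m hcard hmem hne hs
    classical
    obtain ⟨p, hp⟩ := Multiset.exists_mem_of_ne_zero hne
    have herase : p + (m.erase p).sum = m.sum := by
      conv_rhs => rw [← Multiset.cons_erase hp]
      rw [Multiset.sum_cons]
    have hesum : (m.erase p).sum = -p := by
      have := herase.trans hs
      linear_combination (norm := abel) this
    -- find q in erase with negative inner product with p
    have hpne : p ≠ 0 := (hmem p hp).2
    have hneg : ⟪(m.erase p).sum, p⟫ < 0 := by
      rw [hesum, inner_neg_left]
      have hne0 : ⟪p, p⟫ ≠ 0 := fun h => hpne (inner_self_eq_zero.1 h)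
      have : 0 < ⟪p, p⟫ := lt_of_le_of_ne real_inner_self_nonneg (Ne.symm hne0)
      linarith
    have : ∃ q ∈ m.erase p, ⟪q, p⟫ < 0 := by
      by_contra hcon
      push_neg at hcon
      have : (0:ℝ) ≤ ⟪(m.erase p).sum, p⟫ := by
        rw [multiset_inner_sum]
        apply Multiset.sum_nonneg
        intro x hx
        obtain ⟨q, hq, rfl⟩ := Multiset.mem_map.1 hx
        exact hcon q hq
      linarith
    obtain ⟨q, hq, hpq⟩ := this
    have hqm : q ∈ m := Multiset.mem_of_mem_erase hq
    have hpq' : ⟪p, q⟫ < 0 := by rwa [real_inner_comm] at hpq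
    obtain ⟨hsumP, hsumne⟩ := GRS.add_mem_of_inner_neg hR hP (hmem p hp).1 (hmem q hqm).1 hpq'
    -- new multiset
    set m' : Multiset V := (p + q) ::ₘ ((m.erase p).erase q) with hm'
    have hq2 : q + ((m.erase p).erase q).sum = (m.erase p).sum := by
      conv_rhs => rw [← Multiset.cons_erase hq]
      rw [Multiset.sum_cons]
    have hcard2 : Multiset.card m ≥ 2 := by
      have h1 : Multiset.card (m.erase p) = Multiset.card m - 1 := Multiset.card_erase_of_mem hp
      have h2 : 1 ≤ Multiset.card (m.erase p) := Multiset.card_pos.2 (by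
        intro h0; rw [h0] at hq; simp at hq)
      omega
    have hcard' : Multiset.card m' = n - 1 := by
      rw [hm', Multiset.card_cons, Multiset.card_erase_of_mem hq, Multiset.card_erase_of_mem hp]
      simp only [Nat.pred_eq_sub_one]
      omega
    have hmem' : ∀ x ∈ m', x ∈ P ∧ x ≠ 0 := by
      intro x hx
      rw [hm', Multiset.mem_cons] at hx
      rcases hx with rfl | hx
      · exact ⟨hsumP, hsumne⟩
      · exact hmem x (Multiset.mem_of_mem_erase (Multiset.mem_of_mem_erase hx))
    have hsum' : m'.sum = 0 := by
      rw [hm', Multiset.sum_cons]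
      have : ((m.erase p).erase q).sum = (m.erase p).sum - q := by
        linear_combination (norm := abel) hq2
      rw [this, hesum]
      rw [← hs, ← herase, hesum]
      abel
    have hne' : m' ≠ 0 := by rw [hm']; exact Multiset.cons_ne_zero
    exact ih (n-1) (by omega) m' hcard' hmem' hne' hsum'

def sprec (P : Set V) (x y : V) : Prop :=
  ∃ m : Multiset V, (∀ z ∈ m, z ∈ P ∧ z ≠ 0) ∧ m ≠ 0 ∧ y = x + m.sum

lemma sprec_trans {P : Set V} {x y z : V} (h1 : sprec P x y) (h2 : sprec P y z) :
    sprec P x z := by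
  obtain ⟨m1, hm1, hne1, rfl⟩ := h1
  obtain ⟨m2, hm2, hne2, rfl⟩ := h2
  refine ⟨m1 + m2, ?_, ?_, ?_⟩
  · intro u hu
    rcases Multiset.mem_add.1 hu with h | h
    exacts [hm1 u h, hm2 u h]
  · intro h
    have h0 : Multiset.card (m1 + m2) = 0 := by rw [h]; rfl
    rw [Multiset.card_add] at h0
    have := Multiset.card_pos.2 hne1
    omega
  · rw [Multiset.sum_add]; abel

lemma sprec_irrefl {R P : Set V} (hR : IsGRS R) (hP : IsPositiveSystem R P) {x : V} :
    ¬ sprec P x x := by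
  rintro ⟨m, hm, hne, hx⟩
  have hms : m.sum = 0 := by
    have : x + m.sum - x = x - x := by rw [← hx]
    simpa using this
  exact GRS.multiset_sum_ne_zero hR hP (Multiset.card m) m rfl hm hne hms

noncomputable def grk (P : Set V) (y : V) : ℕ := {x | x ∈ P ∧ sprec P x y}.ncard

lemma grk_lt {R P : Set V} (hR : IsGRS R) (hP : IsPositiveSystem R P) (hPfin : P.Finite)
    {x y : V} (hx : x ∈ P) (h : sprec P x y) : grk P x < grk P y := by
  apply Set.ncard_lt_ncard
  · rw [Set.ssubset_def]
    constructor
    · rintro z ⟨hz, hzx⟩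
      exact ⟨hz, sprec_trans hzx h⟩
    · intro hsub
      exact sprec_irrefl hR hP (hsub ⟨hx, h⟩).2
  · exact hPfin.subset fun z hz => hz.1

lemma grk_le {P : Set V} (hPfin : P.Finite) (y : V) : grk P y ≤ P.ncard :=
  Set.ncard_le_ncard (fun z hz => hz.1) hPfin

lemma grk_sum_le {P : Set V} (hPfin : P.Finite) (s : Finset V) (hs : ↑s ⊆ P) :
    ∑ x ∈ s, grk P x ≤ P.ncard * P.ncard := by
  calc ∑ x ∈ s, grk P x ≤ ∑ _x ∈ s, P.ncard := Finset.sum_le_sum fun i _ => grk_le hPfin i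
  _ = s.card * P.ncard := by rw [Finset.sum_const, smul_eq_mul]
  _ ≤ P.ncard * P.ncard := by
      apply Nat.mul_le_mul_right
      rw [← Set.ncard_coe_finset s]
      exact Set.ncard_le_ncard hs hPfin

lemma GRS.no_pos_real_relation {R P : Set V} (hR : IsGRS R) (hP : IsPositiveSystem R P) :
    ∀ (N : ℕ) (a : V →₀ ℝ), (∀ x ∈ a.support, x ∈ P ∧ x ≠ 0) → (∀ x, 0 ≤ a x) →
      (a.sum fun x c => c • x) = 0 →
      a.support.card * (P.ncard * P.ncard + 1) +
        (P.ncard * P.ncard - ∑ x ∈ a.support, grk P x) ≤ N →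
      a = 0 := by
  classical
  intro N
  induction N using Nat.strong_induction_on with
  | _ N ih =>
  intro a hsupp hnn hsum hμ
  by_contra hne
  have hPfin : P.Finite := hR.2.1.subset hP.1
  set B := P.ncard * P.ncard with hB
  obtain ⟨p, hp⟩ := Finsupp.support_nonempty_iff.2 hne
  have hsumF : ∑ x ∈ a.support, a x • x = 0 := hsum
  have hap : 0 < a p := lt_of_le_of_ne (hnn p) (Ne.symm (Finsupp.mem_support_iff.1 hp))
  have hpP := hsupp p hp
  have h1 : ∑ x ∈ a.support.erase p, a x • x = -(a p • p) := by
    have h := Finset.add_sum_erase a.support (fun x => a x • x) hp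
    rw [hsumF] at h
    have : a p • p + ∑ x ∈ a.support.erase p, a x • x - a p • p = 0 - a p • p := by rw [h]
    simpa using this
  have h2 : ⟪∑ x ∈ a.support.erase p, a x • x, p⟫ < 0 := by
    rw [h1, inner_neg_left, real_inner_smul_left]
    have hne0 : ⟪p, p⟫ ≠ 0 := fun h => hpP.2 (inner_self_eq_zero.1 h)
    have hpos : 0 < ⟪p, p⟫ := lt_of_le_of_ne real_inner_self_nonneg (Ne.symm hne0)
    nlinarith
  obtain ⟨q, hq, hqneg⟩ : ∃ q ∈ a.support.erase p, ⟪q, p⟫ < 0 := by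
    by_contra hcon
    push_neg at hcon
    have : (0:ℝ) ≤ ⟪∑ x ∈ a.support.erase p, a x • x, p⟫ := by
      rw [sum_inner]
      apply Finset.sum_nonneg
      intro x hx
      rw [real_inner_smul_left]
      exact mul_nonneg (hnn x) (hcon x hx)
    linarith
  have hqs : q ∈ a.support := Finset.mem_of_mem_erase hq
  have hqP := hsupp q hqs
  have hqp : q ≠ p := Finset.ne_of_mem_erase hq
  -- choose ordered pair (i, j) with a i ≤ a j
  obtain ⟨i, j, hiP, hjP, hijne, hinner, hai, haj, haij⟩ :
      ∃ i j : V, (i ∈ P ∧ i ≠ 0) ∧ (j ∈ P ∧ j ≠ 0) ∧ i ≠ j ∧ ⟪i, j⟫ < 0 ∧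
        i ∈ a.support ∧ j ∈ a.support ∧ a i ≤ a j := by
    rcases le_total (a p) (a q) with h | h
    · exact ⟨p, q, hpP, hqP, hqp.symm, by rwa [real_inner_comm], hp, hqs, h⟩
    · exact ⟨q, p, hqP, hpP, hqp, hqneg, hqs, hp, h⟩
  have hai0 : 0 < a i := lt_of_le_of_ne (hnn i) (Ne.symm (Finsupp.mem_support_iff.1 hai))
  obtain ⟨hwP, hwne⟩ := GRS.add_mem_of_inner_neg hR hP hiP.1 hjP.1 hinner
  set w := i + j with hw
  have hwi : w ≠ i := by
    intro h
    rw [hw] at h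
    exact hjP.2 (by simpa using h)
  have hwj : w ≠ j := by
    intro h
    rw [hw] at h
    exact hiP.2 (by simpa using h)
  set a' : V →₀ ℝ :=
    a + Finsupp.single w (a i) - Finsupp.single i (a i) - Finsupp.single j (a i) with ha'
  have ha'i : a' i = 0 := by
    simp [ha', Finsupp.single_apply, hwi, Ne.symm hijne]
  have ha'j : a' j = a j - a i := by
    simp [ha', Finsupp.single_apply, hwj, hijne]
  have ha'w : a' w = a w + a i := by
    simp [ha', Finsupp.single_apply, Ne.symm hwi, Ne.symm hwj]
  have ha'other : ∀ x, x ≠ i → x ≠ j → x ≠ w → a' x = a x := by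
    intro x hxi hxj hxw
    simp [ha', Finsupp.single_apply, Ne.symm hxi, Ne.symm hxj, Ne.symm hxw]
  have hnn' : ∀ x, 0 ≤ a' x := by
    intro x
    by_cases hxi : x = i
    · rw [hxi, ha'i]
    by_cases hxj : x = j
    · rw [hxj, ha'j]; linarith
    by_cases hxw : x = w
    · rw [hxw, ha'w]; have := hnn w; linarith
    · rw [ha'other x hxi hxj hxw]; exact hnn x
  -- the linear combination is preserved
  have hL : (a'.sum fun x c => c • x) = 0 := by
    have e1 : ∀ f : V →₀ ℝ, (f.sum fun x c => c • x) = Finsupp.linearCombination ℝ (id : V → V) f := by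
      intro f
      rw [Finsupp.linearCombination_apply]
      rfl
    rw [e1, ha']
    rw [map_sub, map_sub, map_add]
    rw [Finsupp.linearCombination_single, Finsupp.linearCombination_single,
      Finsupp.linearCombination_single, ← e1, hsum]
    simp only [id]
    rw [hw]
    rw [smul_add]
    abel
  -- support bound
  have hsubset : a'.support ⊆ insert w a.support := by
    intro x hx
    rw [Finset.mem_insert]
    by_cases hxw : x = w
    · exact Or.inl hxw
    right
    by_cases hxi : x = i
    · rw [hxi]; exact hai
    by_cases hxj : x = j
    · rw [hxj]; exact haj
    · rw [Finsupp.mem_support_iff, ← ha'other x hxi hxj hxw]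
      exact Finsupp.mem_support_iff.1 hx
  have hsupp' : ∀ x ∈ a'.support, x ∈ P ∧ x ≠ 0 := by
    intro x hx
    rcases Finset.mem_insert.1 (hsubset hx) with rfl | hx'
    · exact ⟨hwP, hwne⟩
    · exact hsupp x hx'
  have hSle : ∑ x ∈ a'.support, grk P x ≤ B := by
    rw [hB]
    exact grk_sum_le hPfin _ (fun x hx => (hsupp' x (by exact_mod_cast hx)).1)
  have hSle2 : ∑ x ∈ a.support, grk P x ≤ B := by
    rw [hB]
    exact grk_sum_le hPfin _ (fun x hx => (hsupp x (by exact_mod_cast hx)).1)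
  clear_value B
  -- measure decrease, three cases
  have hdec : a'.support.card * (B + 1) + (B - ∑ x ∈ a'.support, grk P x) <
      a.support.card * (B + 1) + (B - ∑ x ∈ a.support, grk P x) := by
    by_cases hcase : w ∉ a.support ∧ a i ≠ a j
    · -- support is exactly insert w (erase i), same card, rank sum increases
      obtain ⟨hws, hija⟩ := hcase
      have hsupp_eq : a'.support = insert w (a.support.erase i) := by
        apply Finset.ext
        intro x
        constructor
        · intro hx
          rw [Finset.mem_insert]
          by_cases hxw : x = w
          · exact Or.inl hxw
          right
          rw [Finset.mem_erase]
          have hxi : x ≠ i := by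
            intro h; rw [h] at hx; exact Finsupp.mem_support_iff.1 hx ha'i
          refine ⟨hxi, ?_⟩
          rcases Finset.mem_insert.1 (hsubset hx) with h | h
          · exact absurd h hxw
          · exact h
        · intro hx
          rw [Finsupp.mem_support_iff]
          rcases Finset.mem_insert.1 hx with h | hx'
          · rw [h, ha'w]
            have haw0 : a w = 0 := by
              by_contra hc
              exact hws (Finsupp.mem_support_iff.2 hc)
            rw [haw0]
            simpa using ne_of_gt hai0
          · obtain ⟨hxi, hxs⟩ := Finset.mem_erase.1 hx'
            by_cases hxj : x = j
            · rw [hxj, ha'j]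
              intro h
              apply hija
              linarith [sub_eq_zero.1 h]
            by_cases hxw : x = w
            · rw [hxw, ha'w]
              have : a w = 0 := by
                by_contra hc
                exact hws (Finsupp.mem_support_iff.2 hc)
              rw [this]
              simpa using ne_of_gt hai0
            · rw [ha'other x hxi hxj hxw]
              exact Finsupp.mem_support_iff.1 hxs
      have hwnotin : w ∉ a.support.erase i := fun h => hws (Finset.mem_of_mem_erase h)
      have hcard' : a'.support.card = a.support.card := by
        rw [hsupp_eq, Finset.card_insert_of_notMem hwnotin, Finset.card_erase_of_mem hai]
        have : 1 ≤ a.support.card := Finset.card_pos.2 ⟨i, hai⟩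
        omega
      have hsum_eq : ∑ x ∈ a'.support, grk P x =
          grk P w + (∑ x ∈ a.support, grk P x - grk P i) := by
        rw [hsupp_eq, Finset.sum_insert hwnotin]
        congr 1
        have h := Finset.add_sum_erase a.support (grk P) hai
        omega
      have hlt : grk P i < grk P w := by
        apply grk_lt hR hP hPfin hiP.1
        exact ⟨{j}, by simpa using hjP, by simp, by simp [hw]⟩
      have hgi : grk P i ≤ ∑ x ∈ a.support, grk P x :=
        Finset.single_le_sum (f := grk P) (fun x _ => Nat.zero_le _) hai
      have hnew : grk P w + (∑ x ∈ a.support, grk P x - grk P i) ≤ B := hsum_eq ▸ hSle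
      rw [hcard', hsum_eq]
      omega
    · -- support card strictly decreases
      push_neg at hcase
      have hcard' : a'.support.card < a.support.card := by
        by_cases hws : w ∈ a.support
        · have hsub2 : a'.support ⊆ a.support.erase i := by
            intro x hx
            rw [Finset.mem_erase]
            have hxi : x ≠ i := by
              intro h; rw [h] at hx; exact Finsupp.mem_support_iff.1 hx ha'i
            refine ⟨hxi, ?_⟩
            rcases Finset.mem_insert.1 (hsubset hx) with rfl | h
            · exact hws
            · exact h
          calc a'.support.card ≤ (a.support.erase i).card := Finset.card_le_card hsub2
          _ < a.support.card := Finset.card_erase_lt_of_mem hai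
        · have haeq : a i = a j := hcase hws
          have hsub2 : a'.support ⊆ insert w ((a.support.erase i).erase j) := by
            intro x hx
            rw [Finset.mem_insert]
            by_cases hxw : x = w
            · exact Or.inl hxw
            right
            have hxi : x ≠ i := by
              intro h; rw [h] at hx; exact Finsupp.mem_support_iff.1 hx ha'i
            have hxj : x ≠ j := by
              intro h
              rw [h] at hx
              apply Finsupp.mem_support_iff.1 hx
              rw [ha'j, haeq, sub_self]
            rw [Finset.mem_erase, Finset.mem_erase]
            refine ⟨hxj, hxi, ?_⟩
            rcases Finset.mem_insert.1 (hsubset hx) with h | h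
            · exact absurd h hxw
            · exact h
          have hjmem : j ∈ a.support.erase i := Finset.mem_erase.2 ⟨Ne.symm hijne, haj⟩
          have hwnot : w ∉ (a.support.erase i).erase j :=
            fun h => hws (Finset.mem_of_mem_erase (Finset.mem_of_mem_erase h))
          calc a'.support.card ≤ (insert w ((a.support.erase i).erase j)).card :=
              Finset.card_le_card hsub2
          _ = ((a.support.erase i).erase j).card + 1 := Finset.card_insert_of_notMem hwnot
          _ < a.support.card := by
              rw [Finset.card_erase_of_mem hjmem, Finset.card_erase_of_mem hai]
              have h1 : 1 ≤ (a.support.erase i).card := Finset.card_pos.2 ⟨j, hjmem⟩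
              have h2 : 1 ≤ a.support.card := Finset.card_pos.2 ⟨i, hai⟩
              rw [Finset.card_erase_of_mem hai] at h1
              omega
      have e2 : a'.support.card * (B+1) + (B+1) ≤ a.support.card * (B+1) := by
        have h := Nat.mul_le_mul_right (B+1) (Nat.succ_le_of_lt hcard')
        rwa [Nat.succ_mul] at h
      calc a'.support.card * (B + 1) + (B - ∑ x ∈ a'.support, grk P x)
          ≤ a'.support.card * (B + 1) + B := Nat.add_le_add_left (Nat.sub_le _ _) _
        _ < a'.support.card * (B + 1) + (B + 1) := Nat.add_lt_add_left (Nat.lt_succ_self B) _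
        _ ≤ a.support.card * (B + 1) := e2
        _ ≤ a.support.card * (B + 1) + (B - ∑ x ∈ a.support, grk P x) := Nat.le_add_right _ _
  have hzero : a' = 0 := by
    apply ih (a'.support.card * (B + 1) + (B - ∑ x ∈ a'.support, grk P x))
      (lt_of_lt_of_le hdec hμ) a' hsupp' hnn' hL le_rfl
  have : a' w = 0 := by rw [hzero]; rfl
  rw [ha'w] at this
  have := hnn w
  linarith

lemma comb_zero (S : Set V) : IsNonnegIntComb S 0 :=
  ⟨0, by simp, fun α => le_refl 0, by simp⟩

lemma comb_single {S : Set V} {α : V} (h : α ∈ S) : IsNonnegIntComb S α := by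
  classical
  refine ⟨Finsupp.single α 1, ?_, ?_, ?_⟩
  · intro x hx
    have := Finsupp.support_single_subset (Finset.mem_coe.1 hx)
    rw [Finset.mem_singleton] at this
    rw [this]; exact h
  · intro x
    rw [Finsupp.single_apply]
    split <;> omega
  · rw [Finsupp.sum_single_index (by simp)]
    simp

lemma comb_add {S : Set V} {x y : V} (hx : IsNonnegIntComb S x) (hy : IsNonnegIntComb S y) :
    IsNonnegIntComb S (x + y) := by
  classical
  obtain ⟨c, hc1, hc2, rfl⟩ := hx
  obtain ⟨d, hd1, hd2, rfl⟩ := hy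
  refine ⟨c + d, ?_, ?_, ?_⟩
  · intro z hz
    rcases Finset.mem_union.1 (Finsupp.support_add (Finset.mem_coe.1 hz)) with h | h
    · exact hc1 h
    · exact hd1 h
  · intro z
    rw [Finsupp.add_apply]
    exact add_nonneg (hc2 z) (hd2 z)
  · rw [Finsupp.sum_add_index' (by simp) (by intro i b c; push_cast; rw [add_smul])]

lemma comb_mem_span {S : Set V} {v : V} (h : IsNonnegIntComb S v) :
    v ∈ Submodule.span ℝ S := by
  obtain ⟨c, hc1, _, rfl⟩ := h
  apply Submodule.sum_mem
  intro α hα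
  exact Submodule.smul_mem _ _ (Submodule.subset_span (hc1 hα))

-- decomposition into indecomposables
lemma GRS.mem_P_comb {R P : Set V} (hR : IsGRS R) (hP : IsPositiveSystem R P) :
    ∀ (n : ℕ) (p : V), p ∈ P → grk P p ≤ n →
      IsNonnegIntComb {x | IsIndecomposableIn P x ∧ x ≠ 0} p := by
  have hPfin : P.Finite := hR.2.1.subset hP.1
  intro n
  induction n using Nat.strong_induction_on with
  | _ n ih =>
  intro p hpP hrk
  by_cases hp0 : p = 0
  · rw [hp0]; exact comb_zero _
  by_cases hind : IsIndecomposableIn P p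
  · exact comb_single ⟨hind, hp0⟩
  rw [IsIndecomposableIn] at hind
  push_neg at hind
  obtain ⟨γ, hγ, δ, hδ, hγ0, hδ0, rfl⟩ := hind hpP
  have hsγ : sprec P γ (γ + δ) := ⟨{δ}, by simpa using ⟨hδ, hδ0⟩, by simp, by simp⟩
  have hsδ : sprec P δ (γ + δ) := ⟨{γ}, by simpa using ⟨hγ, hγ0⟩, by simp, by
    rw [Multiset.sum_singleton]; abel⟩
  have h1 : grk P γ < n := lt_of_lt_of_le (grk_lt hR hP hPfin hγ hsγ) hrk
  have h2 : grk P δ < n := lt_of_lt_of_le (grk_lt hR hP hPfin hδ hsδ) hrk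
  exact comb_add (ih (grk P γ) h1 γ hγ le_rfl) (ih (grk P δ) h2 δ hδ le_rfl)

-- distinct indecomposables have nonpositive inner product
lemma GRS.obtuse {R P : Set V} (hR : IsGRS R) (hP : IsPositiveSystem R P) {α β : V}
    (hα : IsIndecomposableIn P α ∧ α ≠ 0) (hβ : IsIndecomposableIn P β ∧ β ≠ 0)
    (hne : α ≠ β) : ⟪α, β⟫ ≤ 0 := by
  by_contra h
  push_neg at h
  have hsub : α - β ∈ R := (hR.2.2.2 α (hP.1 hα.1.1) β (hP.1 hβ.1.1)).2.1 h
  have hmem : α - β ∈ P ∪ -P := by rw [← hP.2.2.1]; exact hsub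
  rcases hmem with hmem | hmem
  · exact hα.1.2 ⟨β, hβ.1.1, α - β, hmem, hβ.2, sub_ne_zero.2 hne, by abel⟩
  · have hmem' : β - α ∈ P := by
      have : -(α - β) ∈ P := Set.mem_neg.1 hmem
      simpa using this
    exact hβ.1.2 ⟨α, hα.1.1, β - α, hmem', hα.2, sub_ne_zero.2 (Ne.symm hne), by abel⟩

lemma GRS.indep {R P : Set V} (hR : IsGRS R) (hP : IsPositiveSystem R P) :
    LinearIndependent ℝ ((↑) : {x : V | IsIndecomposableIn P x ∧ x ≠ 0} → V) := by
  classical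
  rw [linearIndependent_subtype_iff, linearIndepOn_iff]
  intro l hl hsum
  set S := {x : V | IsIndecomposableIn P x ∧ x ≠ 0} with hS
  have hlS : ↑l.support ⊆ S := (Finsupp.mem_supported ℝ l).1 hl
  set pos := l.filter (fun a => 0 < l a) with hposdef
  set neg := l.filter (fun a => ¬ 0 < l a) with hnegdef
  have hsplit : pos + neg = l := Finsupp.filter_pos_add_filter_neg l _
  set L := Finsupp.linearCombination ℝ (id : V → V) with hL
  have hLl : L pos + L neg = 0 := by rw [← map_add, hsplit]; exact hsum
  have hsuppos : pos.support ⊆ l.support := by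
    rw [hposdef, Finsupp.support_filter]
    exact Finset.filter_subset _ _
  have hsupneg : neg.support ⊆ l.support := by
    rw [hnegdef, Finsupp.support_filter]
    exact Finset.filter_subset _ _
  have hposval : ∀ x ∈ pos.support, 0 < pos x := by
    intro x hx
    have hne := Finsupp.mem_support_iff.1 hx
    rw [hposdef, Finsupp.filter_apply] at hne ⊢
    by_cases h : 0 < l x
    · rw [if_pos h]; exact h
    · rw [if_neg h] at hne; exact absurd rfl hne
  have hnegval : ∀ x ∈ neg.support, neg x < 0 := by
    intro x hx
    have hne := Finsupp.mem_support_iff.1 hx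
    rw [hnegdef, Finsupp.filter_apply] at hne ⊢
    by_cases h : 0 < l x
    · rw [if_neg (by simpa using h)] at hne; exact absurd rfl hne
    · rw [if_pos (by simpa using h)]
      rw [if_pos (by simpa using h)] at hne
      rcases lt_or_eq_of_le (not_lt.1 h) with h' | h'
      · exact h'
      · exact absurd h' hne
  -- the two supports are disjoint as sets of vectors with opposite sign values
  have hkey : (0:ℝ) ≤ ⟪L pos, L neg⟫ := by
    have e : ∀ f : V →₀ ℝ, L f = ∑ x ∈ f.support, f x • x := fun f => by
      rw [hL, Finsupp.linearCombination_apply]; rfl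
    rw [e, e, sum_inner]
    apply Finset.sum_nonneg
    intro x hx
    rw [inner_sum]
    apply Finset.sum_nonneg
    intro y hy
    rw [real_inner_smul_left, real_inner_smul_right]
    have hxy : x ≠ y := by
      intro h
      have h1 := hposval x hx
      have h2 := hnegval y hy
      rw [← h] at h2
      rw [hposdef, Finsupp.filter_apply] at h1
      rw [hnegdef, Finsupp.filter_apply] at h2
      by_cases hc : 0 < l x
      · rw [if_neg (not_not_intro hc)] at h2
        exact lt_irrefl _ h2
      · rw [if_neg hc] at h1
        exact lt_irrefl _ h1
    have hxS : x ∈ S := hlS (hsuppos hx)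
    have hyS : y ∈ S := hlS (hsupneg hy)
    have hinner : ⟪x, y⟫ ≤ 0 := GRS.obtuse hR hP hxS hyS hxy
    have h1 := le_of_lt (hposval x hx)
    have h2 := le_of_lt (hnegval y hy)
    exact mul_nonneg h1 (by nlinarith)
  have hv : L pos = 0 := by
    have hvv : ⟪L pos, L pos⟫ ≤ 0 := by
      have : L pos = -L neg := by
        have : L pos + L neg - L neg = 0 - L neg := by rw [hLl]
        simpa using this
      calc ⟪L pos, L pos⟫ = ⟪L pos, -L neg⟫ := by rw [← this]
      _ = -⟪L pos, L neg⟫ := by rw [inner_neg_right]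
      _ ≤ 0 := by linarith
    have := le_antisymm hvv real_inner_self_nonneg
    exact inner_self_eq_zero.1 this
  have hw : L neg = 0 := by
    have : L pos + L neg - L pos = 0 - L pos := by rw [hLl]
    rw [hv] at this
    simpa using this
  -- apply the no-positive-relation lemma to pos and -neg
  have hSsub : ∀ x ∈ S, x ∈ P ∧ x ≠ 0 := fun x hx => ⟨hx.1.1, hx.2⟩
  have eL : ∀ f : V →₀ ℝ, (f.sum fun x c => c • x) = L f := fun f => by
    rw [hL, Finsupp.linearCombination_apply]; rfl
  have hposnn : ∀ x, 0 ≤ pos x := by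
    intro x
    rw [hposdef, Finsupp.filter_apply]
    split
    · next h => exact le_of_lt h
    · exact le_rfl
  have hpossum : (pos.sum fun x c => c • x) = 0 := (eL pos).trans hv
  have hpos0 : pos = 0 :=
    GRS.no_pos_real_relation hR hP _ pos (fun x hx => hSsub x (hlS (hsuppos hx)))
      hposnn hpossum le_rfl
  have hnegnn : ∀ x, 0 ≤ (-neg) x := by
    intro x
    rw [Finsupp.coe_neg, Pi.neg_apply, hnegdef, Finsupp.filter_apply]
    split
    · next h => linarith [not_lt.1 h]
    · simp
  have hnegsum : ((-neg).sum fun x c => c • x) = 0 := by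
    rw [eL, map_neg, hw, neg_zero]
  have hnegsupp : (-neg).support = neg.support := Finsupp.support_neg neg
  have hneg0 : neg = 0 := by
    have h2 : -neg = 0 :=
      GRS.no_pos_real_relation hR hP _ (-neg)
        (fun x hx => hSsub x (hlS (hsupneg (hnegsupp ▸ hx)))) hnegnn hnegsum le_rfl
    have := congrArg Neg.neg h2
    simpa using this
  rw [← hsplit, hpos0, hneg0, add_zero]


/-- Every positive system comes from a base. -/
theorem stmt11 (R P : Set V) (hR : IsGRS R) (hP : IsPositiveSystem R P) :
    ∃ S : Set V, IsBase R S ∧ P = posRoots R S := by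
  classical
  set S : Set V := {x : V | IsIndecomposableIn P x ∧ x ≠ 0} with hS
  have hSP : S ⊆ P := fun x hx => hx.1.1
  have hcomb : ∀ p ∈ P, IsNonnegIntComb S p := fun p hp =>
    GRS.mem_P_comb hR hP (grk P p) p hp le_rfl
  have hRPP : R = P ∪ -P := hP.2.2.1
  have hevery : ∀ β ∈ R, IsNonnegIntComb S β ∨ IsNonnegIntComb S (-β) := by
    intro β hβ
    rw [hRPP] at hβ
    rcases hβ with h | h
    · exact Or.inl (hcomb β h)
    · exact Or.inr (hcomb (-β) (Set.mem_neg.1 h))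
  have hspan : Submodule.span ℝ S = ⊤ := by
    rw [eq_top_iff, ← hR.2.2.1]
    rw [Submodule.span_le]
    intro β hβ
    rcases hevery β hβ with h | h
    · exact comb_mem_span h
    · have := comb_mem_span h
      have := Submodule.neg_mem _ this
      simpa using this
  refine ⟨S, ⟨fun x hx => hP.1 (hSP hx), GRS.indep hR hP, hspan, hevery⟩, ?_⟩
  ext p
  constructor
  · intro hp
    exact ⟨hP.1 hp, hcomb p hp⟩
  · rintro ⟨hpR, hcombp⟩
    by_contra hpP
    have hp0 : p ≠ 0 := by
      intro h
      exact hpP (h ▸ GRS.pos_zero_mem hP)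
    have hpneg : -p ∈ P := by
      rw [hRPP] at hpR
      rcases hpR with h | h
      · exact absurd h hpP
      · exact Set.mem_neg.1 h
    obtain ⟨c, hc1, hc2, hceq⟩ := hcombp
    set cr : V →₀ ℝ := c.mapRange (fun n : ℤ => (n : ℝ)) (by simp) with hcr
    set a : V →₀ ℝ := Finsupp.single (-p) 1 + cr with ha
    have hcrsum : (cr.sum fun x t => t • x) = p := by
      rw [hcr, Finsupp.sum_mapRange_index (by simp)]
      exact hceq.symm
    have hasum : (a.sum fun x t => t • x) = 0 := by
      rw [ha, Finsupp.sum_add_index' (by simp) (by intro i b c; rw [add_smul]), hcrsum,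
        Finsupp.sum_single_index (by simp)]
      simp
    have hann : ∀ x, 0 ≤ a x := by
      intro x
      rw [ha, Finsupp.add_apply, Finsupp.single_apply, hcr, Finsupp.mapRange_apply]
      have : (0:ℝ) ≤ (c x : ℝ) := by exact_mod_cast hc2 x
      split <;> linarith
    have hasupp : ∀ x ∈ a.support, x ∈ P ∧ x ≠ 0 := by
      intro x hx
      have hx' := Finsupp.support_add (g₁ := Finsupp.single (-p) 1) (g₂ := cr) (ha ▸ hx)
      rcases Finset.mem_union.1 hx' with h | h
      · have := Finsupp.support_single_subset h
        rw [Finset.mem_singleton] at this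
        rw [this]
        exact ⟨hpneg, by simpa using hp0⟩
      · have hxc : x ∈ c.support := Finsupp.support_mapRange (hcr ▸ h)
        have hxS : x ∈ S := hc1 hxc
        exact ⟨hSP hxS, hxS.2⟩
    have hzero : a = 0 :=
      GRS.no_pos_real_relation hR hP _ a hasupp hann hasum le_rfl
    have : a (-p) = 0 := by rw [hzero]; rfl
    rw [ha, Finsupp.add_apply, Finsupp.single_apply, if_pos rfl] at this
    have h1 : (0:ℝ) ≤ cr (-p) := by
      rw [hcr, Finsupp.mapRange_apply]
      exact_mod_cast hc2 (-p)
    linarith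
end

section
/- Let (R,V) be a generalized root system, S a base of R, I ⊆ S, R⁺ = R⁺(S), and π_I : V → V_I^⊥ the orthogonal projection onto the orthogonal complement of the span of I. If ν ∈ π_I(R) is nonzero, then the fibre R^ν := {β ∈ R : π_I(β) = ν} satisfies R^ν ⊆ R⁺ or R^ν ⊆ −R⁺. -/
open scoped RealInnerProductSpace

variable {V : Type*} [NormedAddCommGroup V] [InnerProductSpace ℝ V] [FiniteDimensional ℝ V]

/-! ### Auxiliary lemmas for `stmt14` -/

lemma grs_neg_mem {R : Set V} (hR : IsGRS R) {β : V} (hβ : β ∈ R) : -β ∈ R := by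
  by_cases h : β = 0
  · simpa [h] using hβ
  · have hpos : 0 < ⟪β, β⟫ := by
      rw [real_inner_self_eq_norm_sq]
      have hn : ‖β‖ ≠ 0 := norm_ne_zero_iff.mpr h
      positivity
    have h0 : (0 : V) ∈ R := by
      have := ((hR.2.2.2 β hβ β hβ).2.1 hpos)
      simpa using this
    have := (hR.2.2.2 0 h0 β hβ).2.2 (by simp)
    simpa using this.mp (by simpa using hβ)

lemma aux_repr {S : Set V} (B : Module.Basis S ℝ V) (hB : ∀ s : S, B s = ↑s)
    {c : V →₀ ℤ} (hc : ↑c.support ⊆ S) (s : S) :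
    B.repr (c.sum fun α n => (n : ℝ) • α) s = (c ↑s : ℝ) := by
  classical
  have h1 : B.repr (c.sum fun α n => (n : ℝ) • α)
      = c.sum fun α n => (n : ℝ) • B.repr α := by
    rw [map_finsuppSum]
    simp [map_smul]
  rw [h1, Finsupp.sum_apply, Finsupp.sum]
  have h2 : ∀ α ∈ c.support,
      ((c α : ℝ) • B.repr α) s = (c α : ℝ) * (if α = ↑s then 1 else 0) := by
    intro α hα
    have hαS : α ∈ S := hc hα
    rw [Finsupp.smul_apply, smul_eq_mul]
    congr 1
    have e1 : (B.repr (B ⟨α, hαS⟩)) s = B.repr α s := by rw [hB]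
    rw [← e1, Module.Basis.repr_self, Finsupp.single_apply]
    simp [Subtype.ext_iff]
  rw [Finset.sum_congr rfl h2]
  simp only [mul_ite, mul_one, mul_zero, Finset.sum_ite_eq']
  by_cases h : (↑s : V) ∈ c.support
  · simp [h]
  · simp [h, Finsupp.notMem_support_iff.mp h]

lemma aux_span_zero {S I : Set V} (B : Module.Basis S ℝ V) (hB : ∀ s : S, B s = ↑s) (hI : I ⊆ S)
    {v : V} (hv : v ∈ Submodule.span ℝ I) {s : S} (hs : (↑s : V) ∉ I) :
    B.repr v s = 0 := by
  classical
  induction hv using Submodule.span_induction with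
  | mem x hx =>
      have hxS : x ∈ S := hI hx
      have e1 : (B.repr (B ⟨x, hxS⟩)) s = B.repr x s := by rw [hB]
      rw [← e1, Module.Basis.repr_self, Finsupp.single_apply]
      have : (⟨x, hxS⟩ : S) ≠ s := by
        intro h; apply hs; rw [← Subtype.ext_iff.mp h]; exact hx
      simp [this]
  | zero => simp
  | add x y hx hy ihx ihy => simp [ihx, ihy]
  | smul a x hx ihx => simp [ihx]

lemma aux_mem_span {S I : Set V} (B : Module.Basis S ℝ V) (hB : ∀ s : S, B s = ↑s)
    {v : V} (hv : ∀ s : S, (↑s : V) ∉ I → B.repr v s = 0) :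
    v ∈ Submodule.span ℝ I := by
  have htot := B.linearCombination_repr v
  rw [Finsupp.linearCombination_apply, Finsupp.sum] at htot
  rw [← htot]
  refine Submodule.sum_mem _ ?_
  intro s hsupp
  have hne : B.repr v s ≠ 0 := Finsupp.mem_support_iff.mp hsupp
  have hsI : (↑s : V) ∈ I := by
    by_contra h
    exact hne (hv s h)
  refine Submodule.smul_mem _ _ (Submodule.subset_span ?_)
  rw [hB s]; exact hsI

lemma aux_core {S I : Set V} (B : Module.Basis S ℝ V) (hB : ∀ s : S, B s = ↑s) (hI : I ⊆ S)
    {β β' : V} (hc : IsNonnegIntComb S β) (hd : IsNonnegIntComb S (-β'))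
    (hdiff : β - β' ∈ Submodule.span ℝ I) : β ∈ Submodule.span ℝ I := by
  obtain ⟨c, hcS, hcpos, hceq⟩ := hc
  obtain ⟨d, hdS, hdpos, hdeq⟩ := hd
  refine aux_mem_span B hB ?_
  intro s hs
  have h1 : B.repr β s = (c ↑s : ℝ) := by rw [hceq]; exact aux_repr B hB hcS s
  have h2 : B.repr (-β') s = (d ↑s : ℝ) := by rw [hdeq]; exact aux_repr B hB hdS s
  have h3 : B.repr (β - β') s = 0 := aux_span_zero B hB hI hdiff hs
  rw [map_sub, Finsupp.sub_apply] at h3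
  rw [map_neg, Finsupp.neg_apply] at h2
  have hcz : (c ↑s : ℝ) = -(d ↑s : ℝ) := by
    rw [← h1, ← neg_eq_iff_eq_neg.mpr h2.symm] at *
    linarith [h3, h1, h2]
  have : (c ↑s : ℝ) = 0 := by
    have hc0 : (0:ℝ) ≤ (c ↑s : ℝ) := by exact_mod_cast hcpos ↑s
    have hd0 : (0:ℝ) ≤ (d ↑s : ℝ) := by exact_mod_cast hdpos ↑s
    linarith
  rw [h1, this]

/-- For nonzero `ν ∈ π_I(R)`, the fibre `R^ν = π_I⁻¹(ν) ∩ R` is contained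
in `R⁺` or in `-R⁺`. -/
theorem stmt14 (R S I : Set V) (hR : IsGRS R) (hS : IsBase R S) (hI : I ⊆ S)
    (ν : ↥((Submodule.span ℝ I)ᗮ)) (hν : ν ∈ projAway I '' R) (hν0 : ν ≠ 0) :
    {β ∈ R | projAway I β = ν} ⊆ posRoots R S ∨
      {β ∈ R | projAway I β = ν} ⊆ -posRoots R S := by
  obtain ⟨hSR, hli, hsp, hsign⟩ := hS
  let B : Module.Basis S ℝ V := Module.Basis.mk hli (by rw [Subtype.range_coe]; exact hsp.ge)
  have hB : ∀ s : S, B s = ↑s := fun s => Module.Basis.mk_apply _ _ s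
  obtain ⟨β₀, hβ₀R, hβ₀ν⟩ := hν
  have key : ∀ β ∈ R, projAway I β = ν → IsNonnegIntComb S β →
      ∀ β' ∈ R, projAway I β' = ν → IsNonnegIntComb S (-β') → False := by
    intro β hβ hπβ hcβ β' hβ' hπβ' hdβ'
    have hsub : Submodule.orthogonalProjection ((Submodule.span ℝ I)ᗮ) (β - β')
        = Submodule.orthogonalProjection ((Submodule.span ℝ I)ᗮ) β
          - Submodule.orthogonalProjection ((Submodule.span ℝ I)ᗮ) β' := map_sub _ _ _
    have h0 : Submodule.orthogonalProjection ((Submodule.span ℝ I)ᗮ) (β - β') = 0 := by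
      rw [hsub]
      have e1 : Submodule.orthogonalProjection ((Submodule.span ℝ I)ᗮ) β = ν := hπβ
      have e2 : Submodule.orthogonalProjection ((Submodule.span ℝ I)ᗮ) β' = ν := hπβ'
      rw [e1, e2, sub_self]
    have hdiff : β - β' ∈ Submodule.span ℝ I := by
      have := Submodule.orthogonalProjectionOnto_eq_zero_iff.mp h0
      rwa [Submodule.orthogonal_orthogonal] at this
    have hβI : β ∈ Submodule.span ℝ I := aux_core B hB hI hcβ hdβ' hdiff
    have hz : projAway I β = 0 :=
      Submodule.orthogonalProjectionOnto_apply_of_mem_orthogonal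
        ((Submodule.span ℝ I).le_orthogonal_orthogonal hβI)
    exact hν0 (by rw [← hπβ, hz])
  rcases hsign β₀ hβ₀R with hpos | hneg
  · left
    rintro β ⟨hβR, hπβ⟩
    refine ⟨hβR, ?_⟩
    rcases hsign β hβR with h | h
    · exact h
    · exact absurd (key β₀ hβ₀R hβ₀ν hpos β hβR hπβ h) not_false
  · right
    rintro β ⟨hβR, hπβ⟩
    rcases hsign β hβR with h | h
    · exact absurd (key β hβR hπβ h β₀ hβ₀R hβ₀ν hneg) not_false
    · exact Set.mem_neg.mpr ⟨grs_neg_mem hR hβR, h⟩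
end

section
/- Let (R,V) be an irreducible generalized root system with dim V ≥ 2. Then for every nonzero α ∈ R, the vector 5α does not belong to R. -/
open scoped RealInnerProductSpace

variable {V : Type*} [NormedAddCommGroup V] [InnerProductSpace ℝ V] [FiniteDimensional ℝ V]

/-- Abbreviation for the GRS closure axioms. -/
private def GRSAx (R : Set V) : Prop :=
  ∀ x ∈ R, ∀ y ∈ R,
      (⟪x, y⟫ < 0 → x + y ∈ R) ∧
      (0 < ⟪x, y⟫ → x - y ∈ R) ∧
      (⟪x, y⟫ = 0 → (x + y ∈ R ↔ x - y ∈ R))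

private lemma inner_self_pos' {x : V} (hx : x ≠ 0) : 0 < ⟪x, x⟫ :=
  not_le.mp fun h => hx (real_inner_self_nonpos.mp h)

private lemma grs_neg_mem_s16 {R : Set V} (hax : GRSAx R) (h0 : (0 : V) ∈ R)
    {γ : V} (hγ : γ ∈ R) : -γ ∈ R := by
  have h := ((hax 0 h0 γ hγ).2.2 (by simp)).mp (by simpa using hγ)
  simpa using h

/-- The chain lemma: if `γ ∈ R` has positive inner product `c` with `α`, and `γ + α ∉ R`,
then (with `j = ⌊c/a⌋`) one has `N ≤ j + 1`, and `γ - m • α ∈ R` for all `m ≤ j + N - 1`. -/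
private lemma chain_lemma {R : Set V} (hax : GRSAx R) {α : V} (hα : α ∈ R)
    (ha : 0 < ⟪α, α⟫) {N : ℕ} (hN : 5 ≤ N)
    (hmult : ∀ k : ℕ, k ≤ N → (k : ℝ) • α ∈ R)
    {γ : V} (hγ : γ ∈ R) (hc : 0 < ⟪γ, α⟫) (hno : γ + α ∉ R) :
    N ≤ Nat.floor (⟪γ, α⟫ / ⟪α, α⟫) + 1 ∧
      ∀ m : ℕ, m ≤ Nat.floor (⟪γ, α⟫ / ⟪α, α⟫) + N - 1 → γ - (m : ℝ) • α ∈ R := by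
  set a := ⟪α, α⟫ with hadef
  set c := ⟪γ, α⟫ with hcdef
  set j := Nat.floor (c / a) with hjdef
  have hja : (j : ℝ) * a ≤ c := by
    have h1 : (j : ℝ) ≤ c / a := Nat.floor_le (le_of_lt (div_pos hc ha))
    calc (j : ℝ) * a ≤ (c / a) * a := by nlinarith
    _ = c := by field_simp
  have hjb : c < ((j : ℝ) + 1) * a := by
    have h1 : c / a < (j : ℝ) + 1 := Nat.lt_floor_add_one (c / a)
    calc c = (c / a) * a := by field_simp
    _ < ((j : ℝ) + 1) * a := by nlinarith
  have hinn : ∀ k : ℕ, ⟪γ - (k : ℝ) • α, α⟫ = c - (k : ℝ) * a := by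
    intro k
    rw [inner_sub_left, real_inner_smul_left, ← hcdef, ← hadef]
  -- step 1 : the basic chain down to j+1
  have step1 : ∀ k : ℕ, k ≤ j + 1 → γ - (k : ℝ) • α ∈ R := by
    intro k
    induction k using Nat.strong_induction_on with
    | _ k ih =>
      intro hk
      match k with
      | 0 => simpa using hγ
      | (k' + 1) =>
        have hk' : k' ≤ j := by omega
        have hmem : γ - (k' : ℝ) • α ∈ R := ih k' (by omega) (by omega)
        have hge : (k' : ℝ) * a ≤ c := by
          have : (k' : ℝ) ≤ (j : ℝ) := by exact_mod_cast hk'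
          nlinarith
        have hsplit : γ - ((k' : ℝ) + 1) • α = γ - (k' : ℝ) • α - α := by
          rw [add_smul, one_smul]; abel
        have hgoal : γ - ((k' + 1 : ℕ) : ℝ) • α = γ - (k' : ℝ) • α - α := by
          push_cast; rw [hsplit]
        rcases lt_or_eq_of_le hge with hlt | heq
        · have hd := (hax _ hmem _ hα).2.1 (by rw [hinn k']; linarith)
          rw [hgoal]; exact hd
        · -- boundary case : c = k' * a, so k' = j ≥ 1
          have hkj : k' = j := by
            have h1 : (j : ℝ) * a ≤ (k' : ℝ) * a := by rw [heq]; exact hja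
            have h2 : (j : ℝ) ≤ (k' : ℝ) := by nlinarith
            have h3 : j ≤ k' := by exact_mod_cast h2
            omega
          have hj1 : 1 ≤ j := by
            by_contra h
            have hj0 : j = 0 := by omega
            rw [hkj, hj0] at heq; push_cast at heq; nlinarith
          have hprev : γ - ((j - 1 : ℕ) : ℝ) • α ∈ R := by
            apply ih (j - 1) (by omega) (by omega)
          have hzero : ⟪γ - (k' : ℝ) • α, α⟫ = 0 := by rw [hinn k']; linarith
          have hequiv := (hax _ hmem _ hα).2.2 hzero
          have hplus : γ - (k' : ℝ) • α + α ∈ R := by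
            have he : γ - (k' : ℝ) • α + α = γ - ((j - 1 : ℕ) : ℝ) • α := by
              rw [hkj, Nat.cast_sub hj1]; push_cast
              rw [sub_smul, one_smul]; abel
            rw [he]; exact hprev
          have := hequiv.mp hplus
          rw [hgoal]; exact this
  -- step 2 : N ≤ j + 1
  have step2 : N ≤ j + 1 := by
    by_contra hcon
    push_neg at hcon
    have hmem : γ - ((j + 1 : ℕ) : ℝ) • α ∈ R := step1 (j + 1) le_rfl
    have hy : ((j + 2 : ℕ) : ℝ) • α ∈ R := hmult (j + 2) (by omega)
    have hinner2 : ⟪γ - ((j + 1 : ℕ) : ℝ) • α, ((j + 2 : ℕ) : ℝ) • α⟫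
        = ((j : ℝ) + 2) * (c - ((j : ℝ) + 1) * a) := by
      rw [inner_sub_left, real_inner_smul_right, real_inner_smul_right,
        real_inner_smul_left, ← hcdef, ← hadef]
      push_cast
      ring
    have hneg : ⟪γ - ((j + 1 : ℕ) : ℝ) • α, ((j + 2 : ℕ) : ℝ) • α⟫ < 0 := by
      rw [hinner2]
      have h1 : (0 : ℝ) < (j : ℝ) + 2 := by positivity
      nlinarith
    have hsum := (hax _ hmem _ hy).1 hneg
    apply hno
    have he : γ - ((j + 1 : ℕ) : ℝ) • α + ((j + 2 : ℕ) : ℝ) • α = γ + α := by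
      push_cast
      have : ((j : ℝ) + 2) • α - ((j : ℝ) + 1) • α = α := by
        rw [← sub_smul]; norm_num
      calc γ - ((j : ℝ) + 1) • α + ((j : ℝ) + 2) • α
          = γ + (((j : ℝ) + 2) • α - ((j : ℝ) + 1) • α) := by abel
      _ = γ + α := by rw [this]
    rw [he] at hsum; exact hsum
  refine ⟨step2, ?_⟩
  -- step 3 : the extended chain
  intro m hm
  rcases le_or_gt m (j + 1) with h | h
  · exact step1 m h
  · have hj4 : 4 ≤ j := by omega
    have hmN : N ≤ m := by omega
    have hklt : m - N < j := by omega
    have hkmem : γ - ((m - N : ℕ) : ℝ) • α ∈ R := step1 (m - N) (by omega)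
    have hstrict : ((m - N : ℕ) : ℝ) * a < c := by
      have h1 : ((m - N : ℕ) : ℝ) < (j : ℝ) := by exact_mod_cast hklt
      nlinarith
    have hy : ((N : ℕ) : ℝ) • α ∈ R := hmult N le_rfl
    have hinner3 : ⟪γ - ((m - N : ℕ) : ℝ) • α, ((N : ℕ) : ℝ) • α⟫
        = (N : ℝ) * (c - ((m - N : ℕ) : ℝ) * a) := by
      rw [inner_sub_left, real_inner_smul_right, real_inner_smul_right,
        real_inner_smul_left, ← hcdef, ← hadef]
      ring
    have hpos : 0 < ⟪γ - ((m - N : ℕ) : ℝ) • α, ((N : ℕ) : ℝ) • α⟫ := by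
      rw [hinner3]
      have h1 : (0 : ℝ) < (N : ℝ) := by positivity
      nlinarith
    have hd := (hax _ hkmem _ hy).2.1 hpos
    have he : γ - ((m - N : ℕ) : ℝ) • α - ((N : ℕ) : ℝ) • α = γ - (m : ℝ) • α := by
      rw [sub_sub, ← add_smul]
      congr 2
      have hnat : (m - N) + N = m := by omega
      exact_mod_cast congrArg (Nat.cast : ℕ → ℝ) hnat
    rw [he] at hd; exact hd

/-- A root which is lexicographically maximal for `(⟪·, w⟫, ⟪·, α⟫)` (with `w ⊥ α`)
is orthogonal to `α`. -/
private lemma lex_perp {R : Set V} (hax : GRSAx R) {α : V} (hα : α ∈ R)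
    (ha : 0 < ⟪α, α⟫) {N : ℕ} (hN : 5 ≤ N)
    (hmult : ∀ k : ℕ, k ≤ N → (k : ℝ) • α ∈ R)
    (hmax : ∀ m : ℕ, N < m → (m : ℝ) • α ∉ R)
    {w : V} (hw : ⟪α, w⟫ = 0)
    {τ : V} (hτ : τ ∈ R) (hM : 0 < ⟪τ, w⟫)
    (hub : ∀ γ ∈ R, ⟪γ, w⟫ ≤ ⟪τ, w⟫)
    (hlex : ∀ γ ∈ R, ⟪γ, w⟫ = ⟪τ, w⟫ → ⟪γ, α⟫ ≤ ⟪τ, α⟫) :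
    ⟪τ, α⟫ = 0 := by
  set a := ⟪α, α⟫ with hadef
  set c := ⟪τ, α⟫ with hcdef
  have hno : τ + α ∉ R := by
    intro h
    have h1 : ⟪τ + α, w⟫ = ⟪τ, w⟫ := by rw [inner_add_left, hw, add_zero]
    have h2 := hlex _ h h1
    have h3 : ⟪τ + α, α⟫ = c + a := by rw [inner_add_left, ← hcdef, ← hadef]
    rw [h3] at h2
    linarith
  rcases lt_trichotomy c 0 with hneg | hzero | hpos
  · exfalso
    exact hno ((hax τ hτ α hα).1 hneg)
  · exact hzero
  · exfalso
    obtain ⟨h2, h3⟩ := chain_lemma hax hα ha hN hmult hτ hpos hno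
    set j := Nat.floor (c / a) with hjdef
    have hkey : ∀ m : ℕ, N < m → m ≤ j + N - 1 → ⟪τ, τ⟫ - (m : ℝ) * c = 0 := by
      intro m hm1 hm2
      have hmem : τ - (m : ℝ) • α ∈ R := h3 m hm2
      have hinner : ⟪τ, τ - (m : ℝ) • α⟫ = ⟪τ, τ⟫ - (m : ℝ) * c := by
        simp [inner_sub_right, real_inner_smul_right, ← hcdef]
      rcases lt_trichotomy (⟪τ, τ⟫ - (m : ℝ) * c) 0 with hlt | heq | hgt
      · exfalso
        have hsum := (hax τ hτ _ hmem).1 (by rw [hinner]; exact hlt)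
        have hψ := hub _ hsum
        have he : ⟪τ + (τ - (m : ℝ) • α), w⟫ = 2 * ⟪τ, w⟫ := by
          simp [inner_add_left, inner_sub_left, real_inner_smul_left, hw]
          ring
        rw [he] at hψ
        linarith
      · exact heq
      · exfalso
        have hd := (hax τ hτ _ hmem).2.1 (by rw [hinner]; exact hgt)
        have he : τ - (τ - (m : ℝ) • α) = (m : ℝ) • α := by abel
        rw [he] at hd
        exact hmax m hm1 hd
    have hb1 : N < j + N - 2 := by omega
    have hb2 : j + N - 2 ≤ j + N - 1 := by omega
    have hk1 := hkey (j + N - 2) hb1 hb2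
    have hk2 := hkey (j + N - 1) (by omega) le_rfl
    have hcast : ((j + N - 1 : ℕ) : ℝ) = ((j + N - 2 : ℕ) : ℝ) + 1 := by
      have : j + N - 1 = (j + N - 2) + 1 := by omega
      rw [this]; push_cast; ring
    rw [hcast] at hk2
    nlinarith

/-- In an irreducible GRS of rank at least 2, `5α` is never a root for
nonzero `α ∈ R`. -/
theorem stmt16 (R : Set V) (hR : IsGRS R) (hirr : IsIrreducibleGRS R)
    (hdim : 2 ≤ Module.finrank ℝ V) :
    ∀ α ∈ R, α ≠ 0 → (5 : ℝ) • α ∉ R := by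
  obtain ⟨hne, hfin, hspan, hax⟩ := hR
  have hax' : GRSAx R := hax
  intro α hα hα0 h5
  have ha : 0 < ⟪α, α⟫ := inner_self_pos' hα0
  have h0 : (0 : V) ∈ R := by
    have := (hax' α hα α hα).2.1 ha
    simpa using this
  have hnegmem : ∀ γ ∈ R, -γ ∈ R := fun γ hγ => grs_neg_mem_s16 hax' h0 hγ
  -- the maximal multiple N of α
  set S : Set ℕ := {n : ℕ | (n : ℝ) • α ∈ R ∧ n ≠ 0} with hSdef
  have hSfin : S.Finite := by
    have hinj : Function.Injective (fun n : ℕ => (n : ℝ) • α) := by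
      intro m n h
      have h2 : (m : ℝ) = (n : ℝ) := smul_left_injective ℝ hα0 h
      exact_mod_cast h2
    exact Set.Finite.subset (hfin.preimage hinj.injOn) (fun n hn => hn.1)
  have h5S : 5 ∈ S := by
    refine ⟨?_, by norm_num⟩
    have hc : ((5 : ℕ) : ℝ) = (5 : ℝ) := by norm_num
    rw [hc]; exact h5
  have hbdd : BddAbove S := hSfin.bddAbove
  set N := sSup S with hNdef
  have hNS : N ∈ S := Nat.sSup_mem ⟨5, h5S⟩ hbdd
  have hN5 : 5 ≤ N := le_csSup hbdd h5S
  have hmax : ∀ m : ℕ, N < m → (m : ℝ) • α ∉ R := by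
    intro m hm hmem
    have : m ≤ N := le_csSup hbdd ⟨hmem, by omega⟩
    omega
  have hmult : ∀ k : ℕ, k ≤ N → (k : ℝ) • α ∈ R := by
    have hdown : ∀ d : ℕ, ((N - d : ℕ) : ℝ) • α ∈ R := by
      intro d
      induction d with
      | zero => simpa using hNS.1
      | succ d ih =>
        rcases Nat.eq_zero_or_pos (N - d) with h | h
        · have : N - (d + 1) = 0 := by omega
          rw [this]; simpa using h0
        · have hinner : 0 < ⟪((N - d : ℕ) : ℝ) • α, α⟫ := by
            rw [real_inner_smul_left]
            have : (0 : ℝ) < ((N - d : ℕ) : ℝ) := by exact_mod_cast h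
            nlinarith
          have hd := (hax' _ ih _ hα).2.1 hinner
          have he : ((N - d : ℕ) : ℝ) • α - α = ((N - (d + 1) : ℕ) : ℝ) • α := by
            have h1 : ((N - d : ℕ) : ℝ) = ((N - (d + 1) : ℕ) : ℝ) + 1 := by
              have : N - d = (N - (d + 1)) + 1 := by omega
              rw [this]; push_cast; ring
            rw [h1, add_smul, one_smul]; abel
          rw [he] at hd; exact hd
    intro k hk
    have := hdown (N - k)
    have he : N - (N - k) = k := by omega
    rwa [he] at this
  -- existence of a root neither proportional nor orthogonal to α
  have hexists : ∃ β' ∈ R, ¬(∃ t : ℝ, β' = t • α) ∧ ⟪β', α⟫ ≠ 0 := by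
    by_contra hcon
    push_neg at hcon
    set R₁ : Set V := {γ ∈ R | ∃ t : ℝ, γ = t • α} with hR₁def
    set R₂ : Set V := {γ ∈ R | ⟪γ, α⟫ = 0} with hR₂def
    have hcover : R = R₁ ∪ R₂ := by
      ext x
      constructor
      · intro hx
        by_cases hP : ∃ t : ℝ, x = t • α
        · exact Or.inl ⟨hx, hP⟩
        · exact Or.inr ⟨hx, hcon x hx (not_exists.mp hP)⟩
      · rintro (hx | hx) <;> exact hx.1
    have horth : ∀ x ∈ R₁, ∀ y ∈ R₂, ⟪x, y⟫ = 0 := by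
      rintro x ⟨hx, t, rfl⟩ y ⟨hy, hy0⟩
      rw [real_inner_smul_left]
      rw [real_inner_comm] at hy0
      rw [hy0]; ring
    rcases hirr R₁ R₂ hcover horth with h1 | h2
    · have : α ∈ R₁ := ⟨hα, 1, (one_smul ℝ α).symm⟩
      exact hα0 (h1 this)
    · have hsub : R ⊆ (Submodule.span ℝ {α} : Submodule ℝ V) := by
        intro x hx
        rcases (hcover ▸ hx) with hx1 | hx2
        · obtain ⟨_, t, rfl⟩ := hx1
          exact Submodule.smul_mem _ t (Submodule.mem_span_singleton_self α)
        · have hx0 : x = 0 := h2 hx2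
          rw [hx0]; exact Submodule.zero_mem _
      have hle : (⊤ : Submodule ℝ V) ≤ Submodule.span ℝ {α} := by
        rw [← hspan]
        exact Submodule.span_le.mpr hsub
      have htop : Submodule.span ℝ {α} = ⊤ := top_le_iff.mp hle
      have hrank : Module.finrank ℝ V = 1 := by
        have h1 : Module.finrank ℝ ↥(Submodule.span ℝ ({α} : Set V)) = 1 :=
          finrank_span_singleton hα0
        rw [htop] at h1
        rwa [finrank_top] at h1
      omega
  obtain ⟨β', hβ'R, hβ'ind, hβ'c⟩ := hexists
  -- the root β₀ maximizing ⟪·, α⟫ among non-multiples of α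
  set R' : Set V := {γ ∈ R | ¬∃ t : ℝ, γ = t • α} with hR'def
  have hR'fin : R'.Finite := hfin.subset (fun x hx => hx.1)
  have hR'ne : R'.Nonempty := ⟨β', ⟨hβ'R, hβ'ind⟩⟩
  obtain ⟨β₀, hβ₀R', hβ₀max⟩ := Set.exists_max_image R' (fun γ => ⟪γ, α⟫) hR'fin hR'ne
  obtain ⟨hβ₀R, hβ₀ind⟩ := hβ₀R'
  set c₀ := ⟪β₀, α⟫ with hc₀def
  have hc₀pos : 0 < c₀ := by
    rcases hβ'c.lt_or_gt with hlt | hgt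
    · have hnb : -β' ∈ R' := by
        refine ⟨hnegmem _ hβ'R, ?_⟩
        rintro ⟨t, ht⟩
        exact hβ'ind ⟨-t, by rw [neg_smul, ← ht]; simp⟩
      have h2 := hβ₀max _ hnb
      rw [inner_neg_left] at h2
      linarith
    · have h2 := hβ₀max β' ⟨hβ'R, hβ'ind⟩
      linarith
  have hnoβ₀ : β₀ + α ∉ R := by
    intro h
    have hind : ¬∃ t : ℝ, β₀ + α = t • α := by
      rintro ⟨t, ht⟩
      exact hβ₀ind ⟨t - 1, by rw [sub_smul, one_smul, ← ht]; abel⟩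
    have := hβ₀max _ ⟨h, hind⟩
    simp only [inner_add_left, ← hc₀def] at this
    linarith
  obtain ⟨hj₀N, hq⟩ := chain_lemma hax' hα ha hN5 hmult hβ₀R hc₀pos hnoβ₀
  set j₀ := Nat.floor (c₀ / ⟪α, α⟫) with hj₀def
  -- the orthogonal part w of β₀
  set w : V := β₀ - (c₀ / ⟪α, α⟫) • α with hwdef
  have hwα : ⟪α, w⟫ = 0 := by
    rw [hwdef]
    rw [inner_sub_right, real_inner_smul_right]
    rw [real_inner_comm β₀ α]
    rw [← hc₀def]
    field_simp
    ring
  have hw0 : w ≠ 0 := by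
    intro h
    apply hβ₀ind
    exact ⟨c₀ / ⟪α, α⟫, by rw [← sub_eq_zero]; exact h⟩
  set W₀ := ⟪β₀, w⟫ with hW₀def
  have hW₀eq : ⟪w, w⟫ = W₀ := by
    nth_rewrite 1 [hwdef]
    rw [inner_sub_left, real_inner_smul_left, hwα, ← hW₀def]
    ring
  have hW₀pos : 0 < W₀ := by rw [← hW₀eq]; exact inner_self_pos' hw0
  -- maximum of ψ = ⟪·, w⟫ over R
  obtain ⟨τs, hτsR, hτsmax⟩ := Set.exists_max_image R (fun γ => ⟪γ, w⟫) hfin hne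
  set M := ⟪τs, w⟫ with hMdef
  have hMW : W₀ ≤ M := hτsmax β₀ hβ₀R
  have hMpos : 0 < M := lt_of_lt_of_le hW₀pos hMW
  set P : Set V := {γ ∈ R | ⟪γ, w⟫ = M} with hPdef
  have hPfin : P.Finite := hfin.subset (fun x hx => hx.1)
  have hPne : P.Nonempty := ⟨τs, hτsR, rfl⟩
  obtain ⟨τp, hτpP, hτpmax⟩ := Set.exists_max_image P (fun γ => ⟪γ, α⟫) hPfin hPne
  obtain ⟨τm, hτmP, hτmmin⟩ := Set.exists_min_image P (fun γ => ⟪γ, α⟫) hPfin hPne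
  -- every ψ-maximal root is orthogonal to α
  have hτpα : ⟪τp, α⟫ = 0 := by
    apply lex_perp hax' hα ha hN5 hmult hmax hwα hτpP.1
    · rw [hτpP.2]; exact hMpos
    · intro γ hγ
      rw [hτpP.2]; exact hτsmax γ hγ
    · intro γ hγ hγM
      exact hτpmax γ ⟨hγ, by rw [hγM, hτpP.2]⟩
  have hτmα : ⟪τm, α⟫ = 0 := by
    have hαneg : -α ∈ R := hnegmem α hα
    have haneg : 0 < ⟪-α, -α⟫ := by simpa using ha
    have hmultneg : ∀ k : ℕ, k ≤ N → (k : ℝ) • (-α) ∈ R := by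
      intro k hk
      rw [smul_neg]
      exact hnegmem _ (hmult k hk)
    have hmaxneg : ∀ m : ℕ, N < m → (m : ℝ) • (-α) ∉ R := by
      intro m hm hmem
      apply hmax m hm
      have := hnegmem _ hmem
      simpa using this
    have hwneg : ⟪-α, w⟫ = 0 := by simp [hwα]
    have h := lex_perp hax' hαneg haneg hN5 hmultneg hmaxneg hwneg hτmP.1
      (by rw [hτmP.2]; exact hMpos)
      (by intro γ hγ; rw [hτmP.2]; exact hτsmax γ hγ)
      (by
        intro γ hγ hγM
        simp only [inner_neg_right]
        have := hτmmin γ ⟨hγ, by rw [hγM, hτmP.2]⟩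
        linarith)
    simpa using h
  have hperp : ∀ γ ∈ R, ⟪γ, w⟫ = M → ⟪γ, α⟫ = 0 := by
    intro γ hγ hγM
    have h1 : ⟪γ, α⟫ ≤ ⟪τp, α⟫ := hτpmax γ ⟨hγ, hγM⟩
    have h2 : ⟪τm, α⟫ ≤ ⟪γ, α⟫ := hτmmin γ ⟨hγ, hγM⟩
    rw [hτpα] at h1
    rw [hτmα] at h2
    linarith
  -- τ := τp is a ψ-max root orthogonal to α
  set τ := τp with hτdef
  have hτR : τ ∈ R := hτpP.1
  have hτM : ⟪τ, w⟫ = M := hτpP.2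
  have hτα : ⟪τ, α⟫ = 0 := hτpα
  have hτβ₀ : ⟪τ, β₀⟫ = M := by
    have hbe : β₀ = w + (c₀ / ⟪α, α⟫) • α := by rw [hwdef]; abel
    rw [hbe, inner_add_right, real_inner_smul_right, hτα, hτM]
    ring
  -- the family ρ_l = τ - β₀ + l • α
  have hρ : ∀ l : ℕ, l ≤ j₀ + N - 1 → τ - β₀ + (l : ℝ) • α ∈ R := by
    intro l hl
    have hql := hq l hl
    have hinner : ⟪τ, β₀ - (l : ℝ) • α⟫ = M := by
      rw [inner_sub_right, real_inner_smul_right, hτβ₀, hτα]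
      ring
    have hd := (hax' τ hτR _ hql).2.1 (by rw [hinner]; exact hMpos)
    have he : τ - (β₀ - (l : ℝ) • α) = τ - β₀ + (l : ℝ) • α := by abel
    rwa [he] at hd
  set L := j₀ + N - 1 with hLdef
  have hLN : N + 1 < L := by omega
  have hρ0 : τ - β₀ ∈ R := by
    have := hρ 0 (by omega)
    simpa using this
  -- Step 8 : M ≤ 2 W₀
  have hβ₀w : ⟪β₀, w⟫ = W₀ := rfl
  have hβ₀α : ⟪β₀, α⟫ = c₀ := rfl
  have hpair : ∀ l : ℕ, N < l → l ≤ L → ⟪τ - β₀, τ - β₀⟫ - (l : ℝ) * c₀ = 0 ∨ M ≤ 2 * W₀ := by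
    intro l h1 h2
    have hρl := hρ l h2
    have hx : ⟪τ - β₀, α⟫ = -c₀ := by
      rw [inner_sub_left, hτα, hβ₀α]; ring
    have hy : ⟪τ - β₀, w⟫ = M - W₀ := by
      rw [inner_sub_left, hτM, hβ₀w]
    have hinner : ⟪τ - β₀, τ - β₀ + (l : ℝ) • α⟫ = ⟪τ - β₀, τ - β₀⟫ - (l : ℝ) * c₀ := by
      rw [inner_add_right, real_inner_smul_right, hx]
      ring
    rcases lt_trichotomy (⟪τ - β₀, τ - β₀⟫ - (l : ℝ) * c₀) 0 with hlt | heq | hgt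
    · right
      have hsum := (hax' _ hρ0 _ hρl).1 (by rw [hinner]; exact hlt)
      have hψ := hτsmax _ hsum
      have he : ⟪τ - β₀ + (τ - β₀ + (l : ℝ) • α), w⟫ = 2 * M - 2 * W₀ := by
        rw [inner_add_left, inner_add_left, real_inner_smul_left, hy, hwα]
        ring
      rw [he] at hψ
      linarith
    · left; exact heq
    · exfalso
      have hd := (hax' _ hρ0 _ hρl).2.1 (by rw [hinner]; exact hgt)
      have he : τ - β₀ - (τ - β₀ + (l : ℝ) • α) = -((l : ℝ) • α) := by abel
      rw [he] at hd
      have := hnegmem _ hd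
      rw [neg_neg] at this
      exact hmax l h1 this
  have hstep8 : M ≤ 2 * W₀ := by
    rcases hpair (L - 1) (by omega) (by omega) with h1 | h1
    · rcases hpair L (by omega) le_rfl with h2 | h2
      · exfalso
        have hcast : ((L : ℕ) : ℝ) = ((L - 1 : ℕ) : ℝ) + 1 := by
          have : L = (L - 1) + 1 := by omega
          rw [this]; push_cast; ring
        rw [hcast] at h2
        nlinarith
      · exact h2
    · exact h1
  -- Step 9 : two roots 2β₀ - m α
  have hζ : ∀ m : ℕ, N < m → m ≤ L → ⟪β₀, β₀⟫ - (m : ℝ) * c₀ = 0 ∨ (2 : ℝ) • β₀ - (m : ℝ) • α ∈ R := by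
    intro m h1 h2
    have hqm := hq m h2
    have hinner : ⟪β₀, β₀ - (m : ℝ) • α⟫ = ⟪β₀, β₀⟫ - (m : ℝ) * c₀ := by
      rw [inner_sub_right, real_inner_smul_right, hβ₀α]
    rcases lt_trichotomy (⟪β₀, β₀⟫ - (m : ℝ) * c₀) 0 with hlt | heq | hgt
    · right
      have hsum := (hax' _ hβ₀R _ hqm).1 (by rw [hinner]; exact hlt)
      have he : β₀ + (β₀ - (m : ℝ) • α) = (2 : ℝ) • β₀ - (m : ℝ) • α := by
        rw [two_smul]; abel
      rwa [he] at hsum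
    · left; exact heq
    · exfalso
      have hd := (hax' _ hβ₀R _ hqm).2.1 (by rw [hinner]; exact hgt)
      have he : β₀ - (β₀ - (m : ℝ) • α) = (m : ℝ) • α := by abel
      rw [he] at hd
      exact hmax m h1 hd
  have hfinal : ∀ m : ℕ, (2 : ℝ) • β₀ - (m : ℝ) • α ∈ R → 2 * c₀ = (m : ℝ) * ⟪α, α⟫ := by
    intro m hm
    have hψ : ⟪(2 : ℝ) • β₀ - (m : ℝ) • α, w⟫ = 2 * W₀ := by
      rw [inner_sub_left, real_inner_smul_left, real_inner_smul_left, hβ₀w, hwα]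
      ring
    have h2W : 2 * W₀ ≤ M := by
      have h3 := hτsmax _ hm
      rw [hψ] at h3
      exact h3
    have hMeq : M = 2 * W₀ := le_antisymm hstep8 h2W
    have hzero := hperp _ hm (by rw [hψ, hMeq])
    rw [inner_sub_left, real_inner_smul_left, real_inner_smul_left, hβ₀α] at hzero
    linarith
  -- conclude : among m ∈ {L-2, L-1, L}, at most one "zero" case,
  -- and any two "membership" cases contradict each other
  have hzz : ∀ m₁ m₂ : ℕ, m₁ < m₂ →
      ⟪β₀, β₀⟫ - (m₁ : ℝ) * c₀ = 0 → ⟪β₀, β₀⟫ - (m₂ : ℝ) * c₀ = 0 → False := by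
    intro m₁ m₂ hlt h1 h2
    have : ((m₁ : ℝ)) < (m₂ : ℝ) := by exact_mod_cast hlt
    nlinarith
  have hmm : ∀ m₁ m₂ : ℕ, m₁ < m₂ →
      (2 : ℝ) • β₀ - (m₁ : ℝ) • α ∈ R → (2 : ℝ) • β₀ - (m₂ : ℝ) • α ∈ R → False := by
    intro m₁ m₂ hlt h1 h2
    have e1 := hfinal m₁ h1
    have e2 := hfinal m₂ h2
    have : ((m₁ : ℝ)) < (m₂ : ℝ) := by exact_mod_cast hlt
    nlinarith
  have hL2 : N < L - 2 := by omega
  rcases hζ (L - 2) hL2 (by omega) with z1 | m1 <;>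
    rcases hζ (L - 1) (by omega) (by omega) with z2 | m2 <;>
    rcases hζ L (by omega) le_rfl with z3 | m3
  · exact hzz (L - 2) (L - 1) (by omega) z1 z2
  · exact hzz (L - 2) (L - 1) (by omega) z1 z2
  · exact hzz (L - 2) L (by omega) z1 z3
  · exact hmm (L - 1) L (by omega) m2 m3
  · exact hzz (L - 1) L (by omega) z2 z3
  · exact hmm (L - 2) L (by omega) m1 m3
  · exact hmm (L - 2) (L - 1) (by omega) m1 m2
  · exact hmm (L - 2) (L - 1) (by omega) m1 m2
end

section
/- Let (R,V) be an irreducible generalized root system with dim V = 2, and suppose there is a primitive root x ∈ R with x, 2x, 3x, 4x ∈ R. Then there exists y ∈ V with ⟨x,y⟩ = 0 and ‖y‖² = 6‖x‖² such that R = {0, ±x, ±2x, ±3x, ±4x, ±y, ±y ± x, ±y ± 2x, ±y ± 3x, ±2y}. -/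
open scoped RealInnerProductSpace

variable {V : Type*} [NormedAddCommGroup V] [InnerProductSpace ℝ V] [FiniteDimensional ℝ V]

structure GrsData (a : ℝ) (M : ℝ → ℝ → Prop) : Prop where
  ha : 0 < a
  hfin : {p : ℝ × ℝ | M p.1 p.2}.Finite
  hneg : ∀ t μ, M t μ → M (-t) (-μ)
  h0 : M 0 0
  h1 : M 1 0
  h2' : M 2 0
  h3' : M 3 0
  h4' : M 4 0
  hax : ∀ t μ s ν, M t μ → M s ν →
    (t*s*a + μ*ν < 0 → M (t+s) (μ+ν)) ∧
    (0 < t*s*a + μ*ν → M (t-s) (μ-ν)) ∧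
    (t*s*a + μ*ν = 0 → (M (t+s) (μ+ν) ↔ M (t-s) (μ-ν)))

namespace GrsData

variable {a : ℝ} {M : ℝ → ℝ → Prop}

lemma sub (D : GrsData a M) {t μ s ν : ℝ} (h : M t μ) (h' : M s ν) (hpos : 0 < t*s*a + μ*ν) :
    M (t-s) (μ-ν) := (D.hax t μ s ν h h').2.1 hpos

lemma add (D : GrsData a M) {t μ s ν : ℝ} (h : M t μ) (h' : M s ν) (hneg : t*s*a + μ*ν < 0) :
    M (t+s) (μ+ν) := (D.hax t μ s ν h h').1 hneg

lemma iff0 (D : GrsData a M) {t μ s ν : ℝ} (h : M t μ) (h' : M s ν) (hz : t*s*a + μ*ν = 0) :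
    M (t+s) (μ+ν) ↔ M (t-s) (μ-ν) := (D.hax t μ s ν h h').2.2 hz

lemma subline (D : GrsData a M) {t μ s : ℝ} (h : M t μ) (hs : M s 0) (hpos : 0 < t*s) : M (t-s) μ := by
  have := D.sub h hs (by nlinarith [D.ha])
  simpa using this

lemma addline (D : GrsData a M) {t μ s : ℝ} (h : M t μ) (hs : M s 0) (hneg : t*s < 0) : M (t+s) μ := by
  have := D.add h hs (by nlinarith [D.ha])
  simpa using this

lemma iffline (D : GrsData a M) {μ k : ℝ} (h : M 0 μ) (hk : M k 0) : M k μ ↔ M (-k) μ := by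
  have := D.iff0 h hk (by ring)
  simpa using this

lemma desc (D : GrsData a M) : ∀ (k : ℕ) {t μ}, M t μ → (k:ℝ) < t + 1 → M (t-(k:ℝ)) μ := by
  intro k
  induction k with
  | zero => intro t μ h _; simpa using h
  | succ n ih =>
    intro t μ h hk
    push_cast at hk ⊢
    have h1 : (n:ℝ) < t := by linarith
    have h2 : M (t - n) μ := ih h (by linarith)
    have h3 : M (t - n - 1) μ := D.subline h2 D.h1 (by push_cast; nlinarith [h1])
    have : t - n - 1 = t - (n+1) := by ring
    rwa [this] at h3

lemma asc (D : GrsData a M) : ∀ (k : ℕ) {t μ}, M t μ → (k:ℝ) < 1 - t → M (t+(k:ℝ)) μ := by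
  intro k
  induction k with
  | zero => intro t μ h _; simpa using h
  | succ n ih =>
    intro t μ h hk
    push_cast at hk ⊢
    have h2 : M (t + n) μ := ih h (by linarith)
    have hm1 : M (-1) 0 := by simpa using D.hneg 1 0 D.h1
    have h3 : M (t + n + 1) μ := by
      have := D.subline h2 hm1 (by nlinarith)
      simpa using this
    have : t + n + 1 = t + (n+1) := by ring
    rwa [this] at h3

lemma levfin (D : GrsData a M) (μ : ℝ) : {t | M t μ}.Finite := by
  have : {t | M t μ} = (fun t => ((t, μ) : ℝ × ℝ)) ⁻¹' {p : ℝ × ℝ | M p.1 p.2} := by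
    ext t; simp
  rw [this]
  apply Set.Finite.preimage _ D.hfin
  intro s _ s' _ h
  simpa using congrArg Prod.fst h

lemma exists_max (D : GrsData a M) (μ : ℝ) (hne : ∃ t, M t μ) :
    ∃ u, M u μ ∧ ∀ t, M t μ → t ≤ u := by
  obtain ⟨u, hu, hmax⟩ := Set.exists_max_image {t | M t μ} id (D.levfin μ) hne
  exact ⟨u, hu, hmax⟩

lemma exists_min (D : GrsData a M) (μ : ℝ) (hne : ∃ t, M t μ) :
    ∃ e, M e μ ∧ ∀ t, M t μ → e ≤ t := by
  obtain ⟨e, he, hmin⟩ := Set.exists_min_image {t | M t μ} id (D.levfin μ) hne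
  exact ⟨e, he, hmin⟩

lemma line (D : GrsData a M)
    (hprim : ∀ m : ℝ, M m 0 → ∀ j : ℕ, (1:ℝ) = (j+1)*m → j = 0) :
    ∃ N : ℝ, 4 ≤ N ∧ M N 0 ∧ (∃ n : ℕ, N = n) ∧
      (∀ t, M t 0 → (∃ k : ℤ, t = k) ∧ |t| ≤ N) ∧
      (∀ k : ℤ, |(k:ℝ)| ≤ N → M (k:ℝ) 0) := by
  -- minimal positive element of the line
  have hPfin : {t | M t 0 ∧ 0 < t}.Finite := (D.levfin 0).subset (fun t ht => ht.1)
  obtain ⟨m, hm, hmin⟩ := Set.exists_min_image {t | M t 0 ∧ 0 < t} id hPfin ⟨1, D.h1, one_pos⟩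
  obtain ⟨hm0, hmpos⟩ : M m 0 ∧ 0 < m := hm
  have hm1 : m ≤ 1 := hmin 1 ⟨D.h1, one_pos⟩
  -- every positive element of the line is a positive multiple of m
  have haux : ∀ n : ℕ, ∀ t, M t 0 → 0 < t → t ≤ n*m → ∃ j : ℕ, t = (j+1)*m := by
    intro n
    induction n with
    | zero => intro t _ ht hle; simp at hle; nlinarith
    | succ n ih =>
      intro t ht htpos hle
      have hmle : m ≤ t := hmin t ⟨ht, htpos⟩
      rcases eq_or_lt_of_le hmle with heq | hlt
      · exact ⟨0, by rw [← heq]; ring⟩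
      · have hsub : M (t - m) 0 := by
          have := D.subline ht hm0 (by nlinarith)
          simpa using this
        have hpos2 : 0 < t - m := by linarith
        obtain ⟨j, hj⟩ := ih (t-m) hsub hpos2 (by push_cast at hle ⊢; nlinarith)
        exact ⟨j+1, by push_cast; linarith [hj]⟩
  have hmult : ∀ t, M t 0 → 0 < t → ∃ j : ℕ, t = (j+1)*m := by
    intro t ht htpos
    obtain ⟨n, hn⟩ := exists_nat_ge (t/m)
    exact haux n t ht htpos (by rw [div_le_iff₀ hmpos] at hn; linarith)
  -- m = 1
  obtain ⟨j1, hj1⟩ := hmult 1 D.h1 one_pos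
  have hj10 : j1 = 0 := hprim m hm0 j1 hj1
  have hmeq : m = 1 := by rw [hj10] at hj1; push_cast at hj1; linarith
  rw [hmeq] at hmult
  -- the maximum N
  obtain ⟨N, hN0, hNmax⟩ := D.exists_max 0 ⟨1, D.h1⟩
  have hN4 : 4 ≤ N := hNmax 4 D.h4'
  obtain ⟨jN, hjN⟩ := hmult N hN0 (by linarith)
  refine ⟨N, hN4, hN0, ⟨jN+1, by push_cast; linarith [hjN]⟩, ?_, ?_⟩
  · intro t ht
    rcases lt_trichotomy t 0 with hneg | hzero | hpos
    · have hnegmem : M (-t) 0 := by simpa using D.hneg t 0 ht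
      obtain ⟨j, hj⟩ := hmult (-t) hnegmem (by linarith)
      constructor
      · exact ⟨-(j+1), by push_cast; linarith [hj]⟩
      · rw [abs_of_neg hneg]; exact hNmax (-t) hnegmem
    · subst hzero; exact ⟨⟨0, by norm_num⟩, by rw [abs_zero]; linarith⟩
    · obtain ⟨j, hj⟩ := hmult t ht hpos
      exact ⟨⟨j+1, by push_cast; linarith [hj]⟩, by rw [abs_of_pos hpos]; exact hNmax t ht⟩
  · -- downward closure
    obtain ⟨n, hn⟩ : ∃ n : ℕ, N = n := ⟨jN+1, by push_cast; linarith [hjN]⟩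
    have hdown : ∀ k : ℤ, 0 ≤ k → (k:ℝ) ≤ N → M (k:ℝ) 0 := by
      intro k hk0 hkN
      have hkcast : ((k.toNat : ℕ) : ℝ) = (k:ℝ) := by
        norm_cast; exact Int.toNat_of_nonneg hk0
      have hkn : k.toNat ≤ n := by
        have : (k:ℝ) ≤ (n:ℝ) := by rw [← hn]; exact hkN
        have : k ≤ (n:ℤ) := by exact_mod_cast this
        omega
      have hdesc := D.desc (n - k.toNat) hN0
        (by rw [hn]; push_cast [Nat.cast_sub hkn]; linarith [hkcast, hkN, (by positivity : (0:ℝ) ≤ ((k.toNat:ℕ):ℝ))])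
      have heq : N - ((n - k.toNat : ℕ):ℝ) = (k:ℝ) := by
        rw [hn]; push_cast [Nat.cast_sub hkn]; linarith [hkcast]
      rwa [heq] at hdesc
    intro k hkabs
    rcases le_or_gt 0 k with hk0 | hk0
    · exact hdown k hk0 (by rwa [abs_of_nonneg (by exact_mod_cast hk0 : (0:ℝ) ≤ (k:ℝ))] at hkabs)
    · have : M ((-k : ℤ):ℝ) 0 := by
        apply hdown (-k) (by omega)
        push_cast
        rw [abs_of_neg (by exact_mod_cast hk0 : ((k:ℤ):ℝ) < 0)] at hkabs
        linarith
      have := D.hneg _ _ this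
      push_cast at this ⊢
      simpa using this

lemma struct (D : GrsData a M) {N : ℝ} (hN4 : 4 ≤ N) (hNmem : M N 0)
    (hLint : ∀ t, M t 0 → (∃ k : ℤ, t = k) ∧ |t| ≤ N)
    (μ : ℝ) (hμ : μ ≠ 0) (hne : ∃ t, M t μ) :
    ∃ u e, M u μ ∧ M e μ ∧ (∀ t, M t μ → t ≤ u) ∧ (∀ t, M t μ → e ≤ t) ∧ 0 ≤ u ∧ e ≤ 0 ∧
      (∀ t, M t μ → ∃ k : ℤ, u - t = (k:ℝ)) ∧
      (∀ k : ℕ, (k:ℝ) ≤ u - e → M (u - (k:ℝ)) μ) ∧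
      (0 < u → 2*N - 2 ≤ u - e) ∧
      (e < 0 → 0 < u) := by
  have hμ2 : 0 < μ*μ := mul_self_pos.2 hμ
  have hmN : M (-N) 0 := by simpa using D.hneg N 0 hNmem
  obtain ⟨u, hu, humax⟩ := D.exists_max μ hne
  obtain ⟨e, he, hemin⟩ := D.exists_min μ hne
  have hm1 : M (-1) 0 := by simpa using D.hneg 1 0 D.h1
  have h0u : 0 ≤ u := by
    by_contra hc
    push_neg at hc
    have h := D.subline hu hm1 (by nlinarith)
    have h2 := humax _ h
    linarith
  have he0 : e ≤ 0 := by
    by_contra hc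
    push_neg at hc
    have h := D.subline he D.h1 (by nlinarith)
    have h2 := hemin _ h
    linarith
  have congΔ : ∀ t s, M t μ → M s μ → 0 ≤ t*s → ∃ k : ℤ, t - s = (k:ℝ) := by
    intro t s ht hs hts
    have h := D.sub ht hs (by nlinarith [D.ha])
    rw [sub_self] at h
    exact (hLint _ h).1
  -- the representative r = u - ⌊u⌋
  have hfu : ((⌊u⌋.toNat:ℕ):ℝ) = ((⌊u⌋:ℤ):ℝ) := by
    norm_cast; exact Int.toNat_of_nonneg (Int.floor_nonneg.2 h0u)
  have hr : M (u - ((⌊u⌋:ℤ):ℝ)) μ := by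
    have h := D.desc ⌊u⌋.toNat hu (by rw [hfu]; linarith [Int.floor_le u])
    rwa [hfu] at h
  have hr0 : 0 ≤ u - ((⌊u⌋:ℤ):ℝ) := by linarith [Int.floor_le u]
  have hr1 : u - ((⌊u⌋:ℤ):ℝ) < 1 := by linarith [Int.lt_floor_add_one u]
  have residue : ∀ t, M t μ → ∃ k : ℤ, u - t = (k:ℝ) := by
    intro t ht
    rcases le_or_gt 0 t with h0t | h0t
    · exact congΔ u t hu ht (by nlinarith)
    · rcases eq_or_lt_of_le hr0 with hreq | hrlt
      · obtain ⟨k, hk⟩ := congΔ (u - ((⌊u⌋:ℤ):ℝ)) t hr ht (by rw [← hreq]; nlinarith)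
        exact ⟨⌊u⌋ + k, by push_cast; linarith⟩
      · have hr1m : M (u - ((⌊u⌋:ℤ):ℝ) - 1) μ := D.subline hr D.h1 (by nlinarith)
        obtain ⟨k, hk⟩ := congΔ (u - ((⌊u⌋:ℤ):ℝ) - 1) t hr1m ht (by nlinarith)
        exact ⟨⌊u⌋ + 1 + k, by push_cast; linarith⟩
  obtain ⟨K, hK0, hKeq⟩ : ∃ K : ℤ, 0 ≤ K ∧ u - e = (K:ℝ) := by
    obtain ⟨k, hk⟩ := residue e he
    refine ⟨k, ?_, hk⟩
    have : (0:ℝ) ≤ (k:ℝ) := by linarith [hemin u hu]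
    exact_mod_cast this
  have cover : ∀ k : ℕ, (k:ℝ) ≤ u - e → M (u - (k:ℝ)) μ := by
    intro k hk
    rcases lt_or_ge (-1) (u - (k:ℝ)) with hgt | hle
    · exact D.desc k hu (by linarith)
    · have hkK : (k:ℤ) ≤ K := by
        have : ((k:ℕ):ℝ) ≤ (K:ℝ) := by linarith [hKeq]
        exact_mod_cast this
      have hj : (((K - (k:ℤ)).toNat:ℕ) : ℝ) = (K:ℝ) - (k:ℝ) := by
        have h' : ((K - (k:ℤ)).toNat : ℤ) = K - (k:ℤ) := Int.toNat_of_nonneg (by omega)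
        have h'' : (((K - (k:ℤ)).toNat:ℕ):ℝ) = ((K - (k:ℤ) : ℤ):ℝ) := by
          exact_mod_cast congrArg (fun z : ℤ => (z:ℝ)) h'
        rw [h'']; push_cast; ring
      have h := D.asc (K - (k:ℤ)).toNat he (by rw [hj]; linarith)
      rw [hj] at h
      have heq2 : e + ((K:ℝ) - (k:ℝ)) = u - (k:ℝ) := by linarith
      rwa [heq2] at h
  refine ⟨u, e, hu, he, humax, hemin, h0u, he0, residue, cover, ?_, ?_⟩
  · -- big : 0 < u → 2N-2 ≤ u - e
    intro hupos
    rcases eq_or_lt_of_le hr0 with hreq | hrlt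
    · -- u = ⌊u⌋ is a positive integer
      have hueq : u = ((⌊u⌋:ℤ):ℝ) := by linarith
      have hfl1 : 1 ≤ ⌊u⌋ := by
        have : (0:ℝ) < ((⌊u⌋:ℤ):ℝ) := by linarith
        exact_mod_cast this
      have h1mem : M 1 μ := by
        have hc1 : (((⌊u⌋ - 1).toNat:ℕ):ℝ) = u - 1 := by
          have h' : ((⌊u⌋ - 1).toNat : ℤ) = ⌊u⌋ - 1 := Int.toNat_of_nonneg (by omega)
          have h'' : (((⌊u⌋ - 1).toNat:ℕ):ℝ) = ((⌊u⌋ - 1 : ℤ):ℝ) := by exact_mod_cast congrArg (fun z : ℤ => (z:ℝ)) h'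
          rw [h'']; push_cast; linarith
        have h := cover (⌊u⌋-1).toNat (by rw [hc1]; linarith)
        rw [hc1] at h
        have heqq : u - (u - 1) = 1 := by ring
        rwa [heqq] at h
      have h1N : M (1 - N) μ := by
        have h := D.subline h1mem hNmem (by nlinarith)
        simpa using h
      have heN : e ≤ 1 - N := hemin _ h1N
      have hm1mem : M (-1) μ := by
        have hc1 : (((⌊u⌋ + 1).toNat:ℕ):ℝ) = u + 1 := by
          have h' : ((⌊u⌋ + 1).toNat : ℤ) = ⌊u⌋ + 1 := Int.toNat_of_nonneg (by omega)
          have h'' : (((⌊u⌋ + 1).toNat:ℕ):ℝ) = ((⌊u⌋ + 1 : ℤ):ℝ) := by exact_mod_cast congrArg (fun z : ℤ => (z:ℝ)) h'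
          rw [h'']; push_cast; linarith
        have h := cover (⌊u⌋+1).toNat (by rw [hc1]; linarith)
        rw [hc1] at h
        have heqq : u - (u + 1) = -1 := by ring
        rwa [heqq] at h
      have hN1 : M (N - 1) μ := by
        have h := D.subline hm1mem hmN (by nlinarith)
        have heq3 : -1 - -N = N - 1 := by ring
        rwa [heq3] at h
      have := humax _ hN1
      linarith
    · -- fractional representative r > 0
      set r := u - ((⌊u⌋:ℤ):ℝ) with hrdef
      have h1 : M (r - N) μ := D.subline hr hNmem (by nlinarith)
      have heN : e ≤ r - N := hemin _ h1
      have h2 : M (r - 1) μ := D.subline hr D.h1 (by nlinarith)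
      have h3 : M (r - 1 + N) μ := by
        have h := D.subline h2 hmN (by nlinarith)
        have heq3 : r - 1 - -N = r - 1 + N := by ring
        rwa [heq3] at h
      have := humax _ h3
      linarith
  · -- e < 0 → 0 < u
    intro hene
    have hnf : ((((⌊-e⌋).toNat:ℕ)):ℝ) = ((⌊-e⌋:ℤ):ℝ) := by
      norm_cast; exact Int.toNat_of_nonneg (Int.floor_nonneg.2 (by linarith))
    have hr' : M (e + ((⌊-e⌋:ℤ):ℝ)) μ := by
      have h := D.asc (⌊-e⌋).toNat he (by rw [hnf]; linarith [Int.floor_le (-e)])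
      rwa [hnf] at h
    have hr'le : e + ((⌊-e⌋:ℤ):ℝ) ≤ 0 := by linarith [Int.floor_le (-e)]
    have hr'gt : -1 < e + ((⌊-e⌋:ℤ):ℝ) := by linarith [Int.lt_floor_add_one (-e)]
    rcases eq_or_lt_of_le hr'le with hreq | hrlt
    · -- r' = 0, e is a negative integer
      have h0mem : M 0 μ := by rw [hreq] at hr'; exact hr'
      have hfl1 : 1 ≤ ⌊-e⌋ := by
        have : (0:ℝ) < ((⌊-e⌋:ℤ):ℝ) := by linarith
        exact_mod_cast this
      have hm1mem : M (-1) μ := by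
        have hc1 : (((⌊-e⌋ - 1).toNat:ℕ):ℝ) = ((⌊-e⌋:ℤ):ℝ) - 1 := by
          have h' : ((⌊-e⌋ - 1).toNat : ℤ) = ⌊-e⌋ - 1 := Int.toNat_of_nonneg (by omega)
          have h'' : (((⌊-e⌋ - 1).toNat:ℕ):ℝ) = ((⌊-e⌋ - 1 : ℤ):ℝ) := by exact_mod_cast congrArg (fun z : ℤ => (z:ℝ)) h'
          rw [h'']; push_cast; ring
        have h := D.asc (⌊-e⌋-1).toNat he (by rw [hc1]; linarith)
        rw [hc1] at h
        have heq3 : e + (((⌊-e⌋:ℤ):ℝ) - 1) = -1 := by linarith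
        rwa [heq3] at h
      have h1mem : M 1 μ := (D.iffline h0mem D.h1).2 hm1mem
      have := humax _ h1mem
      linarith
    · have h := D.subline hr' hmN (by nlinarith)
      have heq3 : e + ((⌊-e⌋:ℤ):ℝ) - -N = e + ((⌊-e⌋:ℤ):ℝ) + N := by ring
      rw [heq3] at h
      have := humax _ h
      linarith

lemma core (D : GrsData a M)
    (hprim : ∀ m : ℝ, M m 0 → ∀ j : ℕ, (1:ℝ) = (j+1)*m → j = 0)
    (hcross : ∃ t μ, M t μ ∧ t ≠ 0 ∧ μ ≠ 0) :
    ∃ c : ℝ, 0 < c ∧ c*c = 6*a ∧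
      ∀ t μ, M t μ ↔
        ((μ = 0 ∧ (∃ k : ℤ, t = (k:ℝ)) ∧ |t| ≤ 4) ∨
         ((μ = c ∨ μ = -c) ∧ (∃ k : ℤ, t = (k:ℝ)) ∧ |t| ≤ 3) ∨
         ((μ = 2*c ∨ μ = -(2*c)) ∧ t = 0)) := by
  obtain ⟨N, hN4, hNmem, ⟨nN, hnN⟩, hLint, hLmem⟩ := D.line hprim
  -- positive levels
  have hLevFin : {μ | ∃ t, M t μ}.Finite := by
    have h1 : {μ | ∃ t, M t μ} = Prod.snd '' {p : ℝ × ℝ | M p.1 p.2} := by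
      ext μ; constructor
      · rintro ⟨t, ht⟩; exact ⟨(t, μ), ht, rfl⟩
      · rintro ⟨⟨t, μ'⟩, hm, rfl⟩; exact ⟨t, hm⟩
    rw [h1]; exact D.hfin.image _
  have hPLfin : {μ | 0 < μ ∧ ∃ t, M t μ}.Finite := hLevFin.subset (fun μ h => h.2)
  have hPLne : {μ | 0 < μ ∧ ∃ t, M t μ}.Nonempty := by
    obtain ⟨t, μ, hm, ht0, hμ0⟩ := hcross
    rcases lt_or_gt_of_ne hμ0 with h | h
    · exact ⟨-μ, by linarith, ⟨-t, D.hneg t μ hm⟩⟩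
    · exact ⟨μ, h, ⟨t, hm⟩⟩
  obtain ⟨c0, hc0mem, hc0min⟩ := Set.exists_min_image {μ | 0 < μ ∧ ∃ t, M t μ} id hPLfin hPLne
  obtain ⟨hc0pos, hc0lev⟩ : 0 < c0 ∧ ∃ t, M t c0 := hc0mem
  -- representative in [0,1) of each nonempty nonzero level
  have rep : ∀ μ, μ ≠ 0 → (∃ t, M t μ) → ∃ r, M r μ ∧ 0 ≤ r ∧ r < 1 := by
    intro μ hμ hne
    obtain ⟨u, e, hu, he, humax, hemin, h0u, he0, residue, cover, hbig, hep⟩ :=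
      D.struct hN4 hNmem hLint μ hμ hne
    have hfu : ((⌊u⌋.toNat:ℕ):ℝ) = ((⌊u⌋:ℤ):ℝ) := by
      norm_cast; exact Int.toNat_of_nonneg (Int.floor_nonneg.2 h0u)
    refine ⟨u - ((⌊u⌋:ℤ):ℝ), ?_, by linarith [Int.floor_le u], by linarith [Int.lt_floor_add_one u]⟩
    have h := cover ⌊u⌋.toNat (by rw [hfu]; linarith [Int.floor_le u])
    rwa [hfu] at h
  -- difference of positive levels is a level
  have levsub : ∀ μ ν, (0 < μ ∧ ∃ t, M t μ) → (0 < ν ∧ ∃ t, M t ν) → ∃ t, M t (μ - ν) := by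
    rintro μ ν ⟨hμ, hμne⟩ ⟨hν, hνne⟩
    obtain ⟨r, hr, hr0, _⟩ := rep μ (ne_of_gt hμ) hμne
    obtain ⟨r', hr', hr'0, _⟩ := rep ν (ne_of_gt hν) hνne
    exact ⟨r - r', D.sub hr hr' (by nlinarith [D.ha, mul_pos hμ hν, mul_nonneg (mul_nonneg hr0 hr'0) (le_of_lt D.ha)])⟩
  -- every positive level is a multiple of c0
  have levaux : ∀ n : ℕ, ∀ μ, 0 < μ → (∃ t, M t μ) → μ ≤ n*c0 → ∃ j : ℕ, μ = (j+1)*c0 := by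
    intro n
    induction n with
    | zero => intro μ hμ _ hle; simp at hle; nlinarith
    | succ n ih =>
      intro μ hμ hne hle
      have hmle : c0 ≤ μ := hc0min μ ⟨hμ, hne⟩
      rcases eq_or_lt_of_le hmle with heq | hlt
      · exact ⟨0, by rw [← heq]; ring⟩
      · obtain ⟨t, ht⟩ := levsub μ c0 ⟨hμ, hne⟩ ⟨hc0pos, hc0lev⟩
        have hpos2 : 0 < μ - c0 := by linarith
        obtain ⟨j, hj⟩ := ih (μ - c0) hpos2 ⟨t, ht⟩ (by push_cast at hle ⊢; nlinarith)
        exact ⟨j+1, by push_cast; linarith [hj]⟩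
  have levmult : ∀ μ, 0 < μ → (∃ t, M t μ) → ∃ j : ℕ, μ = (j+1)*c0 := by
    intro μ hμ hne
    obtain ⟨n, hn⟩ := exists_nat_ge (μ/c0)
    exact levaux n μ hμ hne (by rw [div_le_iff₀ hc0pos] at hn; linarith)
  -- level c0 contains a nonzero element
  have hL1ne0 : ∃ t, M t c0 ∧ t ≠ 0 := by
    by_contra h00
    push_neg at h00
    have h0c0 : M 0 c0 := by
      obtain ⟨t, ht⟩ := hc0lev
      rcases eq_or_ne t 0 with rfl | htne
      · exact ht
      · exact absurd htne (not_not.2 (h00 t ht))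
    have hdesc : ∀ j : ℕ, ∀ t, M t (((j:ℝ)+1)*c0) → M t c0 := by
      intro j
      induction j with
      | zero => intro t ht; simpa using ht
      | succ n ih =>
        intro t ht
        push_cast at ht
        have h := D.sub ht h0c0
          (by have hq : (0:ℝ) < ((n:ℝ)+1+1)*c0*c0 := by positivity
              nlinarith)
        simp only [sub_zero] at h
        have heq : ((n:ℝ)+1+1)*c0 - c0 = ((n:ℝ)+1)*c0 := by ring
        rw [heq] at h
        exact ih t h
    obtain ⟨t, μ, hm, ht0, hμ0⟩ := hcross
    rcases lt_or_gt_of_ne hμ0 with h | h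
    · obtain ⟨j, hj⟩ := levmult (-μ) (by linarith) ⟨-t, D.hneg t μ hm⟩
      have := hdesc j (-t) (by rw [← hj]; exact D.hneg t μ hm)
      exact (neg_ne_zero.2 ht0) (h00 (-t) this)
    · obtain ⟨j, hj⟩ := levmult μ h ⟨t, hm⟩
      have := hdesc j t (by rwa [← hj])
      exact ht0 (h00 t this)
  -- the top level index
  have hSfin : {j : ℕ | ∃ t, M t (((j:ℝ)+1)*c0)}.Finite := by
    apply Set.Finite.preimage _ hLevFin
    intro i _ i' _ h
    simp only at h
    have : (i:ℝ) = (i':ℝ) := by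
      have := mul_right_cancel₀ (ne_of_gt hc0pos) h
      linarith
    exact_mod_cast this
  have hS0 : 0 ∈ {j : ℕ | ∃ t, M t (((j:ℝ)+1)*c0)} := by
    simp only [Set.mem_setOf_eq]
    push_cast
    rw [show ((0:ℝ)+1)*c0 = c0 by ring]
    exact hc0lev
  obtain ⟨nb, hnbmem, hnbmax⟩ := Set.exists_max_image _ id hSfin ⟨0, hS0⟩
  -- a level with empty double level is {0}
  have pure : ∀ μ, 0 < μ → (∃ t, M t μ) → (∀ s, ¬ M s (μ + μ)) → ∀ t, M t μ → t = 0 := by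
    intro μ hμpos hne hdempty t htmem
    obtain ⟨u, e, hu, he, humax, hemin, h0u, he0, residue, cover, hbig, hep⟩ :=
      D.struct hN4 hNmem hLint μ (ne_of_gt hμpos) hne
    rcases eq_or_lt_of_le h0u with hu0 | hupos
    · -- u = 0 hence e = 0 hence all zero
      have he00 : e = 0 := by
        by_contra hc
        have := hep (lt_of_le_of_ne he0 hc)
        linarith
      have h1 := humax t htmem
      have h2 := hemin t htmem
      linarith
    · exfalso
      have hbig2 : 2*N - 2 ≤ u - e := hbig hupos
      rcases lt_trichotomy (u*e*a + μ*μ) 0 with hlt | heq | hgt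
      · exact hdempty (u+e) (D.add hu he hlt)
      · -- boundary: get e+1 and contradict
        obtain ⟨K, hK⟩ := residue e he
        have hK1 : (1:ℝ) ≤ (K:ℝ) - 1 := by rw [← hK] at *; linarith
        have hc1 : (((K - 1).toNat:ℕ):ℝ) = (K:ℝ) - 1 := by
          have h' : ((K - 1).toNat : ℤ) = K - 1 := by
            apply Int.toNat_of_nonneg
            have : (1:ℝ) ≤ (K:ℝ) := by linarith
            have : (1:ℤ) ≤ K := by exact_mod_cast this
            omega
          exact_mod_cast congrArg (fun z : ℤ => (z:ℝ)) h'
        have hmem_e1 : M (e+1) μ := by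
          have h := cover (K-1).toNat (by rw [hc1]; rw [← hK]; linarith)
          rw [hc1] at h
          have heq2 : u - ((K:ℝ) - 1) = e + 1 := by rw [← hK] at *; linarith
          rwa [heq2] at h
        have hpos2 : 0 < u*(e+1)*a + μ*μ := by nlinarith [D.ha]
        have h := D.sub hu hmem_e1 hpos2
        rw [sub_self] at h
        have := (hLint _ h).2
        rw [abs_of_nonneg (by linarith)] at this
        linarith
      · have h := D.sub hu he hgt
        rw [sub_self] at h
        have := (hLint _ h).2
        rw [abs_of_nonneg (by linarith)] at this
        linarith
  -- the top level is {0}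
  have hdblempty : ∀ s, ¬ M s ((((nb:ℝ))+1)*c0 + (((nb:ℝ))+1)*c0) := by
    intro s hs
    have hmem : (2*nb+1) ∈ {j : ℕ | ∃ t, M t (((j:ℝ)+1)*c0)} := by
      refine ⟨s, ?_⟩
      have : ((2*nb+1:ℕ):ℝ) + 1 = 2*((nb:ℝ)+1) := by push_cast; ring
      rw [this]
      have heq : 2*((nb:ℝ)+1)*c0 = ((nb:ℝ)+1)*c0 + ((nb:ℝ)+1)*c0 := by ring
      rwa [heq]
    have := hnbmax _ hmem
    simp only [id] at this
    omega
  have htopne : ∃ t, M t (((nb:ℝ)+1)*c0) := hnbmem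
  have htoppos : 0 < ((nb:ℝ)+1)*c0 := by positivity
  have topzero := pure (((nb:ℝ)+1)*c0) htoppos htopne hdblempty
  have htop0mem : M 0 (((nb:ℝ)+1)*c0) := by
    obtain ⟨t, ht⟩ := htopne
    have := topzero t ht
    rwa [this] at ht
  -- nb = 1
  have hnb1 : nb = 1 := by
    rcases Nat.lt_or_ge nb 1 with h | h
    · -- nb = 0 : contradiction with hL1ne0
      interval_cases nb
      obtain ⟨t, ht, ht0⟩ := hL1ne0
      exact absurd (topzero t (by push_cast; rw [show ((0:ℝ)+1)*c0 = c0 by ring]; exact ht)) ht0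
    · rcases Nat.lt_or_ge nb 2 with h2 | h2
      · omega
      · exfalso
        -- level nb*c0 contains a nonzero element
        obtain ⟨s1, hs1, hs10⟩ := hL1ne0
        have hstep : M (-s1) ((nb:ℝ)*c0) := by
          have hpos : 0 < (0:ℝ)*s1*a + (((nb:ℝ)+1)*c0)*c0 := by
            have hq : (0:ℝ) < (((nb:ℝ)+1)*c0)*c0 := by positivity
            nlinarith
          have hh := D.sub htop0mem hs1 hpos
          have heq : ((nb:ℝ)+1)*c0 - c0 = (nb:ℝ)*c0 := by ring
          rw [heq] at hh
          simpa using hh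
        have hnbpos : 0 < (nb:ℝ)*c0 := by
          have hq : (0:ℝ) < (nb:ℝ) := by exact_mod_cast Nat.lt_of_lt_of_le Nat.zero_lt_one h
          exact mul_pos hq hc0pos
        have hdbl : ∀ s, ¬ M s ((nb:ℝ)*c0 + (nb:ℝ)*c0) := by
          intro s hs
          have hmem : (2*nb-1) ∈ {j : ℕ | ∃ t, M t (((j:ℝ)+1)*c0)} := by
            refine ⟨s, ?_⟩
            have : ((2*nb-1:ℕ):ℝ) + 1 = 2*(nb:ℝ) := by
              have : (1:ℕ) ≤ 2*nb := by omega
              push_cast [Nat.cast_sub this]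
              ring
            rw [this]
            have heq : 2*(nb:ℝ)*c0 = (nb:ℝ)*c0 + (nb:ℝ)*c0 := by ring
            rwa [heq]
          have := hnbmax _ hmem
          simp only [id] at this
          omega
        have := pure ((nb:ℝ)*c0) hnbpos ⟨-s1, hstep⟩ hdbl (-s1) hstep
        exact hs10 (by linarith [neg_eq_zero.1 this])
  subst hnb1
  -- now the top level is 2*c0
  have htop2 : ∀ t, M t (2*c0) → t = 0 := by
    intro t ht
    exact topzero t (by rwa [show ((1:ℕ):ℝ)+1 = 2 by norm_num])
  have h02 : M 0 (2*c0) := by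
    have := htop0mem
    rwa [show (((1:ℕ):ℝ)+1)*c0 = 2*c0 by norm_num] at this
  -- symmetry of level c0
  have hsymm : ∀ s, M s c0 → M (-s) c0 := by
    intro s hs
    have hpos : 0 < (0:ℝ)*s*a + (2*c0)*c0 := by
      have hq : (0:ℝ) < (2*c0)*c0 := by positivity
      nlinarith
    have hh := D.sub h02 hs hpos
    have heq : 2*c0 - c0 = c0 := by ring
    rw [heq] at hh
    simpa using hh
  -- structure of level c0
  obtain ⟨u, e, hu, he, humax, hemin, h0u, he0, residue, cover, hbig, hep⟩ :=
    D.struct hN4 hNmem hLint c0 (ne_of_gt hc0pos) hc0lev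
  have heu : e = -u := by
    have h1 := hemin _ (hsymm u hu)
    have h2 := humax _ (hsymm e he)
    linarith
  have hupos : 0 < u := by
    rcases eq_or_lt_of_le h0u with h | h
    · exfalso
      obtain ⟨t, ht, ht0⟩ := hL1ne0
      have h1 := humax t ht
      have h2 := hemin t ht
      rw [heu] at h2
      apply ht0
      linarith
    · exact h
  have hbig2 : 2*N - 2 ≤ u - e := hbig hupos
  have hmN1 : N - 1 ≤ u := by rw [heu] at hbig2; linarith
  -- membership of u-1 and u-2 and their negatives
  have humem1 : M (u-1) c0 := by
    have h := cover 1 (by push_cast; linarith)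
    simpa using h
  have humem2 : M (u-2) c0 := by
    have h := cover 2 (by push_cast; linarith)
    simpa using h
  have hnumem1 : M (1-u) c0 := by
    have := hsymm _ humem1
    rwa [neg_sub] at this
  have hnumem2 : M (2-u) c0 := by
    have := hsymm _ humem2
    rwa [neg_sub] at this
  -- pair (u, 1-u)
  have hb : c0*c0 = u*(u-1)*a := by
    rcases lt_trichotomy (u*(1-u)*a + c0*c0) 0 with hlt | heq | hgt
    · exfalso
      have h := D.add hu hnumem1 hlt
      have heq1 : u + (1-u) = 1 := by ring
      have heq2 : c0 + c0 = 2*c0 := by ring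
      rw [heq1, heq2] at h
      exact one_ne_zero (htop2 1 h)
    · nlinarith
    · exfalso
      have h := D.sub hu hnumem1 hgt
      rw [sub_self] at h
      have heq1 : u - (1-u) = 2*u - 1 := by ring
      rw [heq1] at h
      have := (hLint _ h).2
      rw [abs_of_nonneg (by linarith)] at this
      linarith
  -- pair (u, 2-u)
  have hu3 : u = 3 ∧ N = 4 := by
    have hgt : 0 < u*(2-u)*a + c0*c0 := by
      rw [hb]
      have : u*(2-u)*a + u*(u-1)*a = u*a := by ring
      rw [this]
      exact mul_pos hupos D.ha
    have h := D.sub hu hnumem2 hgt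
    rw [sub_self] at h
    have heq1 : u - (2-u) = 2*u - 2 := by ring
    rw [heq1] at h
    have hN2 := (hLint _ h).2
    rw [abs_of_nonneg (by linarith)] at hN2
    constructor
    · linarith
    · linarith
  obtain ⟨hu3', hN4'⟩ := hu3
  subst hu3'
  have hc026 : c0*c0 = 6*a := by rw [hb]; ring
  -- full description of level c0
  have hlev1 : ∀ t, M t c0 ↔ ((∃ k : ℤ, t = (k:ℝ)) ∧ |t| ≤ 3) := by
    intro t
    constructor
    · intro ht
      obtain ⟨k, hk⟩ := residue t ht
      constructor
      · exact ⟨3 - k, by push_cast; linarith⟩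
      · rw [abs_le]
        have h1 := humax t ht
        have h2 := hemin t ht
        rw [heu] at h2
        exact ⟨by linarith, by linarith⟩
    · rintro ⟨⟨k, rfl⟩, habs⟩
      rw [abs_le] at habs
      have hk3 : k ≤ 3 ∧ -3 ≤ k := by
        constructor <;> [exact_mod_cast habs.2; exact_mod_cast habs.1]
      have hc1 : (((3 - k).toNat:ℕ):ℝ) = 3 - (k:ℝ) := by
        have h' : ((3 - k).toNat : ℤ) = 3 - k := Int.toNat_of_nonneg (by omega)
        exact_mod_cast congrArg (fun z : ℤ => (z:ℝ)) h'
      have h := cover (3-k).toNat (by rw [hc1, heu]; push_cast; linarith [habs.1])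
      rw [hc1] at h
      have heq2 : 3 - (3 - (k:ℝ)) = (k:ℝ) := by ring
      rwa [heq2] at h
  -- level classification
  have hlevclass : ∀ μ, μ ≠ 0 → (∃ t, M t μ) → μ = c0 ∨ μ = -c0 ∨ μ = 2*c0 ∨ μ = -(2*c0) := by
    have hposlev : ∀ μ, 0 < μ → (∃ t, M t μ) → μ = c0 ∨ μ = 2*c0 := by
      intro μ hμpos hne
      obtain ⟨j, hj⟩ := levmult μ hμpos hne
      have hjS : j ∈ {j : ℕ | ∃ t, M t (((j:ℝ)+1)*c0)} := by
        show ∃ t, M t (((j:ℝ)+1)*c0)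
        rw [← hj]; exact hne
      have := hnbmax _ hjS
      simp only [id] at this
      interval_cases j
      · left; rw [hj]; push_cast; ring
      · right; rw [hj]; push_cast; ring
    intro μ hμ0 hne
    rcases lt_or_gt_of_ne hμ0 with h | h
    · obtain ⟨t, ht⟩ := hne
      rcases hposlev (-μ) (by linarith) ⟨-t, D.hneg t μ ht⟩ with h1 | h1
      · right; left; linarith
      · right; right; right; linarith
    · rcases hposlev μ h hne with h1 | h1
      · left; exact h1
      · right; right; left; exact h1
  -- final assembly
  refine ⟨c0, hc0pos, hc026, ?_⟩
  intro t μ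
  constructor
  · intro hm
    rcases eq_or_ne μ 0 with rfl | hμ0
    · left
      obtain ⟨hint, habs⟩ := hLint t hm
      exact ⟨rfl, hint, by linarith⟩
    · rcases hlevclass μ hμ0 ⟨t, hm⟩ with rfl | rfl | rfl | rfl
      · right; left
        exact ⟨Or.inl rfl, (hlev1 t).1 hm⟩
      · right; left
        refine ⟨Or.inr rfl, ?_⟩
        have hneg := D.hneg t (-c0) hm
        rw [neg_neg] at hneg
        obtain ⟨⟨k, hk⟩, habs⟩ := (hlev1 (-t)).1 hneg
        refine ⟨⟨-k, by push_cast; linarith⟩, by rwa [abs_neg] at habs⟩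
      · right; right
        exact ⟨Or.inl rfl, htop2 t hm⟩
      · right; right
        refine ⟨Or.inr rfl, ?_⟩
        have hneg := D.hneg t (-(2*c0)) hm
        rw [neg_neg] at hneg
        have := htop2 (-t) hneg
        linarith
  · rintro (⟨rfl, ⟨k, rfl⟩, habs⟩ | ⟨hμ, ⟨k, rfl⟩, habs⟩ | ⟨hμ, rfl⟩)
    · apply hLmem
      rw [hN4']at *
      linarith [habs]
    · rcases hμ with rfl | rfl
      · exact (hlev1 _).2 ⟨⟨k, rfl⟩, habs⟩
      · have h := (hlev1 (-(k:ℝ))).2 ⟨⟨-k, by push_cast; ring⟩, by rwa [abs_neg]⟩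
        have := D.hneg _ _ h
        rwa [neg_neg] at this
    · rcases hμ with rfl | rfl
      · exact h02
      · have := D.hneg _ _ h02
        rwa [neg_zero] at this

end GrsData


theorem exists_unit_perp (x : V) (hx : x ≠ 0) (hdim : Module.finrank ℝ V = 2) :
    ∃ q : V, ‖q‖ = 1 ∧ ⟪x, q⟫ = 0 ∧ ∀ v : V, ⟪x, v⟫ = 0 → ⟪q, v⟫ = 0 → v = 0 := by
  have h1 : Module.finrank ℝ (ℝ ∙ x) = 1 := finrank_span_singleton hx
  have h2 : Module.finrank ℝ ((ℝ ∙ x)ᗮ) = 1 := by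
    have h := Submodule.finrank_add_finrank_orthogonal (K := (ℝ ∙ x))
    rw [h1, hdim] at h; omega
  obtain ⟨q0, hqK, hq0⟩ := Submodule.exists_mem_ne_zero_of_ne_bot
    (p := (ℝ ∙ x)ᗮ) (by intro h; rw [h] at h2; simp at h2)
  have hxq0 : ⟪x, q0⟫ = 0 := by
    rw [Submodule.mem_orthogonal] at hqK
    exact hqK x (Submodule.mem_span_singleton_self x)
  refine ⟨‖q0‖⁻¹ • q0, ?_, ?_, ?_⟩
  · simp [norm_smul, norm_ne_zero_iff.2 hq0]
  · rw [real_inner_smul_right, hxq0]; ring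
  · intro v hv1 hv2
    have hvK : v ∈ (ℝ ∙ x)ᗮ := by
      rw [Submodule.mem_orthogonal]
      intro u hu
      rw [Submodule.mem_span_singleton] at hu
      obtain ⟨c, rfl⟩ := hu
      rw [real_inner_smul_left, hv1]; ring
    have hspan : (ℝ ∙ x)ᗮ = ℝ ∙ q0 := by
      symm
      apply Submodule.eq_of_le_of_finrank_eq
      · rw [Submodule.span_singleton_le_iff_mem]; exact hqK
      · rw [h2, finrank_span_singleton hq0]
    rw [hspan, Submodule.mem_span_singleton] at hvK
    obtain ⟨c, rfl⟩ := hvK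
    rw [real_inner_smul_left, real_inner_smul_right, real_inner_self_eq_norm_sq] at hv2
    have : c = 0 := by
      have hn : ‖q0‖ ≠ 0 := norm_ne_zero_iff.2 hq0
      field_simp at hv2
      have : ‖q0‖ ^ 2 ≠ 0 := pow_ne_zero 2 hn
      exact (mul_eq_zero.1 hv2).resolve_left (by simp [hn])
    simp [this]


/-- An irreducible rank 2 GRS containing a primitive root `x` with
multiplier 4 is the GRS `{0, ±x, ±2x, ±3x, ±4x, ±y, ±y±x, ±y±2x, ±y±3x, ±2y}` with
`y ⊥ x` and `‖y‖² = 6‖x‖²`. -/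
theorem stmt17 (R : Set V) (hR : IsGRS R) (hirr : IsIrreducibleGRS R)
    (hdim : Module.finrank ℝ V = 2) (x : V) (hx : IsPrimitive R x)
    (h2 : (2 : ℝ) • x ∈ R) (h3 : (3 : ℝ) • x ∈ R) (h4 : (4 : ℝ) • x ∈ R) :
    ∃ y : V, ⟪x, y⟫ = 0 ∧ ‖y‖ ^ 2 = 6 * ‖x‖ ^ 2 ∧
      R = {0, x, -x, (2 : ℝ) • x, -((2 : ℝ) • x), (3 : ℝ) • x, -((3 : ℝ) • x),
           (4 : ℝ) • x, -((4 : ℝ) • x), y, -y, (2 : ℝ) • y, -((2 : ℝ) • y),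
           y + x, y - x, -y + x, -y - x,
           y + (2 : ℝ) • x, y - (2 : ℝ) • x, -y + (2 : ℝ) • x, -y - (2 : ℝ) • x,
           y + (3 : ℝ) • x, y - (3 : ℝ) • x, -y + (3 : ℝ) • x, -y - (3 : ℝ) • x} := by
  obtain ⟨hRne, hRfin, hRspan, hRax⟩ := hR
  obtain ⟨hxR, hx0, hprim⟩ := hx
  have ha : (0:ℝ) < ⟪x, x⟫ := by
    rw [real_inner_self_eq_norm_sq]; exact pow_pos (norm_pos_iff.2 hx0) 2
  obtain ⟨q, hq1, hxq, hcomp⟩ := exists_unit_perp x hx0 hdim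
  have hqq : ⟪q, q⟫ = (1:ℝ) := by
    rw [real_inner_self_eq_norm_sq, hq1]; norm_num
  have hqx : ⟪q, x⟫ = (0:ℝ) := by rw [real_inner_comm]; exact hxq
  have hin : ∀ t μ s ν : ℝ, ⟪t • x + μ • q, s • x + ν • q⟫ = t*s*⟪x, x⟫ + μ*ν := by
    intro t μ s ν
    simp only [inner_add_left, inner_add_right, real_inner_smul_left, real_inner_smul_right,
      hxq, hqx, hqq]
    ring
  have hdecomp : ∀ v : V, v = (⟪x, v⟫/⟪x, x⟫) • x + ⟪q, v⟫ • q := by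
    intro v
    have hzro := hcomp (v - ((⟪x, v⟫/⟪x, x⟫) • x + ⟪q, v⟫ • q))
      (by
        simp only [inner_sub_right, inner_add_right, real_inner_smul_right, hxq, hqq]
        field_simp; ring)
      (by
        simp only [inner_sub_right, inner_add_right, real_inner_smul_right, hqx, hqq]
        ring)
    exact sub_eq_zero.1 hzro
  -- basic GRS facts
  have hzeroR : (0:V) ∈ R := by
    obtain ⟨v, hv⟩ := hRne
    rcases eq_or_ne v 0 with rfl | hv0
    · exact hv
    · have hvpos : (0:ℝ) < ⟪v, v⟫ := by
        rw [real_inner_self_eq_norm_sq]; exact pow_pos (norm_pos_iff.2 hv0) 2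
      have h := (hRax v hv v hv).2.1 hvpos
      rwa [sub_self] at h
  have hnegR : ∀ v ∈ R, -v ∈ R := by
    intro v hv
    have h := (hRax 0 hzeroR v hv).2.2 (inner_zero_left v)
    rw [zero_add, zero_sub] at h
    exact h.1 hv
  -- the coordinate predicate
  set M : ℝ → ℝ → Prop := fun t μ => (t • x + μ • q) ∈ R with hMdef
  have hMiff : ∀ v : V, v ∈ R ↔ M (⟪x, v⟫/⟪x, x⟫) ⟪q, v⟫ := by
    intro v
    show v ∈ R ↔ ((⟪x, v⟫/⟪x, x⟫) • x + ⟪q, v⟫ • q) ∈ R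
    rw [← hdecomp v]
  have D : GrsData ⟪x, x⟫ M := by
    refine ⟨ha, ?_, ?_, ?_, ?_, ?_, ?_, ?_, ?_⟩
    · -- finiteness
      have : {p : ℝ × ℝ | M p.1 p.2} = (fun p : ℝ × ℝ => p.1 • x + p.2 • q) ⁻¹' R := rfl
      rw [this]
      apply Set.Finite.preimage _ hRfin
      intro p _ p' _ hpq
      simp only at hpq
      have hdiff : (p.1 - p'.1) • x + (p.2 - p'.2) • q = 0 := by
        have heq : (p.1 - p'.1) • x + (p.2 - p'.2) • q =
            (p.1 • x + p.2 • q) - (p'.1 • x + p'.2 • q) := by module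
        rw [heq, hpq, sub_self]
      have h1 : ⟪x, (p.1 - p'.1) • x + (p.2 - p'.2) • q⟫ = 0 := by rw [hdiff, inner_zero_right]
      have h2 : ⟪q, (p.1 - p'.1) • x + (p.2 - p'.2) • q⟫ = 0 := by rw [hdiff, inner_zero_right]
      simp only [inner_add_right, real_inner_smul_right, hxq, hqx, hqq] at h1 h2
      have e1 : p.1 = p'.1 := by
        have : (p.1 - p'.1) * ⟪x, x⟫ = 0 := by linarith
        have := mul_eq_zero.1 this
        rcases this with h | h
        · linarith
        · exact absurd h (ne_of_gt ha)
      have e2 : p.2 = p'.2 := by nlinarith [h2]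
      exact Prod.ext e1 e2
    · -- negation
      intro t μ hm
      show ((-t) • x + (-μ) • q) ∈ R
      have h := hnegR _ hm
      have heq : -(t • x + μ • q) = (-t) • x + (-μ) • q := by module
      rwa [heq] at h
    · show ((0:ℝ) • x + (0:ℝ) • q) ∈ R
      have heq : (0:ℝ) • x + (0:ℝ) • q = (0:V) := by module
      rw [heq]; exact hzeroR
    · show ((1:ℝ) • x + (0:ℝ) • q) ∈ R
      have heq : (1:ℝ) • x + (0:ℝ) • q = x := by module
      rw [heq]; exact hxR
    · show ((2:ℝ) • x + (0:ℝ) • q) ∈ R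
      have heq : (2:ℝ) • x + (0:ℝ) • q = (2:ℝ) • x := by module
      rw [heq]; exact h2
    · show ((3:ℝ) • x + (0:ℝ) • q) ∈ R
      have heq : (3:ℝ) • x + (0:ℝ) • q = (3:ℝ) • x := by module
      rw [heq]; exact h3
    · show ((4:ℝ) • x + (0:ℝ) • q) ∈ R
      have heq : (4:ℝ) • x + (0:ℝ) • q = (4:ℝ) • x := by module
      rw [heq]; exact h4
    · -- the GRS axiom in coordinates
      intro t μ s ν hα hβ
      have h := hRax (t • x + μ • q) hα (s • x + ν • q) hβ
      rw [hin] at h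
      have hsum : t • x + μ • q + (s • x + ν • q) = (t+s) • x + (μ+ν) • q := by module
      have hdif : t • x + μ • q - (s • x + ν • q) = (t-s) • x + (μ-ν) • q := by module
      rw [hsum, hdif] at h
      exact h
  -- primitivity in coordinates
  have hprimM : ∀ m : ℝ, M m 0 → ∀ j : ℕ, (1:ℝ) = ((j:ℝ)+1)*m → j = 0 := by
    intro m hm j hj
    have hmx : m • x ∈ R := by
      have h : ((m:ℝ) • x + (0:ℝ) • q) ∈ R := hm
      have heq : (m:ℝ) • x + (0:ℝ) • q = m • x := by module
      rwa [heq] at h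
    have hk := hprim ((j:ℤ)+1) (m • x) (by omega) hmx
      (by
        push_cast
        rw [smul_smul]
        rw [← hj]
        module)
    omega
  -- crossing root exists (irreducibility)
  have hcrossM : ∃ t μ, M t μ ∧ t ≠ 0 ∧ μ ≠ 0 := by
    by_contra hc
    push_neg at hc
    have hoffex : ∃ z ∈ R, ⟪q, z⟫ ≠ 0 := by
      by_contra hoff
      push_neg at hoff
      have hle : Submodule.span ℝ R ≤ (ℝ ∙ q)ᗮ := by
        rw [Submodule.span_le]
        intro v hv
        rw [SetLike.mem_coe, Submodule.mem_orthogonal]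
        intro u hu
        rw [Submodule.mem_span_singleton] at hu
        obtain ⟨cc, rfl⟩ := hu
        rw [real_inner_smul_left, hoff v hv]
        ring
      rw [hRspan] at hle
      have hqmem : q ∈ (ℝ ∙ q)ᗮ := hle Submodule.mem_top
      rw [Submodule.mem_orthogonal] at hqmem
      have := hqmem q (Submodule.mem_span_singleton_self q)
      rw [hqq] at this
      norm_num at this
    have horth : ∀ α ∈ {v ∈ R | ⟪q, v⟫ = 0}, ∀ β ∈ {v ∈ R | ⟪q, v⟫ ≠ 0}, ⟪α, β⟫ = (0:ℝ) := by
      intro α hα β hβ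
      obtain ⟨hαR, hα0⟩ := hα
      obtain ⟨hβR, hβ0⟩ := hβ
      have hMβ := (hMiff β).1 hβR
      have hcβ : ⟪x, β⟫/⟪x, x⟫ = 0 := by
        by_contra hne
        exact hβ0 (hc _ _ hMβ hne)
      have hα' : α = (⟪x, α⟫/⟪x, x⟫) • x := by
        have h := hdecomp α
        rw [hα0] at h
        calc α = (⟪x, α⟫/⟪x, x⟫) • x + (0:ℝ) • q := h
        _ = (⟪x, α⟫/⟪x, x⟫) • x := by module
      have hβ' : β = ⟪q, β⟫ • q := by
        have h := hdecomp β
        rw [hcβ] at h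
        calc β = (0:ℝ) • x + ⟪q, β⟫ • q := h
        _ = ⟪q, β⟫ • q := by module
      rw [hα', hβ', real_inner_smul_left, real_inner_smul_right, hxq]
      ring
    rcases hirr {v ∈ R | ⟪q, v⟫ = 0} {v ∈ R | ⟪q, v⟫ ≠ 0}
      (by ext v; by_cases hcase : ⟪q, v⟫ = 0 <;> simp [hcase])
      horth with hsub | hsub
    · exact hx0 (hsub ⟨hxR, hqx⟩)
    · obtain ⟨z, hz, hz0⟩ := hoffex
      have : z = 0 := hsub ⟨hz, hz0⟩
      rw [this, inner_zero_right] at hz0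
      exact hz0 rfl
  obtain ⟨c, hcpos, hc6, hchar⟩ := D.core hprimM hcrossM
  set y : V := c • q with hy
  refine ⟨y, ?_, ?_, ?_⟩
  · rw [hy, real_inner_smul_right, hxq]; ring
  · rw [hy, norm_smul, mul_pow, hq1, Real.norm_eq_abs]
    have hxx : ‖x‖^2 = ⟪x, x⟫ := (real_inner_self_eq_norm_sq x).symm
    rw [← hxx] at hc6
    have habs2 : |c|^2 = c*c := by rw [sq_abs]; ring
    rw [habs2, hc6]
    ring
  · ext v
    constructor
    · intro hv
      have hMv := (hMiff v).1 hv
      rcases (hchar _ _).1 hMv with ⟨hμ0, ⟨k, hk⟩, habs⟩ | ⟨hμ, ⟨k, hk⟩, habs⟩ | ⟨hμ, ht0⟩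
      · -- line part
        have hveq : v = ((k:ℤ):ℝ) • x + (0:ℝ) • q := by
          have h := hdecomp v
          rw [hk, hμ0] at h
          exact h
        have hveq2 : v = ((k:ℤ):ℝ) • x := by rw [hveq]; module
        rw [hk] at habs
        have hb : |k| ≤ (4:ℤ) := by exact_mod_cast habs
        have h1 := (abs_le.1 hb).1
        have h2 := (abs_le.1 hb).2
        interval_cases k
        · exact Set.mem_of_eq_of_mem
            (show v = (-((4 : ℝ) • x) : V) by rw [hveq2]; push_cast; module) (by exact Set.mem_insert_of_mem _ (Set.mem_insert_of_mem _ (Set.mem_insert_of_mem _ (Set.mem_insert_of_mem _ (Set.mem_insert_of_mem _ (Set.mem_insert_of_mem _ (Set.mem_insert_of_mem _ (Set.mem_insert_of_mem _ (Set.mem_insert _ _)))))))))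
        · exact Set.mem_of_eq_of_mem
            (show v = (-((3 : ℝ) • x) : V) by rw [hveq2]; push_cast; module) (by exact Set.mem_insert_of_mem _ (Set.mem_insert_of_mem _ (Set.mem_insert_of_mem _ (Set.mem_insert_of_mem _ (Set.mem_insert_of_mem _ (Set.mem_insert_of_mem _ (Set.mem_insert _ _)))))))
        · exact Set.mem_of_eq_of_mem
            (show v = (-((2 : ℝ) • x) : V) by rw [hveq2]; push_cast; module) (by exact Set.mem_insert_of_mem _ (Set.mem_insert_of_mem _ (Set.mem_insert_of_mem _ (Set.mem_insert_of_mem _ (Set.mem_insert _ _)))))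
        · exact Set.mem_of_eq_of_mem
            (show v = (-x : V) by rw [hveq2]; push_cast; module) (by exact Set.mem_insert_of_mem _ (Set.mem_insert_of_mem _ (Set.mem_insert _ _)))
        · exact Set.mem_of_eq_of_mem
            (show v = (0 : V) by rw [hveq2]; push_cast; module) (by exact Set.mem_insert _ _)
        · exact Set.mem_of_eq_of_mem
            (show v = (x : V) by rw [hveq2]; push_cast; module) (by exact Set.mem_insert_of_mem _ (Set.mem_insert _ _))
        · exact Set.mem_of_eq_of_mem
            (show v = ((2 : ℝ) • x : V) by rw [hveq2]; push_cast; module) (by exact Set.mem_insert_of_mem _ (Set.mem_insert_of_mem _ (Set.mem_insert_of_mem _ (Set.mem_insert _ _))))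
        · exact Set.mem_of_eq_of_mem
            (show v = ((3 : ℝ) • x : V) by rw [hveq2]; push_cast; module) (by exact Set.mem_insert_of_mem _ (Set.mem_insert_of_mem _ (Set.mem_insert_of_mem _ (Set.mem_insert_of_mem _ (Set.mem_insert_of_mem _ (Set.mem_insert _ _))))))
        · exact Set.mem_of_eq_of_mem
            (show v = ((4 : ℝ) • x : V) by rw [hveq2]; push_cast; module) (by exact Set.mem_insert_of_mem _ (Set.mem_insert_of_mem _ (Set.mem_insert_of_mem _ (Set.mem_insert_of_mem _ (Set.mem_insert_of_mem _ (Set.mem_insert_of_mem _ (Set.mem_insert_of_mem _ (Set.mem_insert _ _))))))))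
      · -- level ±c
        rw [hk] at habs
        have hb : |k| ≤ (3:ℤ) := by exact_mod_cast habs
        have h1 := (abs_le.1 hb).1
        have h2 := (abs_le.1 hb).2
        rcases hμ with hμ | hμ
        · have hveq2 : v = ((k:ℤ):ℝ) • x + c • q := by
            have h := hdecomp v
            rw [hk, hμ] at h
            exact h
          interval_cases k
          · exact Set.mem_of_eq_of_mem
              (show v = (y - (3 : ℝ) • x : V) by rw [hveq2, hy]; push_cast; module) (by exact Set.mem_insert_of_mem _ (Set.mem_insert_of_mem _ (Set.mem_insert_of_mem _ (Set.mem_insert_of_mem _ (Set.mem_insert_of_mem _ (Set.mem_insert_of_mem _ (Set.mem_insert_of_mem _ (Set.mem_insert_of_mem _ (Set.mem_insert_of_mem _ (Set.mem_insert_of_mem _ (Set.mem_insert_of_mem _ (Set.mem_insert_of_mem _ (Set.mem_insert_of_mem _ (Set.mem_insert_of_mem _ (Set.mem_insert_of_mem _ (Set.mem_insert_of_mem _ (Set.mem_insert_of_mem _ (Set.mem_insert_of_mem _ (Set.mem_insert_of_mem _ (Set.mem_insert_of_mem _ (Set.mem_insert_of_mem _ (Set.mem_insert_of_mem _ (Set.mem_insert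 _ _)))))))))))))))))))))))
          · exact Set.mem_of_eq_of_mem
              (show v = (y - (2 : ℝ) • x : V) by rw [hveq2, hy]; push_cast; module) (by exact Set.mem_insert_of_mem _ (Set.mem_insert_of_mem _ (Set.mem_insert_of_mem _ (Set.mem_insert_of_mem _ (Set.mem_insert_of_mem _ (Set.mem_insert_of_mem _ (Set.mem_insert_of_mem _ (Set.mem_insert_of_mem _ (Set.mem_insert_of_mem _ (Set.mem_insert_of_mem _ (Set.mem_insert_of_mem _ (Set.mem_insert_of_mem _ (Set.mem_insert_of_mem _ (Set.mem_insert_of_mem _ (Set.mem_insert_of_mem _ (Set.mem_insert_of_mem _ (Set.mem_insert_of_mem _ (Set.mem_insert_of_mem _ (Set.mem_insert _ _)))))))))))))))))))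
          · exact Set.mem_of_eq_of_mem
              (show v = (y - x : V) by rw [hveq2, hy]; push_cast; module) (by exact Set.mem_insert_of_mem _ (Set.mem_insert_of_mem _ (Set.mem_insert_of_mem _ (Set.mem_insert_of_mem _ (Set.mem_insert_of_mem _ (Set.mem_insert_of_mem _ (Set.mem_insert_of_mem _ (Set.mem_insert_of_mem _ (Set.mem_insert_of_mem _ (Set.mem_insert_of_mem _ (Set.mem_insert_of_mem _ (Set.mem_insert_of_mem _ (Set.mem_insert_of_mem _ (Set.mem_insert_of_mem _ (Set.mem_insert _ _)))))))))))))))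
          · exact Set.mem_of_eq_of_mem
              (show v = (y : V) by rw [hveq2, hy]; push_cast; module) (by exact Set.mem_insert_of_mem _ (Set.mem_insert_of_mem _ (Set.mem_insert_of_mem _ (Set.mem_insert_of_mem _ (Set.mem_insert_of_mem _ (Set.mem_insert_of_mem _ (Set.mem_insert_of_mem _ (Set.mem_insert_of_mem _ (Set.mem_insert_of_mem _ (Set.mem_insert _ _))))))))))
          · exact Set.mem_of_eq_of_mem
              (show v = (y + x : V) by rw [hveq2, hy]; push_cast; module) (by exact Set.mem_insert_of_mem _ (Set.mem_insert_of_mem _ (Set.mem_insert_of_mem _ (Set.mem_insert_of_mem _ (Set.mem_insert_of_mem _ (Set.mem_insert_of_mem _ (Set.mem_insert_of_mem _ (Set.mem_insert_of_mem _ (Set.mem_insert_of_mem _ (Set.mem_insert_of_mem _ (Set.mem_insert_of_mem _ (Set.mem_insert_of_mem _ (Set.mem_insert_of_mem _ (Set.mem_insert _ _))))))))))))))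
          · exact Set.mem_of_eq_of_mem
              (show v = (y + (2 : ℝ) • x : V) by rw [hveq2, hy]; push_cast; module) (by exact Set.mem_insert_of_mem _ (Set.mem_insert_of_mem _ (Set.mem_insert_of_mem _ (Set.mem_insert_of_mem _ (Set.mem_insert_of_mem _ (Set.mem_insert_of_mem _ (Set.mem_insert_of_mem _ (Set.mem_insert_of_mem _ (Set.mem_insert_of_mem _ (Set.mem_insert_of_mem _ (Set.mem_insert_of_mem _ (Set.mem_insert_of_mem _ (Set.mem_insert_of_mem _ (Set.mem_insert_of_mem _ (Set.mem_insert_of_mem _ (Set.mem_insert_of_mem _ (Set.mem_insert_of_mem _ (Set.mem_insert _ _))))))))))))))))))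
          · exact Set.mem_of_eq_of_mem
              (show v = (y + (3 : ℝ) • x : V) by rw [hveq2, hy]; push_cast; module) (by exact Set.mem_insert_of_mem _ (Set.mem_insert_of_mem _ (Set.mem_insert_of_mem _ (Set.mem_insert_of_mem _ (Set.mem_insert_of_mem _ (Set.mem_insert_of_mem _ (Set.mem_insert_of_mem _ (Set.mem_insert_of_mem _ (Set.mem_insert_of_mem _ (Set.mem_insert_of_mem _ (Set.mem_insert_of_mem _ (Set.mem_insert_of_mem _ (Set.mem_insert_of_mem _ (Set.mem_insert_of_mem _ (Set.mem_insert_of_mem _ (Set.mem_insert_of_mem _ (Set.mem_insert_of_mem _ (Set.mem_insert_of_mem _ (Set.mem_insert_of_mem _ (Set.mem_insert_of_mem _ (Set.mem_insert_of_mem _ (Set.mem_insert _ _))))))))))))))))))))))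
        · have hveq2 : v = ((k:ℤ):ℝ) • x + (-c) • q := by
            have h := hdecomp v
            rw [hk, hμ] at h
            exact h
          interval_cases k
          · exact Set.mem_of_eq_of_mem
              (show v = (-y - (3 : ℝ) • x : V) by rw [hveq2, hy]; push_cast; module) (by exact Set.mem_insert_of_mem _ (Set.mem_insert_of_mem _ (Set.mem_insert_of_mem _ (Set.mem_insert_of_mem _ (Set.mem_insert_of_mem _ (Set.mem_insert_of_mem _ (Set.mem_insert_of_mem _ (Set.mem_insert_of_mem _ (Set.mem_insert_of_mem _ (Set.mem_insert_of_mem _ (Set.mem_insert_of_mem _ (Set.mem_insert_of_mem _ (Set.mem_insert_of_mem _ (Set.mem_insert_of_mem _ (Set.mem_insert_of_mem _ (Set.mem_insert_of_mem _ (Set.mem_insert_of_mem _ (Set.mem_insert_of_mem _ (Set.mem_insert_of_mem _ (Set.mem_insert_of_mem _ (Set.mem_insert_of_mem _ (Set.mem_insert_of_mem _ (Set.mem_insert_of_mem _ (Set.mem_insert_of_mem _ (Set.mem_singleton _)))))))))))))))))))))))))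
          · exact Set.mem_of_eq_of_mem
              (show v = (-y - (2 : ℝ) • x : V) by rw [hveq2, hy]; push_cast; module) (by exact Set.mem_insert_of_mem _ (Set.mem_insert_of_mem _ (Set.mem_insert_of_mem _ (Set.mem_insert_of_mem _ (Set.mem_insert_of_mem _ (Set.mem_insert_of_mem _ (Set.mem_insert_of_mem _ (Set.mem_insert_of_mem _ (Set.mem_insert_of_mem _ (Set.mem_insert_of_mem _ (Set.mem_insert_of_mem _ (Set.mem_insert_of_mem _ (Set.mem_insert_of_mem _ (Set.mem_insert_of_mem _ (Set.mem_insert_of_mem _ (Set.mem_insert_of_mem _ (Set.mem_insert_of_mem _ (Set.mem_insert_of_mem _ (Set.mem_insert_of_mem _ (Set.mem_insert_of_mem _ (Set.mem_insert _ _)))))))))))))))))))))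
          · exact Set.mem_of_eq_of_mem
              (show v = (-y - x : V) by rw [hveq2, hy]; push_cast; module) (by exact Set.mem_insert_of_mem _ (Set.mem_insert_of_mem _ (Set.mem_insert_of_mem _ (Set.mem_insert_of_mem _ (Set.mem_insert_of_mem _ (Set.mem_insert_of_mem _ (Set.mem_insert_of_mem _ (Set.mem_insert_of_mem _ (Set.mem_insert_of_mem _ (Set.mem_insert_of_mem _ (Set.mem_insert_of_mem _ (Set.mem_insert_of_mem _ (Set.mem_insert_of_mem _ (Set.mem_insert_of_mem _ (Set.mem_insert_of_mem _ (Set.mem_insert_of_mem _ (Set.mem_insert _ _)))))))))))))))))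
          · exact Set.mem_of_eq_of_mem
              (show v = (-y : V) by rw [hveq2, hy]; push_cast; module) (by exact Set.mem_insert_of_mem _ (Set.mem_insert_of_mem _ (Set.mem_insert_of_mem _ (Set.mem_insert_of_mem _ (Set.mem_insert_of_mem _ (Set.mem_insert_of_mem _ (Set.mem_insert_of_mem _ (Set.mem_insert_of_mem _ (Set.mem_insert_of_mem _ (Set.mem_insert_of_mem _ (Set.mem_insert _ _)))))))))))
          · exact Set.mem_of_eq_of_mem
              (show v = (-y + x : V) by rw [hveq2, hy]; push_cast; module) (by exact Set.mem_insert_of_mem _ (Set.mem_insert_of_mem _ (Set.mem_insert_of_mem _ (Set.mem_insert_of_mem _ (Set.mem_insert_of_mem _ (Set.mem_insert_of_mem _ (Set.mem_insert_of_mem _ (Set.mem_insert_of_mem _ (Set.mem_insert_of_mem _ (Set.mem_insert_of_mem _ (Set.mem_insert_of_mem _ (Set.mem_insert_of_mem _ (Set.mem_insert_of_mem _ (Set.mem_insert_of_mem _ (Set.mem_insert_of_mem _ (Set.mem_insert _ _))))))))))))))))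
          · exact Set.mem_of_eq_of_mem
              (show v = (-y + (2 : ℝ) • x : V) by rw [hveq2, hy]; push_cast; module) (by exact Set.mem_insert_of_mem _ (Set.mem_insert_of_mem _ (Set.mem_insert_of_mem _ (Set.mem_insert_of_mem _ (Set.mem_insert_of_mem _ (Set.mem_insert_of_mem _ (Set.mem_insert_of_mem _ (Set.mem_insert_of_mem _ (Set.mem_insert_of_mem _ (Set.mem_insert_of_mem _ (Set.mem_insert_of_mem _ (Set.mem_insert_of_mem _ (Set.mem_insert_of_mem _ (Set.mem_insert_of_mem _ (Set.mem_insert_of_mem _ (Set.mem_insert_of_mem _ (Set.mem_insert_of_mem _ (Set.mem_insert_of_mem _ (Set.mem_insert_of_mem _ (Set.mem_insert _ _))))))))))))))))))))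
          · exact Set.mem_of_eq_of_mem
              (show v = (-y + (3 : ℝ) • x : V) by rw [hveq2, hy]; push_cast; module) (by exact Set.mem_insert_of_mem _ (Set.mem_insert_of_mem _ (Set.mem_insert_of_mem _ (Set.mem_insert_of_mem _ (Set.mem_insert_of_mem _ (Set.mem_insert_of_mem _ (Set.mem_insert_of_mem _ (Set.mem_insert_of_mem _ (Set.mem_insert_of_mem _ (Set.mem_insert_of_mem _ (Set.mem_insert_of_mem _ (Set.mem_insert_of_mem _ (Set.mem_insert_of_mem _ (Set.mem_insert_of_mem _ (Set.mem_insert_of_mem _ (Set.mem_insert_of_mem _ (Set.mem_insert_of_mem _ (Set.mem_insert_of_mem _ (Set.mem_insert_of_mem _ (Set.mem_insert_of_mem _ (Set.mem_insert_of_mem _ (Set.mem_insert_of_mem _ (Set.mem_insert_of_mem _ (Set.mem_insert _ _))))))))))))))))))))))))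
      · -- level ±2c
        rcases hμ with hμ | hμ
        · have hveq2 : v = (0:ℝ) • x + (2*c) • q := by
            have h := hdecomp v
            rw [ht0, hμ] at h
            exact h
          exact Set.mem_of_eq_of_mem
            (show v = ((2 : ℝ) • y : V) by rw [hveq2, hy]; module) (by exact Set.mem_insert_of_mem _ (Set.mem_insert_of_mem _ (Set.mem_insert_of_mem _ (Set.mem_insert_of_mem _ (Set.mem_insert_of_mem _ (Set.mem_insert_of_mem _ (Set.mem_insert_of_mem _ (Set.mem_insert_of_mem _ (Set.mem_insert_of_mem _ (Set.mem_insert_of_mem _ (Set.mem_insert_of_mem _ (Set.mem_insert _ _))))))))))))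
        · have hveq2 : v = (0:ℝ) • x + (-(2*c)) • q := by
            have h := hdecomp v
            rw [ht0, hμ] at h
            exact h
          exact Set.mem_of_eq_of_mem
            (show v = (-((2 : ℝ) • y) : V) by rw [hveq2, hy]; module) (by exact Set.mem_insert_of_mem _ (Set.mem_insert_of_mem _ (Set.mem_insert_of_mem _ (Set.mem_insert_of_mem _ (Set.mem_insert_of_mem _ (Set.mem_insert_of_mem _ (Set.mem_insert_of_mem _ (Set.mem_insert_of_mem _ (Set.mem_insert_of_mem _ (Set.mem_insert_of_mem _ (Set.mem_insert_of_mem _ (Set.mem_insert_of_mem _ (Set.mem_insert _ _)))))))))))))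
    · intro hv
      simp only [Set.mem_insert_iff, Set.mem_singleton_iff] at hv
      rcases hv with hveq|hveq|hveq|hveq|hveq|hveq|hveq|hveq|hveq|hveq|hveq|hveq|hveq|hveq|hveq|hveq|hveq|hveq|hveq|hveq|hveq|hveq|hveq|hveq|hveq
      · exact Set.mem_of_eq_of_mem
          (hveq.trans (show (0 : V) = ((0 : ℝ)) • x + ((0 : ℝ)) • q by
            first | module | (rw [hy]; module)))
          ((hchar (0 : ℝ) ((0 : ℝ))).2 (Or.inl ⟨rfl, ⟨0, by norm_num⟩, by norm_num⟩))
      · exact Set.mem_of_eq_of_mem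
          (hveq.trans (show (x : V) = ((1 : ℝ)) • x + ((0 : ℝ)) • q by
            first | module | (rw [hy]; module)))
          ((hchar (1 : ℝ) ((0 : ℝ))).2 (Or.inl ⟨rfl, ⟨1, by norm_num⟩, by norm_num⟩))
      · exact Set.mem_of_eq_of_mem
          (hveq.trans (show (-x : V) = ((-1 : ℝ)) • x + ((0 : ℝ)) • q by
            first | module | (rw [hy]; module)))
          ((hchar (-1 : ℝ) ((0 : ℝ))).2 (Or.inl ⟨rfl, ⟨-1, by norm_num⟩, by norm_num⟩))
      · exact Set.mem_of_eq_of_mem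
          (hveq.trans (show ((2 : ℝ) • x : V) = ((2 : ℝ)) • x + ((0 : ℝ)) • q by
            first | module | (rw [hy]; module)))
          ((hchar (2 : ℝ) ((0 : ℝ))).2 (Or.inl ⟨rfl, ⟨2, by norm_num⟩, by norm_num⟩))
      · exact Set.mem_of_eq_of_mem
          (hveq.trans (show (-((2 : ℝ) • x) : V) = ((-2 : ℝ)) • x + ((0 : ℝ)) • q by
            first | module | (rw [hy]; module)))
          ((hchar (-2 : ℝ) ((0 : ℝ))).2 (Or.inl ⟨rfl, ⟨-2, by norm_num⟩, by norm_num⟩))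
      · exact Set.mem_of_eq_of_mem
          (hveq.trans (show ((3 : ℝ) • x : V) = ((3 : ℝ)) • x + ((0 : ℝ)) • q by
            first | module | (rw [hy]; module)))
          ((hchar (3 : ℝ) ((0 : ℝ))).2 (Or.inl ⟨rfl, ⟨3, by norm_num⟩, by norm_num⟩))
      · exact Set.mem_of_eq_of_mem
          (hveq.trans (show (-((3 : ℝ) • x) : V) = ((-3 : ℝ)) • x + ((0 : ℝ)) • q by
            first | module | (rw [hy]; module)))
          ((hchar (-3 : ℝ) ((0 : ℝ))).2 (Or.inl ⟨rfl, ⟨-3, by norm_num⟩, by norm_num⟩))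
      · exact Set.mem_of_eq_of_mem
          (hveq.trans (show ((4 : ℝ) • x : V) = ((4 : ℝ)) • x + ((0 : ℝ)) • q by
            first | module | (rw [hy]; module)))
          ((hchar (4 : ℝ) ((0 : ℝ))).2 (Or.inl ⟨rfl, ⟨4, by norm_num⟩, by norm_num⟩))
      · exact Set.mem_of_eq_of_mem
          (hveq.trans (show (-((4 : ℝ) • x) : V) = ((-4 : ℝ)) • x + ((0 : ℝ)) • q by
            first | module | (rw [hy]; module)))
          ((hchar (-4 : ℝ) ((0 : ℝ))).2 (Or.inl ⟨rfl, ⟨-4, by norm_num⟩, by norm_num⟩))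
      · exact Set.mem_of_eq_of_mem
          (hveq.trans (show (y : V) = ((0 : ℝ)) • x + ((c : ℝ)) • q by
            first | module | (rw [hy]; module)))
          ((hchar (0 : ℝ) ((c : ℝ))).2 (Or.inr (Or.inl ⟨Or.inl rfl, ⟨0, by norm_num⟩, by norm_num⟩)))
      · exact Set.mem_of_eq_of_mem
          (hveq.trans (show (-y : V) = ((0 : ℝ)) • x + ((-c : ℝ)) • q by
            first | module | (rw [hy]; module)))
          ((hchar (0 : ℝ) ((-c : ℝ))).2 (Or.inr (Or.inl ⟨Or.inr rfl, ⟨0, by norm_num⟩, by norm_num⟩)))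
      · exact Set.mem_of_eq_of_mem
          (hveq.trans (show ((2 : ℝ) • y : V) = ((0 : ℝ)) • x + ((2*c : ℝ)) • q by
            first | module | (rw [hy]; module)))
          ((hchar (0 : ℝ) ((2*c : ℝ))).2 (Or.inr (Or.inr ⟨Or.inl rfl, rfl⟩)))
      · exact Set.mem_of_eq_of_mem
          (hveq.trans (show (-((2 : ℝ) • y) : V) = ((0 : ℝ)) • x + ((-(2*c) : ℝ)) • q by
            first | module | (rw [hy]; module)))
          ((hchar (0 : ℝ) ((-(2*c) : ℝ))).2 (Or.inr (Or.inr ⟨Or.inr rfl, rfl⟩)))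
      · exact Set.mem_of_eq_of_mem
          (hveq.trans (show (y + x : V) = ((1 : ℝ)) • x + ((c : ℝ)) • q by
            first | module | (rw [hy]; module)))
          ((hchar (1 : ℝ) ((c : ℝ))).2 (Or.inr (Or.inl ⟨Or.inl rfl, ⟨1, by norm_num⟩, by norm_num⟩)))
      · exact Set.mem_of_eq_of_mem
          (hveq.trans (show (y - x : V) = ((-1 : ℝ)) • x + ((c : ℝ)) • q by
            first | module | (rw [hy]; module)))
          ((hchar (-1 : ℝ) ((c : ℝ))).2 (Or.inr (Or.inl ⟨Or.inl rfl, ⟨-1, by norm_num⟩, by norm_num⟩)))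
      · exact Set.mem_of_eq_of_mem
          (hveq.trans (show (-y + x : V) = ((1 : ℝ)) • x + ((-c : ℝ)) • q by
            first | module | (rw [hy]; module)))
          ((hchar (1 : ℝ) ((-c : ℝ))).2 (Or.inr (Or.inl ⟨Or.inr rfl, ⟨1, by norm_num⟩, by norm_num⟩)))
      · exact Set.mem_of_eq_of_mem
          (hveq.trans (show (-y - x : V) = ((-1 : ℝ)) • x + ((-c : ℝ)) • q by
            first | module | (rw [hy]; module)))
          ((hchar (-1 : ℝ) ((-c : ℝ))).2 (Or.inr (Or.inl ⟨Or.inr rfl, ⟨-1, by norm_num⟩, by norm_num⟩)))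
      · exact Set.mem_of_eq_of_mem
          (hveq.trans (show (y + (2 : ℝ) • x : V) = ((2 : ℝ)) • x + ((c : ℝ)) • q by
            first | module | (rw [hy]; module)))
          ((hchar (2 : ℝ) ((c : ℝ))).2 (Or.inr (Or.inl ⟨Or.inl rfl, ⟨2, by norm_num⟩, by norm_num⟩)))
      · exact Set.mem_of_eq_of_mem
          (hveq.trans (show (y - (2 : ℝ) • x : V) = ((-2 : ℝ)) • x + ((c : ℝ)) • q by
            first | module | (rw [hy]; module)))
          ((hchar (-2 : ℝ) ((c : ℝ))).2 (Or.inr (Or.inl ⟨Or.inl rfl, ⟨-2, by norm_num⟩, by norm_num⟩)))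
      · exact Set.mem_of_eq_of_mem
          (hveq.trans (show (-y + (2 : ℝ) • x : V) = ((2 : ℝ)) • x + ((-c : ℝ)) • q by
            first | module | (rw [hy]; module)))
          ((hchar (2 : ℝ) ((-c : ℝ))).2 (Or.inr (Or.inl ⟨Or.inr rfl, ⟨2, by norm_num⟩, by norm_num⟩)))
      · exact Set.mem_of_eq_of_mem
          (hveq.trans (show (-y - (2 : ℝ) • x : V) = ((-2 : ℝ)) • x + ((-c : ℝ)) • q by
            first | module | (rw [hy]; module)))
          ((hchar (-2 : ℝ) ((-c : ℝ))).2 (Or.inr (Or.inl ⟨Or.inr rfl, ⟨-2, by norm_num⟩, by norm_num⟩)))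
      · exact Set.mem_of_eq_of_mem
          (hveq.trans (show (y + (3 : ℝ) • x : V) = ((3 : ℝ)) • x + ((c : ℝ)) • q by
            first | module | (rw [hy]; module)))
          ((hchar (3 : ℝ) ((c : ℝ))).2 (Or.inr (Or.inl ⟨Or.inl rfl, ⟨3, by norm_num⟩, by norm_num⟩)))
      · exact Set.mem_of_eq_of_mem
          (hveq.trans (show (y - (3 : ℝ) • x : V) = ((-3 : ℝ)) • x + ((c : ℝ)) • q by
            first | module | (rw [hy]; module)))
          ((hchar (-3 : ℝ) ((c : ℝ))).2 (Or.inr (Or.inl ⟨Or.inl rfl, ⟨-3, by norm_num⟩, by norm_num⟩)))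
      · exact Set.mem_of_eq_of_mem
          (hveq.trans (show (-y + (3 : ℝ) • x : V) = ((3 : ℝ)) • x + ((-c : ℝ)) • q by
            first | module | (rw [hy]; module)))
          ((hchar (3 : ℝ) ((-c : ℝ))).2 (Or.inr (Or.inl ⟨Or.inr rfl, ⟨3, by norm_num⟩, by norm_num⟩)))
      · exact Set.mem_of_eq_of_mem
          (hveq.trans (show (-y - (3 : ℝ) • x : V) = ((-3 : ℝ)) • x + ((-c : ℝ)) • q by
            first | module | (rw [hy]; module)))
          ((hchar (-3 : ℝ) ((-c : ℝ))).2 (Or.inr (Or.inl ⟨Or.inr rfl, ⟨-3, by norm_num⟩, by norm_num⟩)))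
end
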